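/- arXiv:2005.01088 — 11 statements merged into one kernel-verified Lean document; each statement's English description precedes it below -/
import Mathlib

section
/- Let C be a convex subset of a real Banach space E, let F be an order complete Banach space, and let Φ : C → F be a continuous convex function. Then at every interior point x₀ of C the subdifferential ∂_{x₀}Φ is nonempty: there exists a continuous linear operator T : E → F such that Φ(x) ≥ Φ(x₀) + T(x - x₀) for all x ∈ C. Moreover, ∂_{x₀}Φ is a convex set. -/
open Set LinearMap Submodule

section HB
variable {E F : Type*} [AddCommGroup E] [Module ℝ E]
    [AddCommGroup F] [Module ℝ F] [PartialOrder F]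
    [CovariantClass F F (· + ·) (· ≤ ·)]

theorem my_smul_le_smul
    (hsmul : ∀ (c : ℝ) (x : F), 0 ≤ c → 0 ≤ x → 0 ≤ c • x)
    {c : ℝ} (hc : 0 ≤ c) {x y : F} (h : x ≤ y) : c • x ≤ c • y := by
  have h0 : (0:F) ≤ c • (y - x) := hsmul c (y - x) hc (sub_nonneg.2 h)
  rw [smul_sub] at h0
  exact sub_nonneg.1 h0

theorem my_neg_le_neg {x y : F} (h : x ≤ y) : -y ≤ -x := by
  have h1 := add_le_add_right (add_le_add_left h (-y)) (-x)
  simpa using h1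

theorem my_neg_le {x y : F} (h : -x ≤ y) : -y ≤ x := by
  have h2 := my_neg_le_neg h
  rwa [neg_neg] at h2

theorem my_le_neg {x y : F} (h : x ≤ -y) : y ≤ -x := by
  have h2 := my_neg_le_neg h
  rwa [neg_neg] at h2

/-- One-step extension for vector-valued Hahn–Banach. -/
theorem my_hb_step
    (hsmul : ∀ (c : ℝ) (x : F), 0 ≤ c → 0 ≤ x → 0 ≤ c • x)
    (hcomp : ∀ S : Set F, S.Nonempty → BddAbove S → ∃ b, IsLUB S b)
    (p : E → F)
    (hpadd : ∀ v w, p (v + w) ≤ p v + p w)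
    (hpsmul : ∀ (c : ℝ), 0 < c → ∀ v, p (c • v) = c • p v)
    (f : E →ₗ.[ℝ] F) (hf : ∀ x : f.domain, f x ≤ p x) (hdom : f.domain ≠ ⊤) :
    ∃ g, f < g ∧ ∀ x : g.domain, g x ≤ p x := by
  obtain ⟨y, -, hy⟩ : ∃ y ∈ ⊤, y ∉ f.domain := SetLike.exists_of_lt (lt_top_iff_ne_top.2 hdom)
  obtain ⟨b, hub, hlub⟩ : ∃ b, IsLUB (Set.range fun x : f.domain => f x - p ((x : E) - y)) b := by
    apply hcomp
    · exact ⟨_, Set.mem_range_self (0 : f.domain)⟩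
    · refine ⟨p y, ?_⟩
      rintro z ⟨x, rfl⟩
      have h2 : p (x : E) ≤ p ((x : E) - y) + p y := by
        have := hpadd ((x : E) - y) y
        rwa [sub_add_cancel] at this
      have := (hf x).trans h2
      rwa [← sub_le_iff_le_add'] at this
  have hA : ∀ x : f.domain, f x - p ((x : E) - y) ≤ b := fun x => hub (Set.mem_range_self x)
  have hB : ∀ x : f.domain, b ≤ p ((x : E) + y) - f x := by
    intro x
    apply hlub
    rintro z ⟨x', rfl⟩
    -- f x' - p (x' - y) ≤ p (x + y) - f x
    rw [sub_le_sub_iff]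
    have h1 : f x' + f x = f (x' + x) := (f.map_add x' x).symm
    have h2 : f (x' + x) ≤ p ((x' : E) + x) := hf (x' + x)
    have h3 : p ((x' : E) + (x : E)) ≤ p ((x : E) + y) + p ((x' : E) - y) := by
      have := hpadd ((x : E) + y) ((x' : E) - y)
      have he : (x : E) + y + ((x' : E) - y) = (x' : E) + (x : E) := by abel
      rw [he] at this
      exact this
    calc f x' + f x = f (x' + x) := h1
      _ ≤ p ((x' : E) + (x : E)) := h2
      _ ≤ p ((x : E) + y) + p ((x' : E) - y) := h3
  refine ⟨f.supSpanSingleton y b hy, ?_, ?_⟩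
  · refine lt_iff_le_not_ge.2 ⟨f.left_le_sup _ _, fun H => ?_⟩
    replace H := LinearPMap.domain_mono.monotone H
    rw [LinearPMap.domain_supSpanSingleton, sup_le_iff, span_le, singleton_subset_iff] at H
    exact hy H.2
  · rintro ⟨z, hz⟩
    rcases mem_sup.1 hz with ⟨x, hx, y', hy', rfl⟩
    rcases mem_span_singleton.1 hy' with ⟨r, rfl⟩
    rw [LinearPMap.supSpanSingleton_apply_mk _ _ _ _ _ hx]
    rcases lt_trichotomy r 0 with hr | hr | hr
    · -- r < 0 : need f x + r • b ≤ p (x + r • y)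
      set s := -r with hs
      have hspos : 0 < s := by simp [hs]; linarith
      have hA' := hA (s⁻¹ • ⟨x, hx⟩)
      -- f (s⁻¹ • x) - p (s⁻¹ • x - y) ≤ b
      have := my_smul_le_smul hsmul hspos.le hA'
      rw [smul_sub, LinearPMap.map_smul] at this
      have hcoe : ((s⁻¹ • (⟨x, hx⟩ : f.domain) : f.domain) : E) = s⁻¹ • x := rfl
      rw [hcoe] at this
      rw [smul_smul, mul_inv_cancel₀ hspos.ne', one_smul] at this
      have hps : s • p (s⁻¹ • x - y) = p (x - s • y) := by
        rw [← hpsmul s hspos]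
        congr 1
        rw [smul_sub, smul_smul, mul_inv_cancel₀ hspos.ne', one_smul]
      rw [hps] at this
      -- this : f ⟨x,hx⟩ - p (x - s•y) ≤ s • b
      have : f ⟨x, hx⟩ + r • b ≤ p (x - s • y) := by
        have h' := sub_le_iff_le_add.1 this
        -- f ⟨x,hx⟩ ≤ s • b + p (x - s•y)
        have : f ⟨x, hx⟩ + r • b ≤ s • b + p (x - s • y) + r • b := add_le_add_left h' _
        rw [hs, neg_smul] at this
        have he2 : -(r • b) + p (x - s • y) + r • b = p (x - s • y) := by abel
        rwa [he2] at this
      have he : x + r • y = x - s • y := by rw [hs, neg_smul, sub_neg_eq_add]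
      rw [← he] at this
      exact this
    · subst hr
      simp only [zero_smul, add_zero, RingHom.id_apply]
      exact hf ⟨x, hx⟩
    · -- r > 0
      have hB' := hB (r⁻¹ • ⟨x, hx⟩)
      have := my_smul_le_smul hsmul hr.le hB'
      rw [smul_sub, LinearPMap.map_smul] at this
      have hcoe : ((r⁻¹ • (⟨x, hx⟩ : f.domain) : f.domain) : E) = r⁻¹ • x := rfl
      rw [hcoe] at this
      rw [smul_smul, mul_inv_cancel₀ hr.ne', one_smul] at this
      have hps : r • p (r⁻¹ • x + y) = p (x + r • y) := by
        rw [← hpsmul r hr]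
        congr 1
        rw [smul_add, smul_smul, mul_inv_cancel₀ hr.ne', one_smul]
      rw [hps] at this
      -- this : r • b ≤ p (x + r•y) - f ⟨x,hx⟩
      have h' := le_sub_iff_add_le.1 this
      -- r • b + f ⟨x,hx⟩ ≤ p (x + r•y)
      rwa [add_comm] at h'


/-- Vector-valued Hahn–Banach: a linear map dominated by a sublinear map exists. -/
theorem my_hb
    (hsmul : ∀ (c : ℝ) (x : F), 0 ≤ c → 0 ≤ x → 0 ≤ c • x)
    (hcomp : ∀ S : Set F, S.Nonempty → BddAbove S → ∃ b, IsLUB S b)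
    (p : E → F) (hp0 : p 0 = 0)
    (hpadd : ∀ v w, p (v + w) ≤ p v + p w)
    (hpsmul : ∀ (c : ℝ), 0 < c → ∀ v, p (c • v) = c • p v) :
    ∃ T : E →ₗ[ℝ] F, ∀ v, T v ≤ p v := by
  set S := { f : E →ₗ.[ℝ] F | ∀ x : f.domain, f x ≤ p x } with hS
  have hSc : ∀ c, c ⊆ S → IsChain (· ≤ ·) c → ∀ y ∈ c, ∃ ub ∈ S, ∀ z ∈ c, z ≤ ub := by
    intro c hcs c_chain y hy
    have cne : c.Nonempty := ⟨y, hy⟩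
    have hcd : DirectedOn (· ≤ ·) c := c_chain.directedOn
    refine ⟨LinearPMap.sSup c hcd, ?_, fun _ ↦ LinearPMap.le_sSup hcd⟩
    rintro ⟨x, hx⟩
    have hdir : DirectedOn (· ≤ ·) (LinearPMap.domain '' c) :=
      directedOn_image.2 (hcd.mono LinearPMap.domain_mono.monotone)
    rcases (Submodule.mem_sSup_of_directed (cne.image _) hdir).1 hx with ⟨_, ⟨f, hfc, rfl⟩, hfx⟩
    have hle : f ≤ LinearPMap.sSup c hcd := LinearPMap.le_sSup _ hfc
    have heq : f ⟨x, hfx⟩ = LinearPMap.sSup c hcd ⟨x, hx⟩ := hle.2 rfl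
    rw [← heq]
    exact hcs hfc ⟨x, hfx⟩
  have hf₀ : ((0 : E →ₗ[ℝ] F).toPMap ⊥) ∈ S := by
    rintro ⟨x, hx⟩
    have hx0 : (x : E) = 0 := by simpa using hx
    have : ((0 : E →ₗ[ℝ] F).toPMap ⊥) ⟨x, hx⟩ = 0 := rfl
    rw [this]
    show (0:F) ≤ p x
    rw [hx0, hp0]
  obtain ⟨q, hpq, hqs, hq⟩ := zorn_le_nonempty₀ S hSc _ hf₀
  have hqtop : q.domain = ⊤ := by
    by_contra hqd
    rcases my_hb_step hsmul hcomp p hpadd hpsmul q hqs hqd with ⟨r, hqr, hr⟩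
    exact hqr.ne' ((hq hr hqr.le).antisymm hqr.le)
  refine ⟨q.toFun.comp ((LinearMap.id : E →ₗ[ℝ] E).codRestrict q.domain fun x => hqtop ▸ trivial), fun v => ?_⟩
  exact hqs ⟨v, _⟩

end HB
set_option maxHeartbeats 1000000 in
/-- (Valadier–Zowe) Let `C` be a convex subset of a real Banach space `E`,
`F` an order complete Banach space and `Φ : C → F` a continuous convex function. Then at
every interior point `x₀` of `C` the subdifferential `∂_{x₀}Φ` is a nonempty convex set. -/
theorem subdifferential_nonempty_convex_at_interior_point
    {E F : Type*}
    [NormedAddCommGroup E] [NormedSpace ℝ E] [CompleteSpace E]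
    [NormedAddCommGroup F] [NormedSpace ℝ F] [CompleteSpace F]
    [PartialOrder F] [CovariantClass F F (· + ·) (· ≤ ·)]
    (hsmulF : ∀ (c : ℝ) (x : F), 0 ≤ c → 0 ≤ x → 0 ≤ c • x)
    (hclosedF : IsClosed {x : F | 0 ≤ x})
    (hgenF : ∀ x : F, ∃ u v : F, 0 ≤ u ∧ 0 ≤ v ∧ x = u - v)
    (hmonoF : ∀ x y : F, 0 ≤ x → x ≤ y → ‖x‖ ≤ ‖y‖)
    (hcompF : ∀ S : Set F, S.Nonempty → BddAbove S → ∃ b, IsLUB S b)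
    {C : Set E} (hC : Convex ℝ C) (Φ : E → F)
    (hconv : ∀ x ∈ C, ∀ y ∈ C, ∀ t : ℝ, 0 ≤ t → t ≤ 1 →
      Φ ((1 - t) • x + t • y) ≤ (1 - t) • Φ x + t • Φ y)
    (hcont : ContinuousOn Φ C)
    {x₀ : E} (hx₀ : x₀ ∈ interior C) :
    ({T : E →L[ℝ] F | ∀ x ∈ C, Φ x₀ + T (x - x₀) ≤ Φ x}).Nonempty ∧
      Convex ℝ {T : E →L[ℝ] F | ∀ x ∈ C, Φ x₀ + T (x - x₀) ≤ Φ x} := by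
  classical
  have hx₀C : x₀ ∈ C := interior_subset hx₀
  -- Convexity of the subdifferential
  have hconvset : Convex ℝ {T : E →L[ℝ] F | ∀ x ∈ C, Φ x₀ + T (x - x₀) ≤ Φ x} := by
    intro T₁ h₁ T₂ h₂ a b ha hb hab
    intro x hx
    have k1 : T₁ (x - x₀) ≤ Φ x - Φ x₀ := le_sub_iff_add_le'.2 (h₁ x hx)
    have k2 : T₂ (x - x₀) ≤ Φ x - Φ x₀ := le_sub_iff_add_le'.2 (h₂ x hx)
    have k := add_le_add (my_smul_le_smul hsmulF ha k1) (my_smul_le_smul hsmulF hb k2)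
    have e2 : a • (Φ x - Φ x₀) + b • (Φ x - Φ x₀) = Φ x - Φ x₀ := by
      rw [← add_smul, hab, one_smul]
    rw [e2] at k
    have e : (a • T₁ + b • T₂) (x - x₀) = a • T₁ (x - x₀) + b • T₂ (x - x₀) := by
      simp
    show Φ x₀ + (a • T₁ + b • T₂) (x - x₀) ≤ Φ x
    rw [e]
    have h3 := add_le_add_right k (Φ x₀)
    have e3 : Φ x₀ + (Φ x - Φ x₀) = Φ x := by abel
    rwa [e3] at h3
  refine ⟨?_, hconvset⟩
  -- Setup: radius δ for interiority, δ₁ for continuity, δ₂ for both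
  have hnhds : C ∈ nhds x₀ := mem_interior_iff_mem_nhds.1 hx₀
  obtain ⟨δ, hδpos, hball⟩ := Metric.mem_nhds_iff.1 hnhds
  have hballC : ∀ w : E, ‖w‖ < δ → x₀ + w ∈ C := by
    intro w hw
    apply hball
    rw [Metric.mem_ball, dist_eq_norm]
    simpa using hw
  have hcA : ContinuousAt Φ x₀ := hcont.continuousAt hnhds
  obtain ⟨δ₁, hδ₁pos, hδ₁⟩ := Metric.continuousAt_iff.1 hcA 1 one_pos
  set δ₂ : ℝ := min δ δ₁ / 2 with hδ₂def
  have hminpos : 0 < min δ δ₁ := lt_min hδpos hδ₁pos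
  have hδ₂pos : 0 < δ₂ := half_pos hminpos
  have hδ₂δ : δ₂ < δ := by
    have h1 : min δ δ₁ ≤ δ := min_le_left _ _
    rw [hδ₂def]; linarith
  have hδ₂δ₁ : δ₂ < δ₁ := by
    have h1 : min δ δ₁ ≤ δ₁ := min_le_right _ _
    rw [hδ₂def]; linarith
  have hmem : ∀ w : E, ‖w‖ ≤ δ₂ → x₀ + w ∈ C := fun w hw => hballC w (lt_of_le_of_lt hw hδ₂δ)
  have hΦbd : ∀ w : E, ‖w‖ ≤ δ₂ → ‖Φ (x₀ + w) - Φ x₀‖ ≤ 1 := by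
    intro w hw
    have hd : dist (x₀ + w) x₀ < δ₁ := by
      rw [dist_eq_norm]
      simpa using lt_of_le_of_lt hw hδ₂δ₁
    have := hδ₁ hd
    rw [dist_eq_norm] at this
    exact this.le
  -- the difference-quotient map
  set D : E → ℝ → F := fun v t => t⁻¹ • (Φ (x₀ + t • v) - Φ x₀) with hD
  -- segment membership
  have hseg : ∀ (v : E) (t t' : ℝ), 0 < t → t ≤ t' → x₀ + t' • v ∈ C → x₀ + t • v ∈ C := by
    intro v t t' ht htt' hm'
    have ht' : 0 < t' := ht.trans_le htt'
    have h1 : (0:ℝ) ≤ 1 - t / t' := by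
      rw [sub_nonneg]
      exact div_le_one_of_le₀ htt' ht'.le
    have h2 : (0:ℝ) ≤ t / t' := by positivity
    have hsum : (1 - t / t') + t / t' = 1 := by ring
    have hin := hC hx₀C hm' h1 h2 hsum
    have hpt : (1 - t / t') • x₀ + (t / t') • (x₀ + t' • v) = x₀ + t • v := by
      match_scalars <;> field_simp <;> ring
    rwa [hpt] at hin
  -- monotonicity of difference quotients
  have hmono : ∀ (v : E) (t t' : ℝ), 0 < t → t ≤ t' → x₀ + t' • v ∈ C → D v t ≤ D v t' := by
    intro v t t' ht htt' hm'
    have ht' : 0 < t' := ht.trans_le htt'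
    have hl0 : (0:ℝ) ≤ t / t' := by positivity
    have hl1 : t / t' ≤ 1 := div_le_one_of_le₀ htt' ht'.le
    have h := hconv x₀ hx₀C (x₀ + t' • v) hm' (t / t') hl0 hl1
    have hpt : (1 - t / t') • x₀ + (t / t') • (x₀ + t' • v) = x₀ + t • v := by
      match_scalars <;> field_simp <;> ring
    rw [hpt] at h
    have h2 : Φ (x₀ + t • v) - Φ x₀ ≤ (t / t') • (Φ (x₀ + t' • v) - Φ x₀) := by
      have e : (1 - t / t') • Φ x₀ + (t / t') • Φ (x₀ + t' • v) - Φ x₀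
          = (t / t') • (Φ (x₀ + t' • v) - Φ x₀) := by module
      have h' := sub_le_sub_right h (Φ x₀)
      rwa [e] at h'
    have h3 := my_smul_le_smul hsmulF (inv_nonneg.2 ht.le) h2
    rw [smul_smul] at h3
    have he : t⁻¹ * (t / t') = t'⁻¹ := by field_simp
    rw [he] at h3
    exact h3
  -- lower bound for difference quotients
  have hlow : ∀ (v : E) (s t : ℝ), 0 < s → 0 < t → x₀ + s • (-v) ∈ C → x₀ + t • v ∈ C →
      -D (-v) s ≤ D v t := by
    intro v s t hs ht hms hmt
    have hst : (0:ℝ) < s + t := by linarith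
    have hl0 : (0:ℝ) ≤ s / (s + t) := by positivity
    have hl1 : s / (s + t) ≤ 1 := by
      rw [div_le_one hst]; linarith
    have h := hconv (x₀ + s • (-v)) hms (x₀ + t • v) hmt (s / (s + t)) hl0 hl1
    have hpt : (1 - s / (s + t)) • (x₀ + s • (-v)) + (s / (s + t)) • (x₀ + t • v) = x₀ := by
      match_scalars <;> field_simp <;> ring
    rw [hpt] at h
    have h2 : (0:F) ≤ (1 - s / (s + t)) • (Φ (x₀ + s • (-v)) - Φ x₀)
        + (s / (s + t)) • (Φ (x₀ + t • v) - Φ x₀) := by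
      have e : (1 - s / (s + t)) • (Φ (x₀ + s • (-v)) - Φ x₀)
          + (s / (s + t)) • (Φ (x₀ + t • v) - Φ x₀)
          = (1 - s / (s + t)) • Φ (x₀ + s • (-v)) + (s / (s + t)) • Φ (x₀ + t • v) - Φ x₀ := by
        module
      rw [e, sub_nonneg]
      exact h
    have hcpos : (0:ℝ) ≤ (s + t) / (s * t) := by positivity
    have h3 := hsmulF _ _ hcpos h2
    rw [smul_add, smul_smul, smul_smul] at h3
    have e1 : (s + t) / (s * t) * (1 - s / (s + t)) = s⁻¹ := by field_simp; ring
    have e2 : (s + t) / (s * t) * (s / (s + t)) = t⁻¹ := by field_simp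
    rw [e1, e2] at h3
    show -(s⁻¹ • (Φ (x₀ + s • (-v)) - Φ x₀)) ≤ t⁻¹ • (Φ (x₀ + t • v) - Φ x₀)
    rw [← sub_nonneg, sub_neg_eq_add, add_comm]
    exact h3
  -- each direction admits a valid small parameter
  have hvalid : ∀ v : E, 0 < δ₂ / (‖v‖ + 1) ∧ x₀ + (δ₂ / (‖v‖ + 1)) • v ∈ C := by
    intro v
    have h1 : (0:ℝ) < ‖v‖ + 1 := by positivity
    have ht : 0 < δ₂ / (‖v‖ + 1) := by positivity
    refine ⟨ht, hmem _ ?_⟩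
    rw [norm_smul, Real.norm_eq_abs, abs_of_pos ht, div_mul_eq_mul_div, div_le_iff₀ h1]
    nlinarith [norm_nonneg v, hδ₂pos]
  -- greatest lower bounds of difference quotients exist
  have hglb : ∀ v : E, ∃ b, IsGLB {y : F | ∃ t : ℝ, 0 < t ∧ x₀ + t • v ∈ C ∧ y = D v t} b := by
    intro v
    set t₀ : ℝ := δ₂ / (‖v‖ + 1) with ht₀def
    obtain ⟨ht₀, hmt₀⟩ := hvalid v
    set s₀ : ℝ := δ₂ / (‖-v‖ + 1) with hs₀def
    obtain ⟨hs₀, hms₀⟩ := hvalid (-v)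
    obtain ⟨bn, hbn⟩ := hcompF
      (Neg.neg '' {y : F | ∃ t : ℝ, 0 < t ∧ x₀ + t • v ∈ C ∧ y = D v t})
      ⟨-(D v t₀), ⟨D v t₀, ⟨t₀, ht₀, hmt₀, rfl⟩, rfl⟩⟩
      ⟨D (-v) s₀, by
        rintro z ⟨y, ⟨t, ht, hmt, rfl⟩, rfl⟩
        exact my_neg_le (hlow v s₀ t hs₀ ht hms₀ hmt)⟩
    refine ⟨-bn, ?_, ?_⟩
    · rintro y ⟨t, ht, hmt, rfl⟩
      have h1 : -(D v t) ≤ bn := hbn.1 ⟨D v t, ⟨t, ht, hmt, rfl⟩, rfl⟩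
      exact my_neg_le h1
    · intro c hc
      have h1 : bn ≤ -c := by
        apply hbn.2
        rintro z ⟨y, hy, rfl⟩
        exact my_neg_le_neg (hc hy)
      exact my_le_neg h1
  choose p hp using hglb
  have hpe : ∀ (v : E) (t : ℝ), 0 < t → x₀ + t • v ∈ C → p v ≤ D v t :=
    fun v t ht hm => (hp v).1 ⟨t, ht, hm, rfl⟩
  have hpg : ∀ (v : E) (c : F), (∀ t : ℝ, 0 < t → x₀ + t • v ∈ C → c ≤ D v t) → c ≤ p v := by
    intro v c hcl
    apply (hp v).2
    rintro y ⟨t, ht, hm, rfl⟩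
    exact hcl t ht hm
  -- p 0 = 0
  have hp0 : p 0 = 0 := by
    obtain ⟨ht0, hm0⟩ := hvalid (0 : E)
    have hD0 : ∀ t : ℝ, D (0 : E) t = 0 := by
      intro t; simp [hD]
    refine le_antisymm ?_ (hpg 0 0 ?_)
    · have := hpe 0 _ ht0 hm0
      rwa [hD0] at this
    · intro t ht hm
      rw [hD0]
  -- subadditivity
  have hpadd : ∀ v w : E, p (v + w) ≤ p v + p w := by
    intro v w
    have key : ∀ t t' : ℝ, 0 < t → x₀ + t • v ∈ C → 0 < t' → x₀ + t' • w ∈ C →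
        p (v + w) ≤ D v t + D w t' := by
      intro t t' ht hmv ht' hmw
      set m : ℝ := min t t' / 2 with hm
      have hmpos : 0 < m := half_pos (lt_min ht ht')
      have h2mt : 2 * m ≤ t := by
        have := min_le_left t t'; rw [hm]; linarith
      have h2mt' : 2 * m ≤ t' := by
        have := min_le_right t t'; rw [hm]; linarith
      have hm2pos : (0:ℝ) < 2 * m := by linarith
      have hmv2 : x₀ + (2 * m) • v ∈ C := hseg v _ t hm2pos h2mt hmv
      have hmw2 : x₀ + (2 * m) • w ∈ C := hseg w _ t' hm2pos h2mt' hmw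
      have hpt : (1 - (1:ℝ)/2) • (x₀ + (2 * m) • v) + ((1:ℝ)/2) • (x₀ + (2 * m) • w)
          = x₀ + m • (v + w) := by
        match_scalars <;> ring
      have hmid : x₀ + m • (v + w) ∈ C := by
        have hin := hC hmv2 hmw2 (by norm_num : (0:ℝ) ≤ 1 - 1/2) (by norm_num : (0:ℝ) ≤ 1/2)
          (by norm_num)
        rwa [hpt] at hin
      have h1 : p (v + w) ≤ D (v + w) m := hpe _ m hmpos hmid
      have hcv := hconv (x₀ + (2 * m) • v) hmv2 (x₀ + (2 * m) • w) hmw2 ((1:ℝ)/2)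
        (by norm_num) (by norm_num)
      rw [hpt] at hcv
      have h2 : Φ (x₀ + m • (v + w)) - Φ x₀
          ≤ ((1:ℝ)/2) • (Φ (x₀ + (2 * m) • v) - Φ x₀)
            + ((1:ℝ)/2) • (Φ (x₀ + (2 * m) • w) - Φ x₀) := by
        have e : (1 - (1:ℝ)/2) • Φ (x₀ + (2 * m) • v) + ((1:ℝ)/2) • Φ (x₀ + (2 * m) • w) - Φ x₀
            = ((1:ℝ)/2) • (Φ (x₀ + (2 * m) • v) - Φ x₀)
              + ((1:ℝ)/2) • (Φ (x₀ + (2 * m) • w) - Φ x₀) := by module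
        have h' := sub_le_sub_right hcv (Φ x₀)
        rwa [e] at h'
      have h3 := my_smul_le_smul hsmulF (inv_nonneg.2 hmpos.le) h2
      have hmne : m ≠ 0 := hmpos.ne'
      have erhs : m⁻¹ • (((1:ℝ)/2) • (Φ (x₀ + (2 * m) • v) - Φ x₀)
            + ((1:ℝ)/2) • (Φ (x₀ + (2 * m) • w) - Φ x₀))
          = (2 * m)⁻¹ • (Φ (x₀ + (2 * m) • v) - Φ x₀)
            + (2 * m)⁻¹ • (Φ (x₀ + (2 * m) • w) - Φ x₀) := by
        match_scalars <;> field_simp <;> ring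
      rw [erhs] at h3
      have h4 : D v (2 * m) ≤ D v t := hmono v (2 * m) t hm2pos h2mt hmv
      have h5 : D w (2 * m) ≤ D w t' := hmono w (2 * m) t' hm2pos h2mt' hmw
      calc p (v + w) ≤ D (v + w) m := h1
        _ ≤ D v (2 * m) + D w (2 * m) := h3
        _ ≤ D v t + D w t' := add_le_add h4 h5
    have step1 : ∀ t : ℝ, 0 < t → x₀ + t • v ∈ C → p (v + w) - p w ≤ D v t := by
      intro t ht hmv
      rw [sub_le_comm]
      exact hpg w _ fun t' ht' hmw => sub_le_iff_le_add'.2 (key t t' ht hmv ht' hmw)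
    have h6 := hpg v _ step1
    exact sub_le_iff_le_add.1 h6
  -- positive homogeneity
  have hps1 : ∀ (c : ℝ), 0 < c → ∀ v : E, c • p v ≤ p (c • v) := by
    intro c hc v
    apply hpg
    intro t ht hm
    have htc : 0 < t * c := mul_pos ht hc
    have hm' : x₀ + (t * c) • v ∈ C := by
      rw [← smul_smul]
      exact hm
    have h1 := hpe v (t * c) htc hm'
    have h2 := my_smul_le_smul hsmulF hc.le h1
    have harg : x₀ + (t * c) • v = x₀ + t • (c • v) := by rw [← smul_smul]
    have hsc : c * (t * c)⁻¹ = t⁻¹ := by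
      rw [mul_inv, ← mul_assoc, mul_comm c t⁻¹, mul_assoc, mul_inv_cancel₀ hc.ne', mul_one]
    have e : c • D v (t * c) = D (c • v) t := by
      simp only [hD, harg, smul_smul, hsc]
    rwa [e] at h2
  have hpsmul : ∀ (c : ℝ), 0 < c → ∀ v : E, p (c • v) = c • p v := by
    intro c hc v
    refine le_antisymm ?_ (hps1 c hc v)
    have h := hps1 c⁻¹ (inv_pos.2 hc) (c • v)
    rw [smul_smul, inv_mul_cancel₀ hc.ne', one_smul] at h
    have h2 := my_smul_le_smul hsmulF hc.le h
    rwa [smul_smul, mul_inv_cancel₀ hc.ne', one_smul] at h2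
  -- Hahn–Banach
  obtain ⟨T₀, hT₀⟩ := my_hb hsmulF hcompF p hp0 hpadd hpsmul
  -- subgradient inequality
  have hsub : ∀ x ∈ C, T₀ (x - x₀) ≤ Φ x - Φ x₀ := by
    intro x hx
    have hmem1 : x₀ + (1:ℝ) • (x - x₀) ∈ C := by
      rw [one_smul]
      have : x₀ + (x - x₀) = x := by abel
      rwa [this]
    have h1 : p (x - x₀) ≤ D (x - x₀) 1 := hpe _ 1 one_pos hmem1
    have h2 : D (x - x₀) 1 = Φ x - Φ x₀ := by
      simp only [hD, inv_one, one_smul]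
      congr 2
      abel
    exact (hT₀ _).trans (h1.trans_eq h2)
  -- norm bound on T₀
  have hbound : ∀ v : E, ‖T₀ v‖ ≤ 3 / δ₂ * ‖v‖ := by
    intro v
    rcases eq_or_ne v 0 with rfl | hv
    · simp
    · have hnv : 0 < ‖v‖ := norm_pos_iff.2 hv
      set t : ℝ := δ₂ / ‖v‖ with htdef
      have ht : 0 < t := div_pos hδ₂pos hnv
      have hnorm : ‖t • v‖ = δ₂ := by
        rw [norm_smul, Real.norm_eq_abs, abs_of_pos ht, htdef, div_mul_cancel₀ _ hnv.ne']
      have hmv : x₀ + t • v ∈ C := hmem _ hnorm.le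
      have hmv' : x₀ + t • (-v) ∈ C := by
        apply hmem
        rw [smul_neg, norm_neg, hnorm]
      have hDval : ∀ w : E, ‖t • w‖ ≤ δ₂ → ‖D w t‖ ≤ ‖v‖ / δ₂ := by
        intro w hw
        have hb := hΦbd (t • w) hw
        have e : ‖D w t‖ = t⁻¹ * ‖Φ (x₀ + t • w) - Φ x₀‖ := by
          simp only [hD]
          rw [norm_smul, Real.norm_eq_abs, abs_of_pos (inv_pos.2 ht)]
        rw [e]
        have hti : t⁻¹ = ‖v‖ / δ₂ := by
          rw [htdef]; field_simp
        rw [hti]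
        calc ‖v‖ / δ₂ * ‖Φ (x₀ + t • w) - Φ x₀‖ ≤ ‖v‖ / δ₂ * 1 :=
              mul_le_mul_of_nonneg_left hb (by positivity)
          _ = ‖v‖ / δ₂ := mul_one _
      have hu1 : ‖D v t‖ ≤ ‖v‖ / δ₂ := hDval v hnorm.le
      have hu2 : ‖D (-v) t‖ ≤ ‖v‖ / δ₂ := hDval (-v) (by rw [smul_neg, norm_neg, hnorm])
      have hT1 : T₀ v ≤ D v t := (hT₀ v).trans (hpe v t ht hmv)
      have hT2 : -(T₀ v) ≤ D (-v) t := by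
        have := (hT₀ (-v)).trans (hpe (-v) t ht hmv')
        rwa [map_neg] at this
      have hpos : (0:F) ≤ D v t - T₀ v := sub_nonneg.2 hT1
      have hle : D v t - T₀ v ≤ D v t + D (-v) t := by
        rw [sub_eq_add_neg]
        exact add_le_add_right hT2 _
      have hn1 := hmonoF _ _ hpos hle
      have hn2 : ‖D v t + D (-v) t‖ ≤ 2 * (‖v‖ / δ₂) := by
        calc ‖D v t + D (-v) t‖ ≤ ‖D v t‖ + ‖D (-v) t‖ := norm_add_le _ _
          _ ≤ ‖v‖ / δ₂ + ‖v‖ / δ₂ := add_le_add hu1 hu2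
          _ = 2 * (‖v‖ / δ₂) := by ring
      have hsplit : ‖T₀ v‖ ≤ ‖D v t‖ + ‖D v t - T₀ v‖ := by
        have e : D v t - (D v t - T₀ v) = T₀ v := by abel
        calc ‖T₀ v‖ = ‖D v t - (D v t - T₀ v)‖ := by rw [e]
          _ ≤ ‖D v t‖ + ‖D v t - T₀ v‖ := norm_sub_le _ _
      calc ‖T₀ v‖ ≤ ‖D v t‖ + ‖D v t - T₀ v‖ := hsplit
        _ ≤ ‖v‖ / δ₂ + 2 * (‖v‖ / δ₂) := add_le_add hu1 (hn1.trans hn2)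
        _ = 3 / δ₂ * ‖v‖ := by field_simp; ring
  refine ⟨T₀.mkContinuous (3 / δ₂) hbound, ?_⟩
  intro x hx
  have h1 := hsub x hx
  have h2 := add_le_add_right h1 (Φ x₀)
  have e : Φ x₀ + (Φ x - Φ x₀) = Φ x := by abel
  rw [e] at h2
  exact h2
end

section
/- Let C be an open convex subset of a real Banach space E, let F be an order complete Banach space, and let Φ : C → F be a continuous convex function. Then Φ is the upper envelope of its continuous affine minorants: for every x ∈ C, Φ(x) = sup { T(x) + c : T : E → F continuous linear, c ∈ F, and T(y) + c ≤ Φ(y) for all y ∈ C }. -/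
open Set LinearMap

section HB

set_option linter.unusedSectionVars false

variable {E F : Type*} [AddCommGroup E] [Module ℝ E]
  [AddCommGroup F] [Module ℝ F] [PartialOrder F]
  [CovariantClass F F (· + ·) (· ≤ ·)]

private lemma swapCov' : CovariantClass F F (Function.swap (· + ·)) (· ≤ ·) :=
  ⟨fun c a b h => by simpa [add_comm] using add_le_add_left h c⟩

private lemma smul_mono' (hsmul : ∀ (c : ℝ) (x : F), 0 ≤ c → 0 ≤ x → 0 ≤ c • x)
    {c : ℝ} (hc : 0 ≤ c) {a b : F} (h : a ≤ b) : c • a ≤ c • b := by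
  haveI := swapCov' (F := F)
  have := hsmul c (b - a) hc (sub_nonneg.2 h)
  rw [smul_sub] at this
  exact sub_nonneg.1 this

private lemma exists_isGLB' (hcomp : ∀ S : Set F, S.Nonempty → BddAbove S → ∃ b, IsLUB S b)
    (S : Set F) (hne : S.Nonempty) (hbdd : BddBelow S) : ∃ b, IsGLB S b := by
  haveI := swapCov' (F := F)
  obtain ⟨L, hL⟩ := hbdd
  obtain ⟨b, hb⟩ := hcomp (Neg.neg '' S) (hne.image _)
    ⟨-L, by rintro _ ⟨z, hz, rfl⟩; exact neg_le_neg_iff.2 (hL hz)⟩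
  refine ⟨-b, fun z hz => ?_, fun M hM => ?_⟩
  · have : -z ≤ b := hb.1 ⟨z, hz, rfl⟩
    simpa using neg_le_neg_iff.2 this
  · have : b ≤ -M := hb.2 (by rintro _ ⟨z, hz, rfl⟩; exact neg_le_neg_iff.2 (hM hz))
    simpa using neg_le_neg_iff.2 this

theorem exists_linear_le_sublinear
    (hsmul : ∀ (c : ℝ) (x : F), 0 ≤ c → 0 ≤ x → 0 ≤ c • x)
    (hcomp : ∀ S : Set F, S.Nonempty → BddAbove S → ∃ b, IsLUB S b)
    (p : E → F) (hp0 : p 0 = 0)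
    (hp_smul : ∀ c : ℝ, 0 < c → ∀ v, p (c • v) = c • p v)
    (hp_add : ∀ u v, p (u + v) ≤ p u + p v) :
    ∃ g : E →ₗ[ℝ] F, ∀ v, g v ≤ p v := by
  haveI := swapCov' (F := F)
  set S := { f : E →ₗ.[ℝ] F | ∀ z : f.domain, f z ≤ p z } with hSdef
  -- one-step extension
  have step : ∀ f ∈ S, f.domain ≠ ⊤ → ∃ g ∈ S, f < g := by
    intro f hf hdom
    obtain ⟨y, -, hy⟩ : ∃ y ∈ (⊤ : Submodule ℝ E), y ∉ f.domain :=
      SetLike.exists_of_lt (lt_top_iff_ne_top.2 hdom)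
    have hub : ∀ (z w : f.domain),
        f z - p ((z : E) - y) ≤ p ((w : E) + y) - f w := by
      intro z w
      rw [sub_le_sub_iff]
      calc f z + f w = f (z + w) := (f.map_add _ _).symm
        _ ≤ p ((z : E) + (w : E)) := hf (z + w)
        _ ≤ p ((z : E) - y) + p ((w : E) + y) := by
            have := hp_add ((z : E) - y) ((w : E) + y)
            rwa [sub_add_add_cancel] at this
        _ = p ((w : E) + y) + p ((z : E) - y) := add_comm _ _
    obtain ⟨b, hbub, hblub⟩ := hcomp (range (fun z : f.domain => f z - p ((z : E) - y)))
      (range_nonempty _) ⟨p ((0 : f.domain) + y) - f 0, by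
        rintro _ ⟨z, rfl⟩; exact hub z 0⟩
    have hb_le : ∀ w : f.domain, b ≤ p ((w : E) + y) - f w := fun w =>
      hblub (by rintro _ ⟨z, rfl⟩; exact hub z w)
    have hb_ge : ∀ z : f.domain, f z - p ((z : E) - y) ≤ b := fun z => hbub ⟨z, rfl⟩
    refine ⟨f.supSpanSingleton y b hy, ?_, ?_⟩
    · rintro ⟨z', hz'⟩
      rw [LinearPMap.domain_supSpanSingleton] at hz'
      rcases Submodule.mem_sup.1 hz' with ⟨z, hz, y', hy', rfl⟩
      rcases Submodule.mem_span_singleton.1 hy' with ⟨r, rfl⟩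
      rw [LinearPMap.supSpanSingleton_apply_mk _ _ _ _ _ hz]
      rcases lt_trichotomy r 0 with hr | hr | hr
      · -- r < 0
        set s := -r with hs
        have hs0 : (0 : ℝ) < s := neg_pos.2 hr
        have h1 := hb_ge (s⁻¹ • ⟨z, hz⟩)
        have h2 := smul_mono' hsmul hs0.le h1
        rw [smul_sub, f.map_smul, smul_smul, mul_inv_cancel₀ hs0.ne', one_smul,
          ← hp_smul s hs0] at h2
        have h3 : s • ((↑(s⁻¹ • (⟨z, hz⟩ : f.domain)) : E) - y) = z + r • y := by
          simp only [SetLike.val_smul, smul_sub, smul_smul, mul_inv_cancel₀ hs0.ne',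
            one_smul, hs, neg_smul, sub_neg_eq_add, mul_inv_cancel₀ (neg_ne_zero.2 hr.ne)]
        rw [h3] at h2
        have h4 : s • b = -(r • b) := by rw [hs, neg_smul]
        rw [h4] at h2
        have h5 := sub_le_comm.1 h2
        rw [sub_neg_eq_add] at h5
        exact h5
      · subst hr
        simpa using hf ⟨z, hz⟩
      · -- r > 0
        have h1 := hb_le (r⁻¹ • ⟨z, hz⟩)
        have h2 := smul_mono' hsmul hr.le h1
        rw [smul_sub, ← hp_smul r hr, f.map_smul, smul_smul, mul_inv_cancel₀ hr.ne',
          one_smul, smul_add] at h2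
        have h3 : r • ((r⁻¹ • (⟨z, hz⟩ : f.domain) : f.domain) : E) = z := by
          simp [smul_smul, mul_inv_cancel₀ hr.ne']
        rw [h3] at h2
        have h4 := le_sub_iff_add_le.1 h2
        show (f ⟨z, hz⟩ : F) + r • b ≤ p (z + r • y)
        rwa [add_comm]
    · refine lt_iff_le_not_ge.2 ⟨f.left_le_sup _ _, fun H => ?_⟩
      replace H := LinearPMap.domain_mono.monotone H
      rw [LinearPMap.domain_supSpanSingleton, sup_le_iff, Submodule.span_le,
        singleton_subset_iff] at H
      exact hy H.2
  -- Zorn's lemma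
  have hSc : ∀ c ⊆ S, IsChain (· ≤ ·) c → ∀ y ∈ c, ∃ ub ∈ S, ∀ z ∈ c, z ≤ ub := by
    intro c hcs c_chain y hy
    have cne : c.Nonempty := ⟨y, hy⟩
    have hcd : DirectedOn (· ≤ ·) c := c_chain.directedOn
    refine ⟨LinearPMap.sSup c hcd, ?_, fun _ => LinearPMap.le_sSup hcd⟩
    rintro ⟨x, hx⟩
    have hdir : DirectedOn (· ≤ ·) (LinearPMap.domain '' c) :=
      directedOn_image.2 (hcd.mono LinearPMap.domain_mono.monotone)
    rcases (Submodule.mem_sSup_of_directed (cne.image _) hdir).1 hx with ⟨_, ⟨f, hfc, rfl⟩, hfx⟩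
    have hle : f ≤ LinearPMap.sSup c hcd := LinearPMap.le_sSup _ hfc
    convert ← hcs hfc ⟨x, hfx⟩ using 1
    exact hle.2 rfl
  have hf₀ : (0 : E →ₗ[ℝ] F).toPMap ⊥ ∈ S := by
    rintro ⟨z, hz⟩
    have hz0 : z = 0 := (Submodule.mem_bot ℝ).1 hz
    subst hz0
    simp [LinearMap.toPMap, hp0]
  obtain ⟨q, -, hqS, hqmax⟩ := zorn_le_nonempty₀ S hSc _ hf₀
  have hqtop : q.domain = ⊤ := by
    by_contra hne
    obtain ⟨g, hgS, hlt⟩ := step q hqS hne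
    exact hlt.ne (le_antisymm hlt.le (hqmax hgS hlt.le))
  obtain ⟨qdom, qf⟩ := q
  simp only at hqtop
  subst hqtop
  refine ⟨qf.comp (LinearMap.id.codRestrict ⊤ fun _ => trivial), fun v => ?_⟩
  exact hqS ⟨v, trivial⟩

end HB

set_option maxHeartbeats 2000000 in
/-- On an open convex set `C` in a Banach space, a continuous convex
function with values in an order complete Banach space is the upper envelope of its
continuous affine minorants. -/
theorem convex_eq_sup_of_affine_minorants
    {E F : Type*}
    [NormedAddCommGroup E] [NormedSpace ℝ E] [CompleteSpace E]
    [NormedAddCommGroup F] [NormedSpace ℝ F] [CompleteSpace F]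
    [PartialOrder F] [CovariantClass F F (· + ·) (· ≤ ·)]
    (hsmulF : ∀ (c : ℝ) (x : F), 0 ≤ c → 0 ≤ x → 0 ≤ c • x)
    (hclosedF : IsClosed {x : F | 0 ≤ x})
    (hgenF : ∀ x : F, ∃ u v : F, 0 ≤ u ∧ 0 ≤ v ∧ x = u - v)
    (hmonoF : ∀ x y : F, 0 ≤ x → x ≤ y → ‖x‖ ≤ ‖y‖)
    (hcompF : ∀ S : Set F, S.Nonempty → BddAbove S → ∃ b, IsLUB S b)
    {C : Set E} (hCconv : Convex ℝ C) (hCopen : IsOpen C) (Φ : E → F)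
    (hconv : ∀ x ∈ C, ∀ y ∈ C, ∀ t : ℝ, 0 ≤ t → t ≤ 1 →
      Φ ((1 - t) • x + t • y) ≤ (1 - t) • Φ x + t • Φ y)
    (hcont : ContinuousOn Φ C) :
    ∀ x ∈ C, IsLUB {z : F | ∃ (T : E →L[ℝ] F) (c : F),
      (∀ y ∈ C, T y + c ≤ Φ y) ∧ z = T x + c} (Φ x) := by
  haveI := swapCov' (F := F)
  intro x hx
  have hsm : ∀ {c : ℝ}, 0 ≤ c → ∀ {a b : F}, a ≤ b → c • a ≤ c • b :=
    fun hc _ _ h => smul_mono' hsmulF hc h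
  -- existence of admissible parameters
  have hadm_ex : ∀ v : E, ∃ t : ℝ, 0 < t ∧ x + t • v ∈ C := by
    intro v
    have hc : Continuous fun t : ℝ => x + t • v := by continuity
    have hnb : (fun t : ℝ => x + t • v) ⁻¹' C ∈ nhds (0 : ℝ) := by
      apply hc.continuousAt.preimage_mem_nhds
      simpa using hCopen.mem_nhds hx
    obtain ⟨ε, hε, hball⟩ := Metric.mem_nhds_iff.1 hnb
    refine ⟨ε / 2, by positivity, hball ?_⟩
    simp only [Metric.mem_ball, Real.dist_eq, sub_zero]
    rw [abs_of_pos (by positivity)]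
    linarith
  -- monotonicity of difference quotients
  have hmono : ∀ (v : E) (s t : ℝ), 0 < s → s ≤ t → x + t • v ∈ C →
      (x + s • v ∈ C ∧ s⁻¹ • (Φ (x + s • v) - Φ x) ≤ t⁻¹ • (Φ (x + t • v) - Φ x)) := by
    intro v s t hs hst htC
    have ht : (0 : ℝ) < t := hs.trans_le hst
    set μ := s / t with hμ
    have hμ0 : (0 : ℝ) ≤ μ := by positivity
    have hμ1 : μ ≤ 1 := by rw [hμ, div_le_one ht]; exact hst
    have ht' : t ≠ 0 := ht.ne'
    have hpt : (1 - μ) • x + μ • (x + t • v) = x + s • v := by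
      match_scalars <;> field_simp [hμ] <;> simp [hμ, ht']
    have hmem : x + s • v ∈ C := by
      rw [← hpt]
      exact hCconv hx htC (by linarith) hμ0 (by ring)
    have hineq := hconv x hx (x + t • v) htC μ hμ0 hμ1
    rw [hpt] at hineq
    refine ⟨hmem, ?_⟩
    have h1 : Φ (x + s • v) - Φ x ≤ μ • (Φ (x + t • v) - Φ x) := by
      have h2 : (1 - μ) • Φ x + μ • Φ (x + t • v) - Φ x = μ • (Φ (x + t • v) - Φ x) := by
        module
      calc Φ (x + s • v) - Φ x ≤ (1 - μ) • Φ x + μ • Φ (x + t • v) - Φ x :=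
            sub_le_sub_right hineq _
        _ = _ := h2
    have h3 := hsm (inv_nonneg.2 hs.le) h1
    rwa [smul_smul, show s⁻¹ * μ = t⁻¹ by rw [hμ]; field_simp] at h3
  -- the sets of difference quotients have greatest lower bounds
  have hglb : ∀ v : E, ∃ b, IsGLB {z : F | ∃ t : ℝ, (0 < t ∧ x + t • v ∈ C) ∧
      z = t⁻¹ • (Φ (x + t • v) - Φ x)} b := by
    intro v
    apply exists_isGLB' hcompF
    · obtain ⟨t, ht, htC⟩ := hadm_ex v
      exact ⟨_, t, ⟨ht, htC⟩, rfl⟩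
    · -- bounded below
      obtain ⟨σ, hσ, hσC⟩ := hadm_ex (-v)
      refine ⟨-(σ⁻¹ • (Φ (x + σ • (-v)) - Φ x)), ?_⟩
      rintro _ ⟨t, ⟨ht, htC⟩, rfl⟩
      set lam := σ / (σ + t) with hlam
      have hσt : (0 : ℝ) < σ + t := by linarith
      have hlam0 : (0 : ℝ) ≤ lam := by positivity
      have hlam1 : lam ≤ 1 := by rw [hlam, div_le_one hσt]; linarith
      have hσ' : σ ≠ 0 := hσ.ne'
      have ht' : t ≠ 0 := ht.ne'
      have hσt' : σ + t ≠ 0 := by positivity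
      have hpt : (1 - lam) • (x + σ • (-v)) + lam • (x + t • v) = x := by
        match_scalars <;> field_simp [hlam] <;> ring_nf <;> rw [hlam, div_mul_eq_mul_div, div_mul_eq_mul_div, ← add_div, ← mul_add, mul_div_assoc, div_self hσt', mul_one, sub_self]
      have hineq := hconv _ hσC _ htC lam hlam0 hlam1
      rw [hpt] at hineq
      have h0 : (0 : F) ≤ (1 - lam) • (Φ (x + σ • (-v)) - Φ x) + lam • (Φ (x + t • v) - Φ x) := by
        have : (1 - lam) • (Φ (x + σ • (-v)) - Φ x) + lam • (Φ (x + t • v) - Φ x)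
            = (1 - lam) • Φ (x + σ • (-v)) + lam • Φ (x + t • v) - Φ x := by module
        rw [this]
        exact sub_nonneg.2 hineq
      have h1 := hsm (show (0:ℝ) ≤ (σ + t) / (σ * t) by positivity) h0
      rw [smul_zero, smul_add, smul_smul, smul_smul] at h1
      have e1 : (σ + t) / (σ * t) * (1 - lam) = σ⁻¹ := by
        rw [hlam]; field_simp; ring
      have e2 : (σ + t) / (σ * t) * lam = t⁻¹ := by
        rw [hlam]; field_simp
      rw [e1, e2] at h1
      -- h1 : 0 ≤ σ⁻¹ • (...) + t⁻¹ • (...)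
      rw [neg_le_iff_add_nonneg, add_comm]
      exact h1
  choose p hp using hglb
  have hpA : ∀ (v : E) (t : ℝ), 0 < t → x + t • v ∈ C →
      p v ≤ t⁻¹ • (Φ (x + t • v) - Φ x) := fun v t h1 h2 => (hp v).1 ⟨t, ⟨h1, h2⟩, rfl⟩
  have hp_lb : ∀ (v : E) (L : F), (∀ t : ℝ, 0 < t → x + t • v ∈ C →
      L ≤ t⁻¹ • (Φ (x + t • v) - Φ x)) → L ≤ p v := by
    intro v L h
    refine (hp v).2 ?_
    rintro _ ⟨t, ⟨h1, h2⟩, rfl⟩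
    exact h t h1 h2
  -- p 0 = 0
  have hp0 : p 0 = 0 := by
    refine (hp 0).unique ⟨?_, ?_⟩
    · rintro _ ⟨t, ⟨ht, htC⟩, rfl⟩
      simp only [smul_zero, add_zero, sub_self, le_refl]
    · intro L hL
      obtain ⟨t, ht, htC⟩ := hadm_ex 0
      simpa only [smul_zero, add_zero, sub_self] using hL ⟨t, ⟨ht, htC⟩, rfl⟩
  -- positive homogeneity
  have hp_smul : ∀ c : ℝ, 0 < c → ∀ v, p (c • v) = c • p v := by
    intro c hc v
    have hre : ∀ t : ℝ, x + t • (c • v) = x + (t * c) • v := fun t => by rw [mul_smul]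
    refine (hp (c • v)).unique ⟨?_, ?_⟩
    · rintro _ ⟨t, ⟨ht, htC⟩, rfl⟩
      rw [hre] at htC
      have h2 := hpA v (t * c) (by positivity) htC
      have h3 := hsm hc.le h2
      rw [smul_smul, show c * (t * c)⁻¹ = t⁻¹ by field_simp] at h3
      rw [hre t]
      exact h3
    · intro L hL
      have h4 : c⁻¹ • L ≤ p v := by
        apply hp_lb
        intro s hs hsC
        have h5 : x + (s / c) • (c • v) ∈ C := by
          rw [hre, div_mul_cancel₀ _ hc.ne']
          exact hsC
        have h6 := hL ⟨s / c, ⟨by positivity, h5⟩, rfl⟩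
        rw [hre, div_mul_cancel₀ _ hc.ne'] at h6
        have h7 := hsm (inv_nonneg.2 hc.le) h6
        rwa [smul_smul, show c⁻¹ * (s / c)⁻¹ = s⁻¹ by field_simp] at h7
      have h8 := hsm hc.le h4
      rwa [smul_inv_smul₀ hc.ne'] at h8
  -- subadditivity
  have hp_add : ∀ u v, p (u + v) ≤ p u + p v := by
    intro u v
    have step1 : ∀ t : ℝ, 0 < t → x + t • u ∈ C → x + t • v ∈ C →
        p (u + v) ≤ t⁻¹ • (Φ (x + t • u) - Φ x) + t⁻¹ • (Φ (x + t • v) - Φ x) := by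
      intro t ht htu htv
      have ht' : t ≠ 0 := ht.ne'
      have hhalf : x + (t / 2) • (u + v)
          = (1 - (1/2 : ℝ)) • (x + t • u) + (1/2 : ℝ) • (x + t • v) := by
        match_scalars <;> field_simp <;> ring
      have hmem : x + (t / 2) • (u + v) ∈ C := by
        rw [hhalf]
        exact hCconv htu htv (by norm_num) (by norm_num) (by norm_num)
      have hineq := hconv _ htu _ htv (1/2 : ℝ) (by norm_num) (by norm_num)
      rw [← hhalf] at hineq
      have h1 := hpA (u + v) (t / 2) (by positivity) hmem
      have h2 : (t/2)⁻¹ • (Φ (x + (t/2) • (u + v)) - Φ x)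
          ≤ (t/2)⁻¹ • ((1 - (1/2:ℝ)) • Φ (x + t • u) + (1/2:ℝ) • Φ (x + t • v) - Φ x) :=
        hsm (by positivity) (sub_le_sub_right hineq _)
      have h3 : (t/2)⁻¹ • ((1 - (1/2:ℝ)) • Φ (x + t • u) + (1/2:ℝ) • Φ (x + t • v) - Φ x)
          = t⁻¹ • (Φ (x + t • u) - Φ x) + t⁻¹ • (Φ (x + t • v) - Φ x) := by
        match_scalars <;> field_simp <;> ring
      exact h1.trans (h2.trans_eq h3)
    have step2 : ∀ t0 : ℝ, 0 < t0 → x + t0 • v ∈ C →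
        p (u + v) - t0⁻¹ • (Φ (x + t0 • v) - Φ x) ≤ p u := by
      intro t0 ht0 ht0v
      apply hp_lb
      intro s hs hsu
      have htmin : (0:ℝ) < min s t0 := lt_min hs ht0
      have h1 := hmono u (min s t0) s htmin (min_le_left _ _) hsu
      have h2 := hmono v (min s t0) t0 htmin (min_le_right _ _) ht0v
      have h3 := step1 (min s t0) htmin h1.1 h2.1
      exact sub_le_iff_le_add.2 (h3.trans (add_le_add h1.2 h2.2))
    have step3 : p (u + v) - p u ≤ p v := by
      apply hp_lb
      intro t0 ht0 ht0v
      exact sub_le_comm.1 (step2 t0 ht0 ht0v)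
    exact (sub_le_iff_le_add.1 step3).trans_eq (add_comm _ _)
  -- apply Hahn-Banach
  obtain ⟨g, hg⟩ := exists_linear_le_sublinear hsmulF hcompF p hp0 hp_smul hp_add
  have hkey : ∀ y ∈ C, g (y - x) ≤ Φ y - Φ x := by
    intro y hy
    have h1 : x + (1:ℝ) • (y - x) ∈ C := by simpa using hy
    have h2 := hpA (y - x) 1 one_pos h1
    have h3 := (hg (y - x)).trans h2
    simpa using h3
  -- continuity of g
  have hca : ContinuousAt Φ x := hcont.continuousAt (hCopen.mem_nhds hx)
  obtain ⟨δ₁, hδ₁, hball₁⟩ := Metric.isOpen_iff.1 hCopen x hx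
  obtain ⟨δ₂, hδ₂, hδ₂'⟩ := Metric.continuousAt_iff.1 hca 1 one_pos
  set δ := min δ₁ δ₂ with hδdef
  have hδ : 0 < δ := lt_min hδ₁ hδ₂
  have hb3 : ∀ v : E, ‖v‖ < δ → ‖g v‖ ≤ 3 := by
    intro v hv
    have hvδ₁ : ‖v‖ < δ₁ := hv.trans_le (min_le_left _ _)
    have hvδ₂ : ‖v‖ < δ₂ := hv.trans_le (min_le_right _ _)
    have hdp : dist (x + v) x = ‖v‖ := by simp [dist_eq_norm]
    have hdm : dist (x - v) x = ‖v‖ := by simp [dist_eq_norm]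
    have hmemp : x + v ∈ C := hball₁ (by rw [Metric.mem_ball, hdp]; exact hvδ₁)
    have hmemm : x - v ∈ C := hball₁ (by rw [Metric.mem_ball, hdm]; exact hvδ₁)
    have hPhip : ‖Φ (x + v) - Φ x‖ < 1 := by
      have := hδ₂' (by rw [hdp]; exact hvδ₂)
      rwa [dist_eq_norm] at this
    have hPhim : ‖Φ (x - v) - Φ x‖ < 1 := by
      have := hδ₂' (by rw [hdm]; exact hvδ₂)
      rwa [dist_eq_norm] at this
    have hub : g v ≤ Φ (x + v) - Φ x := by
      have := hkey (x + v) hmemp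
      rwa [add_sub_cancel_left] at this
    have hlb : -(Φ (x - v) - Φ x) ≤ g v := by
      have := hkey (x - v) hmemm
      rw [sub_sub_cancel_left, map_neg] at this
      have h' := neg_le_neg_iff.2 this
      rwa [neg_neg] at h'
    have h0 : (0 : F) ≤ g v - -(Φ (x - v) - Φ x) := sub_nonneg.2 hlb
    have h1 : g v - -(Φ (x - v) - Φ x) ≤ (Φ (x + v) - Φ x) - -(Φ (x - v) - Φ x) :=
      sub_le_sub_right hub _
    have h2 := hmonoF _ _ h0 h1
    have h4 : ‖(Φ (x + v) - Φ x) - -(Φ (x - v) - Φ x)‖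
        ≤ ‖Φ (x + v) - Φ x‖ + ‖Φ (x - v) - Φ x‖ := by
      rw [sub_neg_eq_add]
      exact norm_add_le _ _
    calc ‖g v‖ = ‖(g v - -(Φ (x - v) - Φ x)) + -(Φ (x - v) - Φ x)‖ := by
          congr 1; abel
      _ ≤ ‖g v - -(Φ (x - v) - Φ x)‖ + ‖-(Φ (x - v) - Φ x)‖ := norm_add_le _ _
      _ ≤ ‖(Φ (x + v) - Φ x) - -(Φ (x - v) - Φ x)‖ + ‖Φ (x - v) - Φ x‖ := by
          rw [norm_neg]; exact add_le_add_left h2 _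
      _ ≤ (‖Φ (x + v) - Φ x‖ + ‖Φ (x - v) - Φ x‖) + ‖Φ (x - v) - Φ x‖ :=
          add_le_add_left h4 _
      _ ≤ 3 := by linarith [hPhip.le, hPhim.le]
  have hbound : ∀ v : E, ‖g v‖ ≤ (6 / δ) * ‖v‖ := by
    intro v
    rcases eq_or_ne v 0 with rfl | hv
    · simp
    · have hnv : (0:ℝ) < ‖v‖ := norm_pos_iff.2 hv
      have hc0 : (0:ℝ) < δ / (2 * ‖v‖) := by positivity
      have hw : ‖(δ / (2 * ‖v‖)) • v‖ < δ := by
        rw [norm_smul, Real.norm_eq_abs, abs_of_pos hc0]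
        have he : δ / (2 * ‖v‖) * ‖v‖ = δ / 2 := by field_simp
        rw [he]
        linarith
      have h3 := hb3 _ hw
      rw [map_smul, norm_smul, Real.norm_eq_abs, abs_of_pos hc0] at h3
      rw [div_mul_eq_mul_div, div_le_iff₀ (by positivity : (0:ℝ) < 2 * ‖v‖)] at h3
      rw [div_mul_eq_mul_div, le_div_iff₀ hδ]
      nlinarith
  -- the continuous linear map
  refine ⟨?_, ?_⟩
  · rintro z ⟨T', c', hmin, rfl⟩
    exact hmin x hx
  · intro b hb
    refine hb ⟨g.mkContinuous (6 / δ) hbound, Φ x - g x, fun y hy => ?_, ?_⟩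
    · rw [LinearMap.mkContinuous_apply]
      have hky := hkey y hy
      rw [map_sub] at hky
      calc g y + (Φ x - g x) = (g y - g x) + Φ x := by abel
        _ ≤ (Φ y - Φ x) + Φ x := add_le_add_left hky _
        _ = Φ y := by abel
    · rw [LinearMap.mkContinuous_apply]
      abel
end

section
/- (Generalized Hahn–Banach extension theorem) Let Φ be a convex function defined on a real vector space E taking values in an order complete vector space F. If H is a linear subspace of E and T_H : H → F is a linear operator satisfying T_H(x) ≤ Φ(x) for all x ∈ H, then there exists a linear operator T : E → F which extends T_H and satisfies T(x) ≤ Φ(x) for all x ∈ E. -/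
/-- (Generalized Hahn–Banach extension theorem) Let `Φ` be a convex
function from a real vector space `E` into an order complete ordered vector space `F`.
Any linear operator `T_H` on a subspace `H` of `E` with `T_H ≤ Φ` on `H` extends to a
linear operator `T : E → F` with `T ≤ Φ` on `E`. -/
theorem generalized_hahn_banach_extension
    {E F : Type*} [AddCommGroup E] [Module ℝ E]
    [AddCommGroup F] [Module ℝ F] [PartialOrder F]
    [CovariantClass F F (· + ·) (· ≤ ·)]
    (hsmulF : ∀ (c : ℝ) (x : F), 0 ≤ c → 0 ≤ x → 0 ≤ c • x)
    (hcompF : ∀ S : Set F, S.Nonempty → BddAbove S → ∃ b, IsLUB S b)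
    (Φ : E → F)
    (hconv : ∀ x y : E, ∀ t : ℝ, 0 ≤ t → t ≤ 1 →
      Φ ((1 - t) • x + t • y) ≤ (1 - t) • Φ x + t • Φ y)
    (H : Submodule ℝ E) (T_H : H →ₗ[ℝ] F)
    (hTH : ∀ x : H, T_H x ≤ Φ x) :
    ∃ T : E →ₗ[ℝ] F, (∀ x : H, T x = T_H x) ∧ ∀ x : E, T x ≤ Φ x := by
  classical
  haveI : CovariantClass F F (Function.swap (· + ·)) (· ≤ ·) :=
    ⟨fun a b c h => by simpa [add_comm] using add_le_add_left h a⟩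
  -- smul monotonicity
  have smul_le : ∀ (c : ℝ) {x y : F}, 0 ≤ c → x ≤ y → c • x ≤ c • y := by
    intro c x y hc hxy
    have := hsmulF c (y - x) hc (sub_nonneg.2 hxy)
    rwa [smul_sub, sub_nonneg] at this
  -- the induction step
  have step : ∀ f : E →ₗ.[ℝ] F, (∀ x : f.domain, f x ≤ Φ x) → f.domain ≠ ⊤ →
      ∃ g, f < g ∧ ∀ x : g.domain, g x ≤ Φ x := by
    intro f hf hdom
    obtain ⟨v, -, hv⟩ : ∃ v ∈ (⊤ : Submodule ℝ E), v ∉ f.domain :=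
      SetLike.exists_of_lt (lt_top_iff_ne_top.2 hdom)
    -- the key "cross" inequality coming from convexity
    have key : ∀ (h₁ h₂ : f.domain) (s t : ℝ), 0 < s → 0 < t →
        s⁻¹ • (f h₂ - Φ ((h₂ : E) - s • v)) ≤ t⁻¹ • (Φ ((h₁ : E) + t • v) - f h₁) := by
      intro h₁ h₂ s t hs ht
      have hst : (0 : ℝ) < s + t := by linarith
      have hl0 : (0 : ℝ) ≤ t / (s + t) := by positivity
      have hl1 : t / (s + t) ≤ 1 := by
        rw [div_le_one hst]; linarith
      have hc := hconv ((h₁ : E) + t • v) ((h₂ : E) - s • v) (t / (s + t)) hl0 hl1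
      have h1l : 1 - t / (s + t) = s / (s + t) := by field_simp; ring
      rw [h1l] at hc
      -- identify the convex combination with a point of the domain
      set w : f.domain := (s + t)⁻¹ • (s • h₁ + t • h₂) with hw
      have hwE : (w : E) = (s / (s + t)) • ((h₁ : E) + t • v) +
          (t / (s + t)) • ((h₂ : E) - s • v) := by
        show (s + t)⁻¹ • (s • (h₁ : E) + t • (h₂ : E)) = _
        match_scalars <;> (field_simp; try ring)
      have hfw : f w ≤ Φ ((s / (s + t)) • ((h₁ : E) + t • v) +
          (t / (s + t)) • ((h₂ : E) - s • v)) := by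
        rw [← hwE]; exact hf w
      have hfw' : f w = (s + t)⁻¹ • (s • f h₁ + t • f h₂) := by
        rw [hw, f.map_smul, f.map_add, f.map_smul, f.map_smul]
      have main : (s + t)⁻¹ • (s • f h₁ + t • f h₂) ≤
          (s / (s + t)) • Φ ((h₁ : E) + t • v) + (t / (s + t)) • Φ ((h₂ : E) - s • v) :=
        hfw' ▸ (hfw.trans hc)
      -- multiply by (s + t)
      have main2 : s • f h₁ + t • f h₂ ≤
          s • Φ ((h₁ : E) + t • v) + t • Φ ((h₂ : E) - s • v) := by
        have := smul_le (s + t) hst.le main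
        rw [smul_smul, mul_inv_cancel₀ hst.ne', one_smul, smul_add, smul_smul, smul_smul] at this
        rw [show (s + t) * (s / (s + t)) = s by field_simp,
          show (s + t) * (t / (s + t)) = t by field_simp] at this
        exact this
      -- rearrange
      have main3 : t • (f h₂ - Φ ((h₂ : E) - s • v)) ≤
          s • (Φ ((h₁ : E) + t • v) - f h₁) := by
        rw [smul_sub, smul_sub, sub_le_sub_iff]
        calc t • f h₂ + s • f h₁ = s • f h₁ + t • f h₂ := by rw [add_comm]
          _ ≤ s • Φ ((h₁ : E) + t • v) + t • Φ ((h₂ : E) - s • v) := main2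
      -- multiply by s⁻¹ * t⁻¹
      have := smul_le (s⁻¹ * t⁻¹) (by positivity) main3
      rw [smul_smul, smul_smul, mul_assoc, inv_mul_cancel₀ ht.ne', mul_one,
        mul_comm s⁻¹ t⁻¹, mul_assoc, inv_mul_cancel₀ hs.ne', mul_one] at this
      exact this
    -- the set whose LUB gives the value at v
    set L : Set F := {z | ∃ (h : f.domain) (s : ℝ), 0 < s ∧
      z = s⁻¹ • (f h - Φ ((h : E) - s • v))} with hL
    have hLne : L.Nonempty := ⟨_, ⟨0, 1, one_pos, rfl⟩⟩
    have hLbdd : BddAbove L := by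
      refine ⟨(1 : ℝ)⁻¹ • (Φ (((0 : f.domain) : E) + (1 : ℝ) • v) - f 0), ?_⟩
      rintro z ⟨h, s, hs, rfl⟩
      exact key 0 h s 1 hs one_pos
    obtain ⟨b, hb⟩ := hcompF L hLne hLbdd
    have lower : ∀ (h : f.domain) (s : ℝ), 0 < s →
        s⁻¹ • (f h - Φ ((h : E) - s • v)) ≤ b := fun h s hs => hb.1 ⟨h, s, hs, rfl⟩
    have upper : ∀ (h : f.domain) (t : ℝ), 0 < t →
        b ≤ t⁻¹ • (Φ ((h : E) + t • v) - f h) := by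
      intro h t ht
      refine hb.2 ?_
      rintro z ⟨h', s, hs, rfl⟩
      exact key h h' s t hs ht
    refine ⟨f.supSpanSingleton v b hv, ?_, ?_⟩
    · refine lt_iff_le_not_ge.2 ⟨f.left_le_sup _ _, fun hle => ?_⟩
      replace hle := LinearPMap.domain_mono.monotone hle
      rw [LinearPMap.domain_supSpanSingleton, sup_le_iff, Submodule.span_le,
        Set.singleton_subset_iff] at hle
      exact hv hle.2
    · rintro ⟨z, hz⟩
      rcases Submodule.mem_sup.1 hz with ⟨x, hx, y', hy', rfl⟩
      rcases Submodule.mem_span_singleton.1 hy' with ⟨r, rfl⟩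
      rw [LinearPMap.supSpanSingleton_apply_mk _ _ _ _ _ hx]
      show f ⟨x, hx⟩ + r • b ≤ Φ (x + r • v)
      rcases lt_trichotomy r 0 with hr | hr | hr
      · set s : ℝ := -r with hsdef
        have hs : 0 < s := by simp [hsdef]; linarith
        have h1 := smul_le s hs.le (lower ⟨x, hx⟩ s hs)
        rw [smul_smul, mul_inv_cancel₀ hs.ne', one_smul] at h1
        -- h1 : f ⟨x,hx⟩ - Φ (x - s • v) ≤ s • b
        have : f ⟨x, hx⟩ - s • b ≤ Φ (x - s • v) := by
          rw [sub_le_iff_le_add] at h1 ⊢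
          rwa [add_comm] at h1
        rw [show x - s • v = x + r • v by rw [hsdef]; module,
          show f ⟨x, hx⟩ - s • b = f ⟨x, hx⟩ + r • b by rw [hsdef]; module] at this
        exact this
      · subst hr
        simpa using hf ⟨x, hx⟩
      · have h1 := smul_le r hr.le (upper ⟨x, hx⟩ r hr)
        rw [smul_smul, mul_inv_cancel₀ hr.ne', one_smul] at h1
        -- h1 : r • b ≤ Φ (x + r • v) - f ⟨x,hx⟩
        rw [le_sub_iff_add_le, add_comm] at h1
        exact h1
  -- Zorn's lemma
  set S : Set (E →ₗ.[ℝ] F) := {p | ∀ x : p.domain, p x ≤ Φ x} with hS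
  have hSc : ∀ c ⊆ S, IsChain (· ≤ ·) c → ∀ y ∈ c, ∃ ub ∈ S, ∀ z ∈ c, z ≤ ub := by
    intro c hcs c_chain y hy
    have cne : c.Nonempty := ⟨y, hy⟩
    have hcd : DirectedOn (· ≤ ·) c := c_chain.directedOn
    refine ⟨LinearPMap.sSup c hcd, ?_, fun _ => LinearPMap.le_sSup hcd⟩
    rintro ⟨x, hx⟩
    have hdir : DirectedOn (· ≤ ·) (LinearPMap.domain '' c) :=
      directedOn_image.2 (hcd.mono LinearPMap.domain_mono.monotone)
    rcases (Submodule.mem_sSup_of_directed (cne.image _) hdir).1 hx with ⟨_, ⟨g, hgc, rfl⟩, hgx⟩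
    have hg : g ≤ LinearPMap.sSup c hcd := LinearPMap.le_sSup _ hgc
    convert ← hcs hgc ⟨x, hgx⟩ using 1
    exact hg.2 rfl
  have hbase : (⟨H, T_H⟩ : E →ₗ.[ℝ] F) ∈ S := fun x => hTH x
  obtain ⟨q, hq_base, hq_mem, hq_max⟩ :
      ∃ q ∈ S, (⟨H, T_H⟩ : E →ₗ.[ℝ] F) ≤ q ∧ ∀ z ∈ S, q ≤ z → z = q := by
    obtain ⟨q, h1, h2⟩ := zorn_le_nonempty₀ S hSc _ hbase
    exact ⟨q, h2.prop, h1, fun z hz hqz => (h2.eq_of_le hz hqz).symm⟩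
  -- the maximal element has full domain
  have hqtop : q.domain = ⊤ := by
    by_contra hne
    obtain ⟨g, hlt, hg⟩ := step q hq_base hne
    exact absurd (hq_max g hg hlt.le) (by intro h; exact hlt.ne' h)
  -- assemble the final linear map
  refine ⟨q.toFun.comp (LinearMap.id.codRestrict q.domain fun _ => hqtop.ge Submodule.mem_top), ?_, ?_⟩
  · intro x
    exact (hq_mem.2 (x := x) (y := ⟨(x : E), hqtop.ge Submodule.mem_top⟩) rfl).symm
  · intro x
    exact hq_base ⟨x, hqtop.ge Submodule.mem_top⟩
end

section
/- Let Φ be a convex function defined on a real Banach space E taking values in an order complete Banach space F, such that Φ(0) = 0 and Φ is continuous at the origin. If H is a linear subspace of E and T_H : H → F is a linear operator satisfying T_H(x) ≤ Φ(x) for all x ∈ H, then there exists a continuous linear operator T : E → F which extends T_H and satisfies T(x) ≤ Φ(x) for all x ∈ E. -/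
open Set Submodule

section HBaux

variable {E F : Type*} [AddCommGroup E] [Module ℝ E]
  [AddCommGroup F] [Module ℝ F] [PartialOrder F]
  [CovariantClass F F (· + ·) (· ≤ ·)]

lemma hb_sub_nonneg {a b : F} : a ≤ b ↔ 0 ≤ b - a := by
  constructor
  · intro h
    have := add_le_add_left h (-a)
    simpa [neg_add_cancel, sub_eq_neg_add] using this
  · intro h
    have := add_le_add_left h a
    simpa [sub_eq_neg_add, ← add_assoc] using this

lemma hb_smul_le (hsmulF : ∀ (c : ℝ) (x : F), 0 ≤ c → 0 ≤ x → 0 ≤ c • x)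
    {t : ℝ} (ht : 0 ≤ t) {a b : F} (h : a ≤ b) : t • a ≤ t • b := by
  rw [hb_sub_nonneg] at h ⊢
  rw [← smul_sub]
  exact hsmulF t _ ht h


set_option maxHeartbeats 1000000 in
lemma hb_step (hsmulF : ∀ (c : ℝ) (x : F), 0 ≤ c → 0 ≤ x → 0 ≤ c • x)
    (hcompF : ∀ S : Set F, S.Nonempty → BddAbove S → ∃ b, IsLUB S b)
    (Φ : E → F)
    (hconv : ∀ x y : E, ∀ t : ℝ, 0 ≤ t → t ≤ 1 →
      Φ ((1 - t) • x + t • y) ≤ (1 - t) • Φ x + t • Φ y)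
    (hΦ0 : Φ 0 = 0)
    (p : E →ₗ.[ℝ] F) (hp : ∀ x : p.domain, p x ≤ Φ x) (hdom : p.domain ≠ ⊤) :
    ∃ q, p < q ∧ ∀ x : q.domain, q x ≤ Φ x := by
  obtain ⟨y, -, hy⟩ : ∃ y ∈ (⊤ : Submodule ℝ E), y ∉ p.domain :=
    SetLike.exists_of_lt (lt_top_iff_ne_top.2 hdom)
  -- the key cross inequality
  have key : ∀ s t : ℝ, 0 < s → 0 < t → ∀ v w : p.domain,
      s⁻¹ • (p v - Φ ((v : E) - s • y)) ≤ t⁻¹ • (Φ ((w : E) + t • y) - p w) := by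
    intro s t hs ht v w
    have hst : (0:ℝ) < s + t := by linarith
    set lam : ℝ := t / (s + t) with hlam
    have hlam0 : 0 ≤ lam := by positivity
    have hlam1 : lam ≤ 1 := by
      rw [hlam, div_le_one hst]; linarith
    have h1lam : 1 - lam = s / (s + t) := by
      rw [hlam, sub_eq_iff_eq_add, ← add_div, div_self hst.ne']
    have hcv := hconv ((w : E) + t • y) ((v : E) - s • y) lam hlam0 hlam1
    have hpt : (1 - lam) • ((w : E) + t • y) + lam • ((v : E) - s • y)
        = (s / (s + t)) • (w : E) + (t / (s + t)) • (v : E) := by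
      rw [h1lam, hlam]
      match_scalars <;> field_simp <;> ring
    rw [hpt, h1lam, hlam] at hcv
    -- the combined point is in the domain
    set z : p.domain := (s / (s + t)) • w + (t / (s + t)) • v with hzdef
    have hz : ((z : E)) = (s / (s + t)) • (w : E) + (t / (s + t)) • (v : E) := by
      simp [hzdef]
    have hpz : (s / (s + t)) • p w + (t / (s + t)) • p v
        ≤ (s / (s + t)) • Φ ((w : E) + t • y) + (t / (s + t)) • Φ ((v : E) - s • y) := by
      have := hp z
      rw [hz] at this
      calc (s / (s + t)) • p w + (t / (s + t)) • p v = p z := by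
            simp [hzdef, p.map_add, p.map_smul]
        _ ≤ Φ ((s / (s + t)) • (w : E) + (t / (s + t)) • (v : E)) := this
        _ ≤ _ := hcv
    -- rearrange and scale by (s+t)/(s*t)
    rw [hb_sub_nonneg] at hpz ⊢
    have hk : (0:ℝ) ≤ (s + t) / (s * t) := by positivity
    have h2 := hsmulF _ _ hk (hb_sub_nonneg.mp (hb_sub_nonneg.mpr hpz))
    have heq : ((s + t) / (s * t)) • ((s / (s + t)) • Φ ((w : E) + t • y)
          + (t / (s + t)) • Φ ((v : E) - s • y)
          - ((s / (s + t)) • p w + (t / (s + t)) • p v))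
        = t⁻¹ • (Φ ((w : E) + t • y) - p w) - s⁻¹ • (p v - Φ ((v : E) - s • y)) := by
      match_scalars <;> field_simp <;> ring
    rw [heq] at h2
    exact h2
  -- build the set of lower candidates and take its LUB
  set S : Set F := {z | ∃ s : ℝ, 0 < s ∧ ∃ v : p.domain, z = s⁻¹ • (p v - Φ ((v : E) - s • y))}
    with hSdef
  have hSne : S.Nonempty := by
    refine ⟨(1:ℝ)⁻¹ • (p 0 - Φ ((0 : p.domain) - (1:ℝ) • y)), 1, one_pos, 0, rfl⟩
  have hSbdd : BddAbove S := by
    refine ⟨(1:ℝ)⁻¹ • (Φ (((0 : p.domain) : E) + (1:ℝ) • y) - p 0), ?_⟩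
    rintro z ⟨s, hs, v, rfl⟩
    exact key s 1 hs one_pos v 0
  obtain ⟨c, hc⟩ := hcompF S hSne hSbdd
  -- the extension
  refine ⟨p.supSpanSingleton y c hy, ?_, ?_⟩
  · refine lt_iff_le_not_ge.2 ⟨p.left_le_sup _ _, fun Hle => ?_⟩
    replace Hle := LinearPMap.domain_mono.monotone Hle
    rw [LinearPMap.domain_supSpanSingleton, sup_le_iff, span_le, singleton_subset_iff] at Hle
    exact hy Hle.2
  · rintro ⟨z, hz⟩
    rcases mem_sup.1 hz with ⟨x, hx, y', hy', rfl⟩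
    rcases mem_span_singleton.1 hy' with ⟨r, rfl⟩
    rw [LinearPMap.supSpanSingleton_apply_mk _ _ _ _ _ hx]
    rcases lt_trichotomy r 0 with (hr | hr | hr)
    · -- r < 0 : use that s⁻¹ • (p v - Φ(v - s•y)) ≤ c with s = -r
      have hs : (0:ℝ) < -r := by linarith
      have hmem : (-r)⁻¹ • (p ⟨x, hx⟩ - Φ (x - (-r) • y)) ∈ S := ⟨-r, hs, ⟨x, hx⟩, rfl⟩
      have hle := hc.1 hmem
      have := hb_smul_le hsmulF hs.le hle
      rw [smul_smul, mul_inv_cancel₀ hs.ne', one_smul] at this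
      rw [hb_sub_nonneg] at this ⊢
      have hxy : x - (-r) • y = x + r • y := by
        rw [neg_smul, sub_neg_eq_add]
      rw [hxy] at this
      calc (0:F) ≤ (-r) • c - (p ⟨x, hx⟩ - Φ (x + r • y)) := this
        _ = Φ (x + r • y) - (p ⟨x, hx⟩ + r • c) := by
            rw [neg_smul]; abel
    · subst hr
      simp only [zero_smul, add_zero, RingHom.id_apply]
      exact hp ⟨x, hx⟩
    · -- r > 0 : use that c ≤ r⁻¹ • (Φ(x + r•y) - p x)
      have hub : c ≤ r⁻¹ • (Φ (x + r • y) - p ⟨x, hx⟩) := by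
        refine hc.2 ?_
        rintro z ⟨s, hs, v, rfl⟩
        exact key s r hs hr v ⟨x, hx⟩
      have := hb_smul_le hsmulF hr.le hub
      rw [smul_smul, mul_inv_cancel₀ hr.ne', one_smul] at this
      rw [hb_sub_nonneg] at this ⊢
      calc (0:F) ≤ Φ (x + r • y) - p ⟨x, hx⟩ - r • c := this
        _ = Φ (x + r • y) - (p ⟨x, hx⟩ + r • c) := by abel

lemma hb_exists_top (hsmulF : ∀ (c : ℝ) (x : F), 0 ≤ c → 0 ≤ x → 0 ≤ c • x)
    (hcompF : ∀ S : Set F, S.Nonempty → BddAbove S → ∃ b, IsLUB S b)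
    (Φ : E → F)
    (hconv : ∀ x y : E, ∀ t : ℝ, 0 ≤ t → t ≤ 1 →
      Φ ((1 - t) • x + t • y) ≤ (1 - t) • Φ x + t • Φ y)
    (hΦ0 : Φ 0 = 0)
    (p : E →ₗ.[ℝ] F) (hp : ∀ x : p.domain, p x ≤ Φ x) :
    ∃ q ≥ p, q.domain = ⊤ ∧ ∀ x : q.domain, q x ≤ Φ x := by
  set S := { p : E →ₗ.[ℝ] F | ∀ x : p.domain, p x ≤ Φ x }
  have hSc : ∀ c, c ⊆ S → IsChain (· ≤ ·) c → ∀ y ∈ c, ∃ ub ∈ S, ∀ z ∈ c, z ≤ ub := by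
    intro c hcs c_chain z hz
    have cne : c.Nonempty := ⟨z, hz⟩
    have hcd : DirectedOn (· ≤ ·) c := c_chain.directedOn
    refine ⟨LinearPMap.sSup c hcd, ?_, fun _ ↦ LinearPMap.le_sSup hcd⟩
    rintro ⟨x, hx⟩
    have hdir : DirectedOn (· ≤ ·) (LinearPMap.domain '' c) :=
      directedOn_image.2 (hcd.mono LinearPMap.domain_mono.monotone)
    rcases (mem_sSup_of_directed (cne.image _) hdir).1 hx with ⟨_, ⟨f, hfc, rfl⟩, hfx⟩
    have hle : f ≤ LinearPMap.sSup c hcd := LinearPMap.le_sSup _ hfc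
    have heq : f ⟨x, hfx⟩ = (LinearPMap.sSup c hcd) ⟨x, hx⟩ := hle.2 rfl
    have := hcs hfc ⟨x, hfx⟩
    rw [heq] at this
    exact this
  obtain ⟨q, hpq, hqs, hq⟩ := zorn_le_nonempty₀ S hSc p hp
  refine ⟨q, hpq, ?_, hqs⟩
  contrapose! hq
  rcases hb_step hsmulF hcompF Φ hconv hΦ0 q hqs hq with ⟨r, hqr, hr⟩
  exact ⟨r, hr, hqr.le, fun hrq ↦ hqr.ne' <| hrq.antisymm hqr.le⟩

end HBaux

/-- (Topological Hahn–Banach) Let `Φ` be a convex function from a real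
Banach space `E` into an order complete Banach space `F` with `Φ 0 = 0` and `Φ`
continuous at the origin. Any linear operator `T_H` on a subspace `H` with `T_H ≤ Φ`
on `H` extends to a continuous linear operator `T : E → F` with `T ≤ Φ` on `E`. -/
theorem generalized_hahn_banach_extension_continuous
    {E F : Type*}
    [NormedAddCommGroup E] [NormedSpace ℝ E] [CompleteSpace E]
    [NormedAddCommGroup F] [NormedSpace ℝ F] [CompleteSpace F]
    [PartialOrder F] [CovariantClass F F (· + ·) (· ≤ ·)]
    (hsmulF : ∀ (c : ℝ) (x : F), 0 ≤ c → 0 ≤ x → 0 ≤ c • x)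
    (hclosedF : IsClosed {x : F | 0 ≤ x})
    (hgenF : ∀ x : F, ∃ u v : F, 0 ≤ u ∧ 0 ≤ v ∧ x = u - v)
    (hmonoF : ∀ x y : F, 0 ≤ x → x ≤ y → ‖x‖ ≤ ‖y‖)
    (hcompF : ∀ S : Set F, S.Nonempty → BddAbove S → ∃ b, IsLUB S b)
    (Φ : E → F)
    (hconv : ∀ x y : E, ∀ t : ℝ, 0 ≤ t → t ≤ 1 →
      Φ ((1 - t) • x + t • y) ≤ (1 - t) • Φ x + t • Φ y)
    (hΦ0 : Φ 0 = 0) (hcont : ContinuousAt Φ 0)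
    (H : Submodule ℝ E) (T_H : H →ₗ[ℝ] F)
    (hTH : ∀ x : H, T_H x ≤ Φ x) :
    ∃ T : E →L[ℝ] F, (∀ x : H, T x = T_H x) ∧ ∀ x : E, T x ≤ Φ x := by
  rcases hb_exists_top hsmulF hcompF Φ hconv hΦ0 ⟨H, T_H⟩ hTH
    with ⟨⟨g_dom, g⟩, ⟨hHle, hfg⟩, (rfl : g_dom = ⊤), hg⟩
  set T' : E →ₗ[ℝ] F := g.comp (LinearMap.id.codRestrict ⊤ fun _ ↦ trivial) with hT'
  have hT'le : ∀ x : E, T' x ≤ Φ x := fun x ↦ hg ⟨x, trivial⟩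
  have hT'ext : ∀ x : H, T' x = T_H x := fun x ↦ (hfg rfl).symm
  -- continuity bound
  have htd : Filter.Tendsto Φ (nhds 0) (nhds 0) := by
    have := hcont; rwa [ContinuousAt, hΦ0] at this
  obtain ⟨δ, hδpos, hδ⟩ := Metric.tendsto_nhds_nhds.mp htd 1 one_pos
  have hball : ∀ x : E, ‖x‖ < δ → ‖T' x‖ ≤ 3 := by
    intro x hx
    have hnx : ‖(-x : E)‖ < δ := by rwa [norm_neg]
    have hΦx : ‖Φ x‖ < 1 := by
      simpa [dist_eq_norm, hΦ0] using hδ (by simpa [dist_eq_norm] using hx)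
    have hΦnx : ‖Φ (-x)‖ < 1 := by
      simpa [dist_eq_norm, hΦ0] using hδ (by simpa [dist_eq_norm] using hnx)
    have h1 : (0:F) ≤ T' x + Φ (-x) := by
      have : -(T' x) ≤ Φ (-x) := by
        have := hT'le (-x); rwa [map_neg] at this
      have := add_le_add_right this (T' x)
      simpa using this
    have h2 : T' x + Φ (-x) ≤ Φ x + Φ (-x) := by
      have := add_le_add_right (hT'le x) (Φ (-x))
      calc T' x + Φ (-x) = Φ (-x) + T' x := by abel
        _ ≤ Φ (-x) + Φ x := this
        _ = Φ x + Φ (-x) := by abel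
    have h3 : ‖T' x + Φ (-x)‖ ≤ ‖Φ x + Φ (-x)‖ := hmonoF _ _ h1 h2
    calc ‖T' x‖ = ‖T' x + Φ (-x) - Φ (-x)‖ := by rw [add_sub_cancel_right]
      _ ≤ ‖T' x + Φ (-x)‖ + ‖Φ (-x)‖ := norm_sub_le _ _
      _ ≤ ‖Φ x + Φ (-x)‖ + ‖Φ (-x)‖ := by linarith
      _ ≤ ‖Φ x‖ + ‖Φ (-x)‖ + ‖Φ (-x)‖ := by
          have := norm_add_le (Φ x) (Φ (-x)); linarith
      _ ≤ 3 := by linarith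
  have hbound : ∀ x : E, ‖T' x‖ ≤ (6 / δ) * ‖x‖ := by
    intro x
    rcases eq_or_ne x 0 with rfl | hx0
    · simp
    · have hxn : (0:ℝ) < ‖x‖ := norm_pos_iff.mpr hx0
      set r : ℝ := δ / (2 * ‖x‖) with hr
      have hrpos : 0 < r := by positivity
      have hrx : ‖r • x‖ < δ := by
        rw [norm_smul, Real.norm_eq_abs, abs_of_pos hrpos, hr]
        rw [div_mul_eq_mul_div, mul_comm]
        rw [div_lt_iff₀ (by positivity)]
        nlinarith
      have := hball (r • x) hrx
      rw [map_smul, norm_smul, Real.norm_eq_abs, abs_of_pos hrpos, hr] at this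
      rw [div_mul_eq_mul_div, div_le_iff₀ (by positivity)] at this
      rw [div_mul_eq_mul_div, le_div_iff₀ hδpos]
      nlinarith
  refine ⟨T'.mkContinuous (6 / δ) hbound, fun x ↦ ?_, fun x ↦ ?_⟩
  · simpa using hT'ext x
  · simpa using hT'le x
end

section
/- Let Φ be a convex function defined on a real Banach space E taking values in an order complete Banach space F. Then at every point x₀ at which Φ is continuous the subdifferential ∂_{x₀}Φ is nonempty: there exists a continuous linear operator T : E → F such that Φ(x) ≥ Φ(x₀) + T(x - x₀) for all x ∈ E. -/
open Submodule

/-- Vector-valued Hahn–Banach: a linear map dominated by a convex function `g` (with `g 0 = 0`)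
exists, provided the codomain is order complete. -/
theorem exists_linearMap_le_convex
    {E F : Type*} [AddCommGroup E] [Module ℝ E]
    [AddCommGroup F] [Module ℝ F] [PartialOrder F]
    [CovariantClass F F (· + ·) (· ≤ ·)]
    (hsmulF : ∀ (c : ℝ) (x : F), 0 ≤ c → 0 ≤ x → 0 ≤ c • x)
    (hcompF : ∀ S : Set F, S.Nonempty → BddAbove S → ∃ b, IsLUB S b)
    (g : E → F) (hg0 : g 0 = 0)
    (hg : ∀ x y : E, ∀ t : ℝ, 0 ≤ t → t ≤ 1 →
      g ((1 - t) • x + t • y) ≤ (1 - t) • g x + t • g y) :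
    ∃ T : E →ₗ[ℝ] F, ∀ x, T x ≤ g x := by
  have hsm : ∀ (c : ℝ) {x y : F}, 0 ≤ c → x ≤ y → c • x ≤ c • y := by
    intro c x y hc hxy
    have h := hsmulF c (y - x) hc (sub_nonneg.2 hxy)
    rw [smul_sub] at h
    exact sub_nonneg.1 h
  set S : Set (E →ₗ.[ℝ] F) := {f | ∀ x : f.domain, f x ≤ g x} with hSdef
  have hbot : (⟨⊥, 0⟩ : E →ₗ.[ℝ] F) ∈ S := by
    rintro ⟨x, hx⟩
    have hx0 : x = 0 := (Submodule.mem_bot ℝ).1 hx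
    subst hx0
    simp only [LinearPMap.mk_apply, LinearMap.zero_apply, hg0, le_refl]
  have hchain : ∀ c ⊆ S, IsChain (· ≤ ·) c → ∀ y ∈ c, ∃ ub ∈ S, ∀ z ∈ c, z ≤ ub := by
    intro c hcS hc y hy
    have hdir : DirectedOn (· ≤ ·) c := hc.directedOn
    refine ⟨LinearPMap.sSup c hdir, ?_, fun z hz => LinearPMap.le_sSup hdir hz⟩
    rintro ⟨x, hx⟩
    have hne : (LinearPMap.domain '' c).Nonempty := ⟨y.domain, Set.mem_image_of_mem _ hy⟩
    have hdir' : DirectedOn (· ≤ ·) (LinearPMap.domain '' c) := by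
      rintro _ ⟨p, hp, rfl⟩ _ ⟨q, hq, rfl⟩
      obtain ⟨w, hw, hpw, hqw⟩ := hdir p hp q hq
      exact ⟨w.domain, Set.mem_image_of_mem _ hw, hpw.1, hqw.1⟩
    have hx' : x ∈ sSup (LinearPMap.domain '' c) := hx
    obtain ⟨_, ⟨l, hl, rfl⟩, hxl⟩ := (Submodule.mem_sSup_of_directed hne hdir').1 hx'
    have happ := LinearPMap.sSup_apply hdir hl (⟨x, hxl⟩ : l.domain)
    calc (LinearPMap.sSup c hdir) ⟨x, hx⟩ = l ⟨x, hxl⟩ := happ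
      _ ≤ g x := hcS hl ⟨x, hxl⟩
  obtain ⟨f, -, hfS, hfmax⟩ := zorn_le_nonempty₀ S hchain _ hbot
  have hdomtop : f.domain = ⊤ := by
    by_contra hne
    obtain ⟨e, he⟩ : ∃ e, e ∉ f.domain := by
      by_contra h
      push_neg at h
      exact hne (Submodule.eq_top_iff'.2 h)
    set A : Set F := {z | ∃ m : E, ∃ hm : m ∈ f.domain, ∃ s : ℝ, 0 < s ∧
      z = s⁻¹ • (f ⟨m, hm⟩ - g (m - s • e))} with hA
    have key : ∀ (m₁ : E) (hm₁ : m₁ ∈ f.domain) (t : ℝ), 0 < t →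
        ∀ z ∈ A, z ≤ t⁻¹ • (g (m₁ + t • e) - f ⟨m₁, hm₁⟩) := by
      rintro m₁ hm₁ t ht z ⟨m₂, hm₂, s, hs, rfl⟩
      have hst : 0 < s + t := by linarith
      set lam := s / (s + t) with hlam
      have h0 : 0 ≤ lam := by positivity
      have h1 : lam ≤ 1 := by rw [hlam, div_le_one hst]; linarith
      have hpt : (1 - lam) • (m₂ - s • e) + lam • (m₁ + t • e)
          = (t/(s+t)) • m₂ + (s/(s+t)) • m₁ := by
        rw [hlam]; match_scalars <;> field_simp <;> ring
      have hmem : (t/(s+t)) • m₂ + (s/(s+t)) • m₁ ∈ f.domain :=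
        f.domain.add_mem (f.domain.smul_mem _ hm₂) (f.domain.smul_mem _ hm₁)
      have hfw : f ⟨(t/(s+t)) • m₂ + (s/(s+t)) • m₁, hmem⟩
          = (t/(s+t)) • f ⟨m₂, hm₂⟩ + (s/(s+t)) • f ⟨m₁, hm₁⟩ := by
        have : (⟨(t/(s+t)) • m₂ + (s/(s+t)) • m₁, hmem⟩ : f.domain)
            = (t/(s+t)) • (⟨m₂, hm₂⟩ : f.domain) + (s/(s+t)) • (⟨m₁, hm₁⟩ : f.domain) := rfl
        rw [this, f.map_add, f.map_smul, f.map_smul]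
      have hcvx := hg (m₂ - s • e) (m₁ + t • e) lam h0 h1
      rw [hpt] at hcvx
      have hlam1 : 1 - lam = t / (s + t) := by
        rw [hlam]; field_simp; ring
      have hTle : (t/(s+t)) • f ⟨m₂, hm₂⟩ + (s/(s+t)) • f ⟨m₁, hm₁⟩
          ≤ (1 - lam) • g (m₂ - s • e) + lam • g (m₁ + t • e) := by
        rw [← hfw]; exact le_trans (hfS _) hcvx
      rw [hlam1, hlam] at hTle
      have hc : (0:ℝ) ≤ (s+t)/(s*t) := by positivity
      have hmul := hsm ((s+t)/(s*t)) hc hTle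
      rw [smul_add, smul_add, smul_smul, smul_smul, smul_smul, smul_smul] at hmul
      have e1 : (s+t)/(s*t) * (t/(s+t)) = s⁻¹ := by
        field_simp
      have e2 : (s+t)/(s*t) * (s/(s+t)) = t⁻¹ := by
        field_simp
      rw [e1, e2] at hmul
      rw [smul_sub, smul_sub]
      refine sub_le_sub_iff.2 ?_
      calc s⁻¹ • f ⟨m₂, hm₂⟩ + t⁻¹ • f ⟨m₁, hm₁⟩
          ≤ s⁻¹ • g (m₂ - s • e) + t⁻¹ • g (m₁ + t • e) := hmul
        _ = t⁻¹ • g (m₁ + t • e) + s⁻¹ • g (m₂ - s • e) := by rw [add_comm]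
    have hAne : A.Nonempty := ⟨_, 0, f.domain.zero_mem, 1, one_pos, rfl⟩
    have hAbdd : BddAbove A :=
      ⟨_, fun z hz => key 0 f.domain.zero_mem 1 one_pos z hz⟩
    obtain ⟨r, hr⟩ := hcompF A hAne hAbdd
    have hub : ∀ (m : E) (hm : m ∈ f.domain) (s : ℝ), 0 < s →
        s⁻¹ • (f ⟨m, hm⟩ - g (m - s • e)) ≤ r :=
      fun m hm s hs => hr.1 ⟨m, hm, s, hs, rfl⟩
    have hlb : ∀ (m : E) (hm : m ∈ f.domain) (t : ℝ), 0 < t →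
        r ≤ t⁻¹ • (g (m + t • e) - f ⟨m, hm⟩) :=
      fun m hm t ht => hr.2 (fun z hz => key m hm t ht z hz)
    have hdom' : ∀ (m : E) (hm : m ∈ f.domain) (c : ℝ),
        f ⟨m, hm⟩ + c • r ≤ g (m + c • e) := by
      intro m hm c
      rcases lt_trichotomy c 0 with hcneg | rfl | hcpos
      · have h1 := hub m hm (-c) (by linarith)
        have h2 := hsm (-c) (by linarith) h1
        rw [smul_smul, mul_inv_cancel₀ (by linarith : (-c) ≠ (0:ℝ)), one_smul] at h2
        have hpt : m - (-c) • e = m + c • e := by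
          rw [neg_smul, sub_neg_eq_add]
        rw [hpt, neg_smul] at h2
        -- h2 : f ⟨m,hm⟩ - g (m + c • e) ≤ -(c • r)
        have h3 := add_le_add_left h2 (g (m + c • e) + c • r)
        have l1 : f ⟨m, hm⟩ - g (m + c • e) + (g (m + c • e) + c • r)
            = f ⟨m, hm⟩ + c • r := by abel
        have l2 : -(c • r) + (g (m + c • e) + c • r) = g (m + c • e) := by abel
        rw [l1, l2] at h3
        exact h3
      · simpa using hfS ⟨m, hm⟩
      · have h1 := hlb m hm c hcpos
        have h2 := hsm c hcpos.le h1
        rw [smul_smul, mul_inv_cancel₀ hcpos.ne', one_smul] at h2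
        -- h2 : c • r ≤ g (m + c • e) - f ⟨m,hm⟩
        have h3 := add_le_add_right h2 (f ⟨m, hm⟩)
        have l1 : f ⟨m, hm⟩ + (g (m + c • e) - f ⟨m, hm⟩) = g (m + c • e) := by abel
        rw [l1] at h3
        exact h3
    have hf'S : f.supSpanSingleton e r he ∈ S := by
      rintro ⟨x, hx⟩
      have hx' : x ∈ f.domain ⊔ (ℝ ∙ e) := by
        rwa [LinearPMap.domain_supSpanSingleton] at hx
      obtain ⟨m, hm, y, hy, rfl⟩ := Submodule.mem_sup.1 hx'
      obtain ⟨c, rfl⟩ := Submodule.mem_span_singleton.1 hy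
      have happ := f.supSpanSingleton_apply_mk e r he m hm c
      calc f.supSpanSingleton e r he ⟨m + c • e, hx⟩
          = f ⟨m, hm⟩ + c • r := happ
        _ ≤ g (m + c • e) := hdom' m hm c
    have hle : f ≤ f.supSpanSingleton e r he :=
      f.left_le_sup _ _
    have hge := hfmax hf'S hle
    have hedom : e ∈ f.domain := by
      have : e ∈ (f.supSpanSingleton e r he).domain := by
        rw [LinearPMap.domain_supSpanSingleton]
        exact Submodule.mem_sup_right (Submodule.mem_span_singleton_self e)
      exact hge.1 this
    exact he hedom
  have htop : ∀ x : E, x ∈ f.domain := fun x => hdomtop ▸ Submodule.mem_top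
  refine ⟨{ toFun := fun x => f ⟨x, htop x⟩
            map_add' := fun x y => f.map_add ⟨x, htop x⟩ ⟨y, htop y⟩
            map_smul' := fun c x => f.map_smul c ⟨x, htop x⟩ }, ?_⟩
  exact fun x => hfS ⟨x, htop x⟩

/-- A convex function `Φ` from a Banach space `E` into an order complete
Banach space `F` has a nonempty subdifferential at every point of continuity. -/
theorem subdifferential_nonempty_at_continuity_point
    {E F : Type*}
    [NormedAddCommGroup E] [NormedSpace ℝ E] [CompleteSpace E]
    [NormedAddCommGroup F] [NormedSpace ℝ F] [CompleteSpace F]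
    [PartialOrder F] [CovariantClass F F (· + ·) (· ≤ ·)]
    (hsmulF : ∀ (c : ℝ) (x : F), 0 ≤ c → 0 ≤ x → 0 ≤ c • x)
    (hclosedF : IsClosed {x : F | 0 ≤ x})
    (hgenF : ∀ x : F, ∃ u v : F, 0 ≤ u ∧ 0 ≤ v ∧ x = u - v)
    (hmonoF : ∀ x y : F, 0 ≤ x → x ≤ y → ‖x‖ ≤ ‖y‖)
    (hcompF : ∀ S : Set F, S.Nonempty → BddAbove S → ∃ b, IsLUB S b)
    (Φ : E → F)
    (hconv : ∀ x y : E, ∀ t : ℝ, 0 ≤ t → t ≤ 1 →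
      Φ ((1 - t) • x + t • y) ≤ (1 - t) • Φ x + t • Φ y)
    (x₀ : E) (hcont : ContinuousAt Φ x₀) :
    ∃ T : E →L[ℝ] F, ∀ x : E, Φ x₀ + T (x - x₀) ≤ Φ x := by
  set g : E → F := fun h => Φ (x₀ + h) - Φ x₀ with hgdef
  have hg0 : g 0 = 0 := by simp [hgdef]
  have hgconv : ∀ x y : E, ∀ t : ℝ, 0 ≤ t → t ≤ 1 →
      g ((1 - t) • x + t • y) ≤ (1 - t) • g x + t • g y := by
    intro x y t ht0 ht1
    have hpt : x₀ + ((1 - t) • x + t • y) = (1 - t) • (x₀ + x) + t • (x₀ + y) := by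
      match_scalars <;> ring
    have h := hconv (x₀ + x) (x₀ + y) t ht0 ht1
    rw [← hpt] at h
    have hr : (1 - t) • g x + t • g y
        = (1 - t) • Φ (x₀ + x) + t • Φ (x₀ + y) - Φ x₀ := by
      simp only [hgdef]
      match_scalars <;> ring
    rw [hgdef]
    simp only []
    rw [hr]
    exact sub_le_sub_right h _
  obtain ⟨T, hT⟩ := exists_linearMap_le_convex hsmulF hcompF g hg0 hgconv
  -- continuity bound
  obtain ⟨δ, hδ, hδball⟩ : ∃ δ > 0, ∀ h : E, ‖h‖ < δ → ‖g h‖ < 1 := by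
    rw [Metric.continuousAt_iff] at hcont
    obtain ⟨δ, hδ, hd⟩ := hcont 1 one_pos
    refine ⟨δ, hδ, fun h hh => ?_⟩
    have := hd (x := x₀ + h) (by simpa [dist_eq_norm] using hh)
    simpa [hgdef, dist_eq_norm] using this
  -- pointwise norm bound on the ball
  have hball : ∀ u : E, ‖u‖ < δ → ‖T u‖ ≤ 3 := by
    intro u hu
    have hnu : ‖-u‖ < δ := by rwa [norm_neg]
    have h1 : (0:F) ≤ T u + g (-u) := by
      have hTn : T (-u) ≤ g (-u) := hT (-u)
      have : -g (-u) ≤ T u := by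
        have := neg_le_neg_iff.2 hTn
        rwa [map_neg, neg_neg] at this
      have h := add_le_add_left this (g (-u))
      rwa [neg_add_cancel] at h
    have h2 : T u + g (-u) ≤ g u + g (-u) := add_le_add_left (hT u) _
    have h3 := hmonoF _ _ h1 h2
    have h4 : ‖T u‖ ≤ ‖T u + g (-u)‖ + ‖g (-u)‖ := by
      calc ‖T u‖ = ‖T u + g (-u) - g (-u)‖ := by rw [add_sub_cancel_right]
        _ ≤ ‖T u + g (-u)‖ + ‖g (-u)‖ := norm_sub_le _ _
    have h5 : ‖g u + g (-u)‖ ≤ ‖g u‖ + ‖g (-u)‖ := norm_add_le _ _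
    have hgu := (hδball u hu).le
    have hgnu := (hδball (-u) hnu).le
    linarith
  -- global bound
  have hbound : ∀ x : E, ‖T x‖ ≤ (6 / δ) * ‖x‖ := by
    intro x
    rcases eq_or_ne x 0 with rfl | hx
    · simp
    · have hxpos : 0 < ‖x‖ := norm_pos_iff.2 hx
      set u : E := (δ / (2 * ‖x‖)) • x with hu
      have hnu : ‖u‖ < δ := by
        rw [hu, norm_smul, Real.norm_eq_abs, abs_of_pos (by positivity)]
        rw [div_mul_eq_mul_div, mul_comm]
        rw [div_lt_iff₀ (by positivity)]
        nlinarith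
      have hxu : x = (2 * ‖x‖ / δ) • u := by
        rw [hu, smul_smul]
        rw [show 2 * ‖x‖ / δ * (δ / (2 * ‖x‖)) = 1 by field_simp]
        rw [one_smul]
      calc ‖T x‖ = ‖(2 * ‖x‖ / δ) • T u‖ := by conv_lhs => rw [hxu, map_smul]
        _ = (2 * ‖x‖ / δ) * ‖T u‖ := by
            rw [norm_smul, Real.norm_eq_abs, abs_of_pos (by positivity)]
        _ ≤ (2 * ‖x‖ / δ) * 3 := by
            exact mul_le_mul_of_nonneg_left (hball u hnu) (by positivity)
        _ = (6 / δ) * ‖x‖ := by field_simp; ring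
  refine ⟨T.mkContinuous (6 / δ) hbound, ?_⟩
  intro x
  have h := hT (x - x₀)
  have hx : g (x - x₀) = Φ x - Φ x₀ := by
    simp [hgdef]
  rw [hx] at h
  have := add_le_add_right h (Φ x₀)
  rwa [add_sub_cancel] at this
end

section
/- Let E and F be ordered Banach spaces, let Φ : E → F be an isotone function (x ≤ y implies Φ(x) ≤ Φ(y)), and let T : E → F be a linear operator such that T(x) ≤ Φ(x) for all x ∈ E. Then T is a positive operator (T(x) ≥ 0 for all x ≥ 0), and consequently T is continuous. -/
open Filter Topology Metric

theorem my_sum_nonneg {E : Type*} [AddCommMonoid E] [PartialOrder E]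
    [CovariantClass E E (· + ·) (· ≤ ·)] {ι : Type*} (s : Finset ι) (f : ι → E)
    (h : ∀ i ∈ s, 0 ≤ f i) : 0 ≤ ∑ i ∈ s, f i := by
  induction s using Finset.cons_induction with
  | empty => simp
  | cons a s ha ih =>
    rw [Finset.sum_cons]
    have h1 : (0:E) ≤ f a := h a (Finset.mem_cons_self a s)
    have h2 : (0:E) ≤ ∑ i ∈ s, f i := ih fun i hi => h i (Finset.mem_cons_of_mem hi)
    calc (0:E) = 0 + 0 := by simp
      _ ≤ f a + ∑ i ∈ s, f i := by
        have := add_le_add_left h2 (f a)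
        have h3 : (0:E) + 0 ≤ f a + 0 := by
          simpa using add_le_add_right h1 (0:E)
        calc (0:E) + 0 ≤ f a + 0 := h3
          _ ≤ f a + ∑ i ∈ s, f i := add_le_add_right h2 (f a)

theorem my_ando_decomposition {E : Type*} [NormedAddCommGroup E] [NormedSpace ℝ E]
    [CompleteSpace E]
    [PartialOrder E] [CovariantClass E E (· + ·) (· ≤ ·)]
    (hsmul : ∀ (c : ℝ) (x : E), 0 ≤ c → 0 ≤ x → 0 ≤ c • x)
    (hclosed : IsClosed {x : E | 0 ≤ x})
    (hgen : ∀ x : E, ∃ u v : E, 0 ≤ u ∧ 0 ≤ v ∧ x = u - v) :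
    ∃ C : ℝ, 0 < C ∧ ∀ x : E, ∃ u v : E, 0 ≤ u ∧ 0 ≤ v ∧ x = u - v ∧
      ‖u‖ + ‖v‖ ≤ C * ‖x‖ := by
  classical
  set A : ℝ → Set E := fun c => {w | ∃ u v : E, 0 ≤ u ∧ 0 ≤ v ∧ ‖u‖ + ‖v‖ ≤ c ∧ w = u - v}
    with hA
  -- convexity of each A c
  have hconv : ∀ c : ℝ, Convex ℝ (A c) := by
    intro c w₁ hw₁ w₂ hw₂ a b ha hb hab
    obtain ⟨u₁, v₁, hu₁, hv₁, hn₁, rfl⟩ := hw₁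
    obtain ⟨u₂, v₂, hu₂, hv₂, hn₂, rfl⟩ := hw₂
    refine ⟨a • u₁ + b • u₂, a • v₁ + b • v₂,
      add_nonneg (hsmul a u₁ ha hu₁) (hsmul b u₂ hb hu₂),
      add_nonneg (hsmul a v₁ ha hv₁) (hsmul b v₂ hb hv₂), ?_, by module⟩
    calc ‖a • u₁ + b • u₂‖ + ‖a • v₁ + b • v₂‖
        ≤ (‖a • u₁‖ + ‖b • u₂‖) + (‖a • v₁‖ + ‖b • v₂‖) :=
          add_le_add (norm_add_le _ _) (norm_add_le _ _)
      _ = a * ‖u₁‖ + b * ‖u₂‖ + (a * ‖v₁‖ + b * ‖v₂‖) := by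
          simp [norm_smul, Real.norm_of_nonneg ha, Real.norm_of_nonneg hb]
      _ ≤ c := by
          have habc : a * c + b * c = c := by rw [← add_mul, hab, one_mul]
          have h1 := mul_le_mul_of_nonneg_left hn₁ ha
          have h2 := mul_le_mul_of_nonneg_left hn₂ hb
          nlinarith
  -- union of closures covers E
  have hcover : ⋃ n : ℕ, closure (A n) = Set.univ := by
    rw [Set.eq_univ_iff_forall]
    intro x
    obtain ⟨u, v, hu, hv, rfl⟩ := hgen x
    refine Set.mem_iUnion.2 ⟨⌈‖u‖ + ‖v‖⌉₊, subset_closure ?_⟩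
    exact ⟨u, v, hu, hv, by exact_mod_cast Nat.le_ceil _, rfl⟩
  obtain ⟨n, x₀, hx₀⟩ := nonempty_interior_of_iUnion_of_closed
    (fun n : ℕ => isClosed_closure (s := A n)) hcover
  obtain ⟨r, hr, hball⟩ := Metric.mem_nhds_iff.1 (mem_interior_iff_mem_nhds.1 hx₀)
  -- A is symmetric
  have hsymm : ∀ c : ℝ, ∀ w ∈ A c, -w ∈ A c := by
    rintro c w ⟨u, v, hu, hv, hn, rfl⟩
    exact ⟨v, u, hv, hu, by linarith, by abel⟩
  have hsymm' : ∀ w ∈ closure (A n), -w ∈ closure (A n) := by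
    intro w hw
    have h1 : -w ∈ closure ((Homeomorph.neg E) '' (A n)) := by
      rw [← (Homeomorph.neg E).image_closure]
      exact ⟨w, hw, rfl⟩
    refine closure_mono ?_ h1
    rintro z ⟨a, ha, rfl⟩
    exact hsymm n a ha
  -- ball 0 r ⊆ closure (A n)
  have hball0 : ∀ y : E, ‖y‖ < r → y ∈ closure (A n) := by
    intro y hy
    have h1 : y + x₀ ∈ closure (A n) := by
      apply hball; simp [Metric.mem_ball, dist_eq_norm, hy]
    have h2 : y - x₀ ∈ closure (A n) := by
      have : x₀ - y ∈ closure (A n) := by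
        apply hball; simp [Metric.mem_ball, dist_eq_norm]
        simpa [norm_sub_rev] using hy
      have := hsymm' _ this
      simpa using this
    have := (hconv n).closure (a := (1/2 : ℝ)) (b := (1/2 : ℝ)) h1 h2
      (by norm_num) (by norm_num) (by norm_num)
    have heq : (1/2 : ℝ) • (y + x₀) + (1/2 : ℝ) • (y - x₀) = y := by
      rw [smul_add, smul_sub]
      module
    rwa [heq] at this
  set K : ℝ := 2 * (n + 1) / r with hK
  have hKpos : 0 < K := by positivity
  -- approximation step
  have approx : ∀ y : E, ∀ δ : ℝ, 0 < δ → ∃ u v : E, 0 ≤ u ∧ 0 ≤ v ∧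
      ‖u‖ + ‖v‖ ≤ K * ‖y‖ ∧ ‖y - u + v‖ < δ := by
    intro y δ hδ
    rcases eq_or_ne y 0 with rfl | hy0
    · exact ⟨0, 0, le_refl _, le_refl _, by simp, by simpa using hδ⟩
    have hyn : 0 < ‖y‖ := norm_pos_iff.2 hy0
    set s : ℝ := r / (2 * ‖y‖) with hs
    have hspos : 0 < s := by positivity
    have hz : ‖s • y‖ < r := by
      rw [norm_smul, Real.norm_of_nonneg hspos.le, hs]
      rw [div_mul_eq_mul_div, mul_comm]
      rw [div_lt_iff₀ (by positivity)]
      nlinarith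
    have hzA := hball0 (s • y) hz
    rw [Metric.mem_closure_iff] at hzA
    obtain ⟨a, ha, hda⟩ := hzA (s * δ) (by positivity)
    obtain ⟨u, v, hu, hv, hn', rfl⟩ := ha
    refine ⟨s⁻¹ • u, s⁻¹ • v, hsmul _ _ (by positivity) hu, hsmul _ _ (by positivity) hv,
      ?_, ?_⟩
    · rw [norm_smul, norm_smul, Real.norm_of_nonneg (by positivity)]
      rw [← mul_add]
      have h1 : s⁻¹ * (‖u‖ + ‖v‖) ≤ s⁻¹ * n := by
        apply mul_le_mul_of_nonneg_left hn' (by positivity)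
      have h2 : s⁻¹ * n ≤ K * ‖y‖ := by
        rw [hK, hs]
        rw [inv_div]
        rw [div_mul_eq_mul_div, div_le_iff₀ hr]
        rw [div_mul_eq_mul_div, div_mul_eq_mul_div, le_div_iff₀ (by positivity)]
        ring_nf
        nlinarith
      linarith
    · have : y - s⁻¹ • u + s⁻¹ • v = s⁻¹ • (s • y - (u - v)) := by
        rw [smul_sub, smul_smul, inv_mul_cancel₀ hspos.ne', one_smul, smul_sub]
        abel
      rw [this, norm_smul, Real.norm_of_nonneg (by positivity)]
      rw [dist_eq_norm] at hda
      calc s⁻¹ * ‖s • y - (u - v)‖ < s⁻¹ * (s * δ) := by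
            apply mul_lt_mul_of_pos_left hda (by positivity)
        _ = δ := by field_simp
  -- iterate
  refine ⟨4 * K, by positivity, ?_⟩
  intro x
  rcases eq_or_ne x 0 with rfl | hx0
  · exact ⟨0, 0, le_refl _, le_refl _, by simp, by simp⟩
  have hxn : 0 < ‖x‖ := norm_pos_iff.2 hx0
  choose U V hU hV hUV hres using approx
  have hδ : ∀ k : ℕ, (0:ℝ) < (1/2)^(k+1) * ‖x‖ := by
    intro k; positivity
  set y : ℕ → E := fun k => Nat.rec x
    (fun k yk => yk - U yk _ (hδ k) + V yk _ (hδ k)) k with hy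
  have hystep : ∀ k : ℕ, y (k+1) = y k - U (y k) _ (hδ k) + V (y k) _ (hδ k) := by
    intro k; rfl
  set u : ℕ → E := fun k => U (y k) _ (hδ k) with hu
  set v : ℕ → E := fun k => V (y k) _ (hδ k) with hv
  have hybound : ∀ k : ℕ, ‖y k‖ ≤ (1/2)^k * ‖x‖ := by
    intro k
    induction k with
    | zero => simp [show y 0 = x from rfl]
    | succ k ih =>
      have := hres (y k) _ (hδ k)
      rw [hystep]
      exact le_of_lt this
  have huvbound : ∀ k : ℕ, ‖u k‖ + ‖v k‖ ≤ K * ((1/2)^k * ‖x‖) := by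
    intro k
    have h1 := hUV (y k) _ (hδ k)
    have h2 : K * ‖y k‖ ≤ K * ((1/2)^k * ‖x‖) :=
      mul_le_mul_of_nonneg_left (hybound k) hKpos.le
    exact h1.trans h2
  have hgeo : Summable (fun k : ℕ => K * ((1/2:ℝ)^k * ‖x‖)) :=
    ((summable_geometric_of_lt_one (by norm_num) (by norm_num)).mul_right _).mul_left _
  have hun : Summable (fun k => ‖u k‖) :=
    Summable.of_nonneg_of_le (fun k => norm_nonneg _)
      (fun k => le_trans (le_add_of_nonneg_right (norm_nonneg _)) (huvbound k)) hgeo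
  have hvn : Summable (fun k => ‖v k‖) :=
    Summable.of_nonneg_of_le (fun k => norm_nonneg _)
      (fun k => le_trans (le_add_of_nonneg_left (norm_nonneg _)) (huvbound k)) hgeo
  have husum : Summable u := hun.of_norm
  have hvsum : Summable v := hvn.of_norm
  have htsum : ∑' k : ℕ, K * ((1/2:ℝ)^k * ‖x‖) = 2 * K * ‖x‖ := by
    rw [tsum_mul_left, tsum_mul_right, tsum_geometric_of_lt_one (by norm_num) (by norm_num)]
    ring
  have hnormu : ‖∑' k, u k‖ ≤ 2 * K * ‖x‖ := by
    calc ‖∑' k, u k‖ ≤ ∑' k, ‖u k‖ := norm_tsum_le_tsum_norm hun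
      _ ≤ ∑' k : ℕ, K * ((1/2:ℝ)^k * ‖x‖) :=
          Summable.tsum_le_tsum (fun k =>
            le_trans (le_add_of_nonneg_right (norm_nonneg _)) (huvbound k)) hun hgeo
      _ = 2 * K * ‖x‖ := htsum
  have hnormv : ‖∑' k, v k‖ ≤ 2 * K * ‖x‖ := by
    calc ‖∑' k, v k‖ ≤ ∑' k, ‖v k‖ := norm_tsum_le_tsum_norm hvn
      _ ≤ ∑' k : ℕ, K * ((1/2:ℝ)^k * ‖x‖) :=
          Summable.tsum_le_tsum (fun k =>
            le_trans (le_add_of_nonneg_left (norm_nonneg _)) (huvbound k)) hvn hgeo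
      _ = 2 * K * ‖x‖ := htsum
  refine ⟨∑' k, u k, ∑' k, v k, ?_, ?_, ?_, by linarith⟩
  · -- positivity of tsum
    apply hclosed.mem_of_tendsto husum.hasSum.tendsto_sum_nat
    filter_upwards with m
    refine my_sum_nonneg _ _ fun k _ => ?_
    exact hU _ _ _
  · apply hclosed.mem_of_tendsto hvsum.hasSum.tendsto_sum_nat
    filter_upwards with m
    refine my_sum_nonneg _ _ fun k _ => ?_
    exact hV _ _ _
  · -- x = sum u - sum v
    have hpartial : ∀ m : ℕ, ∑ k ∈ Finset.range m, (u k - v k) = x - y m := by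
      intro m
      induction m with
      | zero => simp [show y 0 = x from rfl]
      | succ m ih =>
        rw [Finset.sum_range_succ, ih, hystep]
        abel
    have hylim : Tendsto y atTop (nhds 0) := by
      apply squeeze_zero_norm hybound
      have h := (tendsto_pow_atTop_nhds_zero_of_lt_one (by norm_num : (0:ℝ) ≤ 1/2)
        (by norm_num)).mul_const ‖x‖
      simpa using h
    have h1 : Tendsto (fun m => ∑ k ∈ Finset.range m, (u k - v k)) atTop
        (nhds ((∑' k, u k) - ∑' k, v k)) :=
      (husum.hasSum.sub hvsum.hasSum).tendsto_sum_nat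
    have h2 : Tendsto (fun m => x - y m) atTop (nhds (x - 0)) :=
      tendsto_const_nhds.sub hylim
    have heq := tendsto_nhds_unique h1 (by simpa only [hpartial] using h2)
    rw [heq]
    simp


/-- If `Φ : E → F` is an isotone function between ordered Banach spaces
and `T : E → F` is a linear operator with `T ≤ Φ`, then `T` is positive, and consequently
continuous. -/
theorem linear_dominated_by_isotone_is_positive_and_continuous
    {E F : Type*}
    [NormedAddCommGroup E] [NormedSpace ℝ E] [CompleteSpace E]
    [PartialOrder E] [CovariantClass E E (· + ·) (· ≤ ·)]
    (hsmulE : ∀ (c : ℝ) (x : E), 0 ≤ c → 0 ≤ x → 0 ≤ c • x)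
    (hclosedE : IsClosed {x : E | 0 ≤ x})
    (hgenE : ∀ x : E, ∃ u v : E, 0 ≤ u ∧ 0 ≤ v ∧ x = u - v)
    (hmonoE : ∀ x y : E, 0 ≤ x → x ≤ y → ‖x‖ ≤ ‖y‖)
    [NormedAddCommGroup F] [NormedSpace ℝ F] [CompleteSpace F]
    [PartialOrder F] [CovariantClass F F (· + ·) (· ≤ ·)]
    (hsmulF : ∀ (c : ℝ) (x : F), 0 ≤ c → 0 ≤ x → 0 ≤ c • x)
    (hclosedF : IsClosed {x : F | 0 ≤ x})
    (hgenF : ∀ x : F, ∃ u v : F, 0 ≤ u ∧ 0 ≤ v ∧ x = u - v)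
    (hmonoF : ∀ x y : F, 0 ≤ x → x ≤ y → ‖x‖ ≤ ‖y‖)
    (Φ : E → F) (hiso : ∀ x y : E, x ≤ y → Φ x ≤ Φ y)
    (T : E →ₗ[ℝ] F) (hT : ∀ x : E, T x ≤ Φ x) :
    (∀ x : E, 0 ≤ x → 0 ≤ T x) ∧ Continuous T := by
  classical
  -- Part 1 : positivity
  have hpos : ∀ x : E, 0 ≤ x → 0 ≤ T x := by
    intro x hx
    have key : ∀ n : ℕ, 0 ≤ (1/((n:ℝ)+1)) • Φ 0 + T x := by
      intro n
      have h1 : (0:E) ≤ ((n:ℝ)+1) • x := hsmulE _ _ (by positivity) hx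
      have h2 : (-(((n:ℝ)+1) • x)) ≤ 0 := by
        have := add_le_add_left h1 (-(((n:ℝ)+1) • x))
        simpa using this
      have h3 : T (-(((n:ℝ)+1) • x)) ≤ Φ 0 := (hT _).trans (hiso _ 0 h2)
      have h4 : -(((n:ℝ)+1) • T x) ≤ Φ 0 := by
        have : T (-(((n:ℝ)+1) • x)) = -(((n:ℝ)+1) • T x) := by
          rw [map_neg, map_smul]
        rwa [this] at h3
      have h5 : (0:F) ≤ Φ 0 + ((n:ℝ)+1) • T x := by
        have := add_le_add_left h4 (((n:ℝ)+1) • T x)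
        simpa using this
      have h6 := hsmulF (1/((n:ℝ)+1)) _ (by positivity) h5
      have h7 : (1/((n:ℝ)+1)) • (Φ 0 + ((n:ℝ)+1) • T x)
          = (1/((n:ℝ)+1)) • Φ 0 + T x := by
        rw [smul_add, smul_smul]
        congr 1
        rw [show (1/((n:ℝ)+1)) * (((n:ℝ)+1)) = 1 by field_simp, one_smul]
      rwa [h7] at h6
    have hlim : Filter.Tendsto (fun n : ℕ => (1/((n:ℝ)+1)) • Φ 0 + T x)
        Filter.atTop (nhds (T x)) := by
      have h0 : Filter.Tendsto (fun n : ℕ => (1/((n:ℝ)+1))) Filter.atTop (nhds 0) :=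
        tendsto_one_div_add_atTop_nhds_zero_nat
      have := (h0.smul_const (Φ 0)).add (tendsto_const_nhds (x := T x))
      simpa using this
    exact hclosedF.mem_of_tendsto hlim (Filter.Eventually.of_forall key)
  refine ⟨hpos, ?_⟩
  -- Part 2 : boundedness on the cone
  have hconebound : ∃ M : ℝ, 0 < M ∧ ∀ x : E, 0 ≤ x → ‖T x‖ ≤ M * ‖x‖ := by
    by_contra hcon
    push_neg at hcon
    have hcon' : ∀ M : ℝ, 0 < M → ∃ x : E, 0 ≤ x ∧ M * ‖x‖ < ‖T x‖ := by
      intro M hM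
      obtain ⟨x, hx, hlt⟩ := hcon M hM
      exact ⟨x, hx, hlt⟩
    have hseq : ∀ k : ℕ, ∃ x : E, 0 ≤ x ∧ ‖x‖ = (1/2:ℝ)^k ∧ (k:ℝ) < ‖T x‖ := by
      intro k
      obtain ⟨z, hz, hzlt⟩ := hcon' (((k:ℝ)+1) * 2^k) (by positivity)
      have hz0 : z ≠ 0 := by
        rintro rfl
        simp at hzlt
      have hzn : 0 < ‖z‖ := norm_pos_iff.2 hz0
      set c : ℝ := (1/2)^k / ‖z‖ with hc
      have hcpos : 0 < c := by positivity
      refine ⟨c • z, hsmulE _ _ hcpos.le hz, ?_, ?_⟩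
      · rw [norm_smul, Real.norm_of_nonneg hcpos.le, hc]
        field_simp
      · rw [map_smul, norm_smul, Real.norm_of_nonneg hcpos.le, hc]
        rw [div_mul_eq_mul_div, lt_div_iff₀ hzn]
        calc (k:ℝ) * ‖z‖ ≤ ((k:ℝ)+1) * 2^k * ‖z‖ * (1/2)^k := by
              have : ((k:ℝ)+1) * 2^k * (1/2)^k = (k:ℝ)+1 := by
                rw [mul_assoc, ← mul_pow]
                norm_num
              calc (k:ℝ) * ‖z‖ ≤ ((k:ℝ)+1) * ‖z‖ := by nlinarith
                _ = ((k:ℝ)+1) * 2^k * ‖z‖ * (1/2)^k := by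
                    rw [mul_assoc, mul_comm ‖z‖ ((1/2:ℝ)^k), ← mul_assoc, this]
          _ < ‖T z‖ * (1/2)^k := by
              have hp : (0:ℝ) < (1/2:ℝ)^k := by positivity
              exact mul_lt_mul_of_pos_right hzlt hp
          _ = (1/2)^k * ‖T z‖ := by ring
    choose xs hxs0 hxsn hxsT using hseq
    have hxn : Summable (fun k => ‖xs k‖) := by
      simp only [hxsn]
      exact summable_geometric_of_lt_one (by norm_num) (by norm_num)
    have hxsum : Summable xs := hxn.of_norm
    set w : E := ∑' k, xs k with hw
    have hle : ∀ k : ℕ, xs k ≤ w := by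
      intro k
      have htend : Filter.Tendsto
          (fun m => (∑ j ∈ Finset.range m, xs j) - xs k) Filter.atTop
          (nhds (w - xs k)) :=
        hxsum.hasSum.tendsto_sum_nat.sub tendsto_const_nhds
      have hmem : ∀ m : ℕ, k < m →
          (∑ j ∈ Finset.range m, xs j) - xs k ∈ {x : E | 0 ≤ x} := by
        intro m hm
        have hkm : k ∈ Finset.range m := Finset.mem_range.2 hm
        have := Finset.add_sum_erase (Finset.range m) xs hkm
        have heq : (∑ j ∈ Finset.range m, xs j) - xs k
            = ∑ j ∈ (Finset.range m).erase k, xs j := by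
          rw [← this]; abel
        rw [Set.mem_setOf_eq, heq]
        exact my_sum_nonneg _ _ fun j _ => hxs0 j
      have h0 : w - xs k ∈ {x : E | 0 ≤ x} := by
        apply hclosedE.mem_of_tendsto htend
        filter_upwards [Filter.eventually_gt_atTop k] with m hm
        exact hmem m hm
      have : (0:E) ≤ w - xs k := h0
      have := add_le_add_left this (xs k)
      simpa using this
    have hTbound : ∀ k : ℕ, (k:ℝ) < ‖T w‖ := by
      intro k
      have h1 : (0:F) ≤ T (xs k) := hpos _ (hxs0 k)
      have h2 : T (xs k) ≤ T w := by
        have h3 : (0:E) ≤ w - xs k := by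
          have := add_le_add_right (hle k) (-(xs k))
          simpa [sub_eq_add_neg] using this
        have h4 : (0:F) ≤ T (w - xs k) := hpos _ h3
        rw [map_sub] at h4
        have := add_le_add_right h4 (T (xs k))
        simpa using this
      have := hmonoF _ _ h1 h2
      exact lt_of_lt_of_le (hxsT k) this
    obtain ⟨k, hk⟩ := exists_nat_gt ‖T w‖
    exact absurd (hTbound k) (not_lt.2 hk.le)
  obtain ⟨M, hM, hMb⟩ := hconebound
  obtain ⟨C, hC, hCd⟩ := my_ando_decomposition hsmulE hclosedE hgenE
  apply AddMonoidHomClass.continuous_of_bound T (M * C)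
  intro x
  obtain ⟨u, v, hu, hv, rfl, hnorm⟩ := hCd x
  calc ‖T (u - v)‖ = ‖T u - T v‖ := by rw [map_sub]
    _ ≤ ‖T u‖ + ‖T v‖ := norm_sub_le _ _
    _ ≤ M * ‖u‖ + M * ‖v‖ := add_le_add (hMb u hu) (hMb v hv)
    _ = M * (‖u‖ + ‖v‖) := by ring
    _ ≤ M * (C * ‖u - v‖) := mul_le_mul_of_nonneg_left hnorm hM.le
    _ = M * C * ‖u - v‖ := by ring
end

section
/- Let E be an ordered real vector space with positive cone E₊, let F be an order complete vector space, let H ⊆ E be a vector subspace and T₁ : H → F a linear operator. If there exists a convex function Φ : E₊ → F such that T₁(h) ≤ Φ(x) for all pairs (h, x) ∈ H × E₊ with h ≤ x, then T₁ admits a positive linear extension T : E → F (T linear, T|_H = T₁, T(x) ≥ 0 for all x ∈ E₊) such that T(x) ≤ Φ(x) for all x ∈ E₊. -/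
open Submodule

/-- smul monotonicity from cone condition. -/
theorem aux_smul_le {G : Type*} [AddCommGroup G] [Module ℝ G] [PartialOrder G]
    [CovariantClass G G (· + ·) (· ≤ ·)]
    (hsmul : ∀ (c : ℝ) (x : G), 0 ≤ c → 0 ≤ x → 0 ≤ c • x)
    {c : ℝ} (hc : 0 ≤ c) {a b : G} (hab : a ≤ b) : c • a ≤ c • b := by
  have := hsmul c (b - a) hc (sub_nonneg.2 hab)
  rw [smul_sub] at this
  exact sub_nonneg.1 this

/-- Archimedean-type consequence of order completeness. -/
theorem aux_arch {F : Type*} [AddCommGroup F] [Module ℝ F] [PartialOrder F]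
    [CovariantClass F F (· + ·) (· ≤ ·)]
    (hcompF : ∀ S : Set F, S.Nonempty → BddAbove S → ∃ b, IsLUB S b)
    (c d : F) (h : ∀ t : ℝ, 0 < t → t • c ≤ d) : c ≤ 0 := by
  obtain ⟨b, hb⟩ := hcompF ((fun t : ℝ => t • c) '' Set.Ioi 0)
    ⟨c, ⟨1, by norm_num, one_smul ℝ c⟩⟩ ⟨d, by rintro _ ⟨t, ht, rfl⟩; exact h t ht⟩
  have hub : b ≤ b - c := by
    apply hb.2
    rintro _ ⟨t, ht, rfl⟩
    have h1 : (1 + t) • c ≤ b := hb.1 ⟨1 + t, Set.mem_Ioi.2 (by have := Set.mem_Ioi.1 ht; linarith), rfl⟩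
    rw [add_smul, one_smul] at h1
    exact le_sub_iff_add_le.2 (by rwa [add_comm] at h1)
  have := le_sub_iff_add_le.1 hub
  exact (add_le_iff_nonpos_right b).1 this

section Step

variable {E F : Type*}
    [AddCommGroup E] [Module ℝ E] [PartialOrder E]
    [CovariantClass E E (· + ·) (· ≤ ·)]
    [AddCommGroup F] [Module ℝ F] [PartialOrder F]
    [CovariantClass F F (· + ·) (· ≤ ·)]

/-- Induction step: extend a dominated partial map to one more vector `x₀ = v + (p - q)`
with `v` in the domain and `p, q ≥ 0`. -/
theorem aux_step
    (hsmulE : ∀ (c : ℝ) (x : E), 0 ≤ c → 0 ≤ x → 0 ≤ c • x)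
    (hsmulF : ∀ (c : ℝ) (x : F), 0 ≤ c → 0 ≤ x → 0 ≤ c • x)
    (hcompF : ∀ S : Set F, S.Nonempty → BddAbove S → ∃ b, IsLUB S b)
    (Φ : E → F)
    (hconv : ∀ x y : E, 0 ≤ x → 0 ≤ y → ∀ t : ℝ, 0 ≤ t → t ≤ 1 →
      Φ ((1 - t) • x + t • y) ≤ (1 - t) • Φ x + t • Φ y)
    (f : E →ₗ.[ℝ] F)
    (inv : ∀ (y : f.domain) (x : E), 0 ≤ x → (y : E) ≤ x → f y ≤ Φ x)
    (x₀ : E) (hx₀ : x₀ ∉ f.domain)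
    (v p q : E) (hv : v ∈ f.domain) (hp : 0 ≤ p) (hq : 0 ≤ q)
    (hdec : x₀ = v + (p - q)) :
    ∃ g : E →ₗ.[ℝ] F, f ≤ g ∧ x₀ ∈ g.domain ∧
      ∀ (y : g.domain) (x : E), 0 ≤ x → (y : E) ≤ x → g y ≤ Φ x := by
  set Lo : Set F := {l : F | ∃ (s : ℝ) (y : f.domain) (x : E),
    0 < s ∧ 0 ≤ x ∧ (y : E) - s • x₀ ≤ x ∧ l = s⁻¹ • (f y - Φ x)} with hLo
  set Up : Set F := {u : F | ∃ (t : ℝ) (y : f.domain) (x : E),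
    0 < t ∧ 0 ≤ x ∧ (y : E) + t • x₀ ≤ x ∧ u = t⁻¹ • (Φ x - f y)} with hUp
  -- the key convexity inequality
  have cross : ∀ l ∈ Lo, ∀ u ∈ Up, l ≤ u := by
    rintro _ ⟨s, y₁, x₁, hs, hx₁, hle₁, rfl⟩ _ ⟨t, y₂, x₂, ht, hx₂, hle₂, rfl⟩
    have hst : (0:ℝ) < s + t := by linarith
    set lam : ℝ := t / (s + t) with hlam
    set mu : ℝ := s / (s + t) with hmu
    have hlam0 : 0 ≤ lam := by positivity
    have hmu0 : 0 ≤ mu := by positivity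
    have hlammu : lam = 1 - mu := by
      rw [hlam, hmu, eq_sub_iff_add_eq, ← add_div, add_comm t s, div_self hst.ne']
    have hmu1 : mu ≤ 1 := by rw [hmu]; rw [div_le_one hst]; linarith
    -- combine the two order constraints
    have h1 : lam • ((y₁ : E) - s • x₀) ≤ lam • x₁ := aux_smul_le hsmulE hlam0 hle₁
    have h2 : mu • ((y₂ : E) + t • x₀) ≤ mu • x₂ := aux_smul_le hsmulE hmu0 hle₂
    have hcancel : lam • ((y₁ : E) - s • x₀) + mu • ((y₂ : E) + t • x₀)
        = lam • (y₁ : E) + mu • (y₂ : E) := by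
      have : lam * s = mu * t := by field_simp [hlam, hmu]; ring
      rw [smul_sub, smul_add, smul_smul, smul_smul, this]
      abel
    have hcomb : lam • (y₁ : E) + mu • (y₂ : E) ≤ lam • x₁ + mu • x₂ := by
      rw [← hcancel]
      exact add_le_add h1 h2
    have hxpos : 0 ≤ lam • x₁ + mu • x₂ :=
      add_nonneg (hsmulE _ _ hlam0 hx₁) (hsmulE _ _ hmu0 hx₂)
    have hinv : f (lam • y₁ + mu • y₂) ≤ Φ (lam • x₁ + mu • x₂) := by
      apply inv _ _ hxpos
      push_cast
      exact hcomb
    have hfval : f (lam • y₁ + mu • y₂) = lam • f y₁ + mu • f y₂ := by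
      rw [f.map_add, f.map_smul, f.map_smul]
    have hcv : Φ (lam • x₁ + mu • x₂) ≤ lam • Φ x₁ + mu • Φ x₂ := by
      have := hconv x₁ x₂ hx₁ hx₂ mu hmu0 hmu1
      rwa [← hlammu] at this
    have key : lam • f y₁ + mu • f y₂ ≤ lam • Φ x₁ + mu • Φ x₂ :=
      (hfval ▸ hinv).trans hcv
    -- rescale
    have key2 : 0 ≤ lam • (Φ x₁ - f y₁) + mu • (Φ x₂ - f y₂) := by
      rw [smul_sub, smul_sub]
      have := sub_nonneg.2 key
      calc (0:F) ≤ lam • Φ x₁ + mu • Φ x₂ - (lam • f y₁ + mu • f y₂) := this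
        _ = lam • Φ x₁ - lam • f y₁ + (mu • Φ x₂ - mu • f y₂) := by abel
    set k : ℝ := (s + t) / (s * t) with hk
    have hk0 : 0 ≤ k := by positivity
    have key3 : 0 ≤ k • (lam • (Φ x₁ - f y₁) + mu • (Φ x₂ - f y₂)) :=
      hsmulF _ _ hk0 key2
    have hk1 : k * lam = s⁻¹ := by rw [hk, hlam]; field_simp
    have hk2 : k * mu = t⁻¹ := by rw [hk, hmu]; field_simp
    rw [smul_add, smul_smul, smul_smul, hk1, hk2] at key3
    have : s⁻¹ • (f y₁ - Φ x₁) = -(s⁻¹ • (Φ x₁ - f y₁)) := by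
      rw [← smul_neg, neg_sub]
    rw [this, ← sub_nonneg]
    calc (0:F) ≤ s⁻¹ • (Φ x₁ - f y₁) + t⁻¹ • (Φ x₂ - f y₂) := key3
      _ = t⁻¹ • (Φ x₂ - f y₂) - -(s⁻¹ • (Φ x₁ - f y₁)) := by abel
  -- nonemptiness
  have hLone : (f ⟨v, hv⟩ - Φ q) ∈ Lo := by
    refine ⟨1, ⟨v, hv⟩, q, one_pos, hq, ?_, by rw [inv_one, one_smul]⟩
    rw [one_smul, hdec]
    have : v - (v + (p - q)) = q - p := by abel
    rw [this]
    calc q - p ≤ q - 0 := by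
          exact sub_le_sub_left hp q
      _ = q := by rw [sub_zero]
  have hUone : (Φ p - f ⟨-v, neg_mem hv⟩) ∈ Up := by
    refine ⟨1, ⟨-v, neg_mem hv⟩, p, one_pos, hp, ?_, by rw [inv_one, one_smul]⟩
    rw [one_smul, hdec]
    have : (-v : E) + (v + (p - q)) = p - q := by abel
    rw [this]
    calc p - q ≤ p - 0 := sub_le_sub_left hq p
      _ = p := by rw [sub_zero]
  obtain ⟨c, hc⟩ := hcompF Lo ⟨_, hLone⟩ ⟨_, fun l hl => cross l hl _ hUone⟩
  have hcLo : ∀ l ∈ Lo, l ≤ c := fun l hl => hc.1 hl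
  have hcUp : ∀ u ∈ Up, c ≤ u := fun u hu => hc.2 (fun l hl => cross l hl u hu)
  refine ⟨f.supSpanSingleton x₀ c hx₀, f.left_le_sup _ _, ?_, ?_⟩
  · rw [LinearPMap.domain_supSpanSingleton]
    exact le_sup_right (a := f.domain) (mem_span_singleton_self x₀)
  · rintro ⟨z, hz⟩ x hx hle
    rw [LinearPMap.domain_supSpanSingleton] at hz
    rcases mem_sup.1 hz with ⟨a, ha, y', hy', rfl⟩
    rcases mem_span_singleton.1 hy' with ⟨r, rfl⟩
    simp only [Subtype.coe_mk] at hle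
    rw [LinearPMap.supSpanSingleton_apply_mk _ _ _ _ _ ha, RingHom.id_apply]
    rcases lt_trichotomy r 0 with hr | hr | hr
    · -- r < 0 : lower constraint
      set s : ℝ := -r with hs
      have hs0 : 0 < s := by simpa [hs] using hr
      have hcon : (a : E) - s • x₀ ≤ x := by
        rw [hs, neg_smul, sub_neg_eq_add]
        exact hle
      have hlmem : s⁻¹ • (f ⟨a, ha⟩ - Φ x) ∈ Lo := ⟨s, ⟨a, ha⟩, x, hs0, hx, hcon, rfl⟩
      have h1 : s⁻¹ • (f ⟨a, ha⟩ - Φ x) ≤ c := hcLo _ hlmem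
      have h2 : s • (s⁻¹ • (f ⟨a, ha⟩ - Φ x)) ≤ s • c :=
        aux_smul_le hsmulF hs0.le h1
      rw [smul_smul, mul_inv_cancel₀ hs0.ne', one_smul] at h2
      have hrc : r • c = -(s • c) := by rw [hs, neg_smul, neg_neg]
      rw [hrc, ← sub_eq_add_neg, sub_le_iff_le_add, add_comm]
      exact sub_le_iff_le_add.1 h2
    · subst hr
      simp only [zero_smul, add_zero] at hle ⊢
      exact inv ⟨a, ha⟩ x hx hle
    · -- r > 0 : upper constraint
      have hcon : (a : E) + r • x₀ ≤ x := hle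
      have humem : r⁻¹ • (Φ x - f ⟨a, ha⟩) ∈ Up := ⟨r, ⟨a, ha⟩, x, hr, hx, hcon, rfl⟩
      have h1 : c ≤ r⁻¹ • (Φ x - f ⟨a, ha⟩) := hcUp _ humem
      have h2 : r • c ≤ r • (r⁻¹ • (Φ x - f ⟨a, ha⟩)) := aux_smul_le hsmulF hr.le h1
      rw [smul_smul, mul_inv_cancel₀ hr.ne', one_smul] at h2
      calc f ⟨a, ha⟩ + r • c ≤ f ⟨a, ha⟩ + (Φ x - f ⟨a, ha⟩) := add_le_add_right h2 _
        _ = Φ x := by abel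

end Step

/-- Let `E` be an ordered real vector space, `F` an order complete
ordered vector space, `H ⊆ E` a subspace and `T₁ : H → F` linear. If there is a convex
function `Φ : E₊ → F` with `T₁ h ≤ Φ x` whenever `h ∈ H`, `x ∈ E₊` and `h ≤ x`, then `T₁`
has a positive linear extension `T : E → F` with `T ≤ Φ` on `E₊`. -/
theorem positive_extension_dominated_by_convex
    {E F : Type*}
    [AddCommGroup E] [Module ℝ E] [PartialOrder E]
    [CovariantClass E E (· + ·) (· ≤ ·)]
    (hsmulE : ∀ (c : ℝ) (x : E), 0 ≤ c → 0 ≤ x → 0 ≤ c • x)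
    [AddCommGroup F] [Module ℝ F] [PartialOrder F]
    [CovariantClass F F (· + ·) (· ≤ ·)]
    (hsmulF : ∀ (c : ℝ) (x : F), 0 ≤ c → 0 ≤ x → 0 ≤ c • x)
    (hcompF : ∀ S : Set F, S.Nonempty → BddAbove S → ∃ b, IsLUB S b)
    (H : Submodule ℝ E) (T₁ : H →ₗ[ℝ] F)
    (Φ : E → F)
    (hconv : ∀ x y : E, 0 ≤ x → 0 ≤ y → ∀ t : ℝ, 0 ≤ t → t ≤ 1 →
      Φ ((1 - t) • x + t • y) ≤ (1 - t) • Φ x + t • Φ y)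
    (hdom : ∀ (h : H) (x : E), 0 ≤ x → (h : E) ≤ x → T₁ h ≤ Φ x) :
    ∃ T : E →ₗ[ℝ] F, (∀ h : H, T h = T₁ h) ∧ (∀ x : E, 0 ≤ x → 0 ≤ T x) ∧
      ∀ x : E, 0 ≤ x → T x ≤ Φ x := by
  classical
  -- the subspace generated by the positive cone
  set M : Submodule ℝ E :=
    { carrier := {x | ∃ p q : E, 0 ≤ p ∧ 0 ≤ q ∧ x = p - q}
      add_mem' := by
        rintro a b ⟨p₁, q₁, hp₁, hq₁, rfl⟩ ⟨p₂, q₂, hp₂, hq₂, rfl⟩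
        exact ⟨p₁ + p₂, q₁ + q₂, add_nonneg hp₁ hp₂, add_nonneg hq₁ hq₂, by abel⟩
      zero_mem' := ⟨0, 0, le_rfl, le_rfl, by simp⟩
      smul_mem' := by
        rintro c a ⟨p, q, hp, hq, rfl⟩
        rcases le_total 0 c with hc | hc
        · exact ⟨c • p, c • q, hsmulE c p hc hp, hsmulE c q hc hq, by rw [smul_sub]⟩
        · refine ⟨(-c) • q, (-c) • p, hsmulE _ q (by linarith) hq,
            hsmulE _ p (by linarith) hp, ?_⟩
          rw [smul_sub, neg_smul, neg_smul]
          abel } with hM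
  set f₀ : E →ₗ.[ℝ] F := ⟨H, T₁⟩ with hf₀
  set S : Set (E →ₗ.[ℝ] F) :=
    {f | f₀ ≤ f ∧ ∀ (y : f.domain) (x : E), 0 ≤ x → (y : E) ≤ x → f y ≤ Φ x} with hS
  have hf₀S : f₀ ∈ S := ⟨le_refl f₀, fun y x hx hyx => hdom y x hx hyx⟩
  -- chains have upper bounds
  have hSc : ∀ c ⊆ S, IsChain (· ≤ ·) c → ∀ y ∈ c, ∃ ub ∈ S, ∀ z ∈ c, z ≤ ub := by
    intro c hcs c_chain y hy
    have cne : c.Nonempty := ⟨y, hy⟩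
    have hcd : DirectedOn (· ≤ ·) c := c_chain.directedOn
    refine ⟨LinearPMap.sSup c hcd, ⟨(hcs hy).1.trans (LinearPMap.le_sSup hcd hy), ?_⟩,
      fun _ hz => LinearPMap.le_sSup hcd hz⟩
    rintro ⟨x, hx⟩ w hw hxw
    have hdir : DirectedOn (· ≤ ·) (LinearPMap.domain '' c) :=
      directedOn_image.2 (hcd.mono LinearPMap.domain_mono.monotone)
    rcases (mem_sSup_of_directed (cne.image _) hdir).1 hx with ⟨_, ⟨f, hfc, rfl⟩, hfx⟩
    have hfle : f ≤ LinearPMap.sSup c hcd := LinearPMap.le_sSup _ hfc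
    have : LinearPMap.sSup c hcd ⟨x, hx⟩ = f ⟨x, hfx⟩ := (hfle.2 rfl).symm
    rw [this]
    exact (hcs hfc).2 ⟨x, hfx⟩ w hw hxw
  obtain ⟨q, hq0, hq⟩ := zorn_le_nonempty₀ S hSc f₀ hf₀S
  have hqS : q ∈ S := hq.prop
  -- the maximal element is defined on H ⊔ M
  have hdomH : H ≤ q.domain := hqS.1.1
  have hdomM : ∀ x₀, x₀ ∈ H ⊔ M → x₀ ∈ q.domain := by
    intro x₀ hx₀
    by_contra hnot
    rcases mem_sup.1 hx₀ with ⟨v, hvH, m, hmM, rfl⟩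
    rcases hmM with ⟨p, qq, hp, hqq, rfl⟩
    obtain ⟨g, hfg, hx₀g, hginv⟩ := aux_step hsmulE hsmulF hcompF Φ hconv q hqS.2
      (v + (p - qq)) hnot v p qq (hdomH hvH) hp hqq rfl
    have hgS : g ∈ S := ⟨hqS.1.trans hfg, hginv⟩
    have := hq.2 hgS hfg
    exact hnot (this.1 hx₀g)
  -- build the total map via a complement of q.domain
  obtain ⟨W, hW⟩ := Submodule.exists_isCompl q.domain
  set T : E →ₗ[ℝ] F := q.toFun.comp (q.domain.linearProjOfIsCompl W hW) with hT
  have hTmem : ∀ (z : E) (hz : z ∈ q.domain), T z = q ⟨z, hz⟩ := by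
    intro z hz
    have : (q.domain.linearProjOfIsCompl W hW) z = ⟨z, hz⟩ :=
      Submodule.linearProjOfIsCompl_apply_left hW ⟨z, hz⟩
    simp [hT, this]
  have hposmem : ∀ x : E, 0 ≤ x → x ∈ q.domain := by
    intro x hx
    exact hdomM x (mem_sup.2 ⟨0, zero_mem H, x, ⟨x, 0, hx, le_rfl, by simp⟩, by simp⟩)
  refine ⟨T, ?_, ?_, ?_⟩
  · -- agreement with T₁
    intro h
    have hmem : (h : E) ∈ q.domain := hdomH h.2
    rw [hTmem h hmem]
    have := hqS.1.2 (x := h) (y := ⟨h, hmem⟩) rfl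
    exact this.symm
  · -- positivity
    intro x hx
    have hxd := hposmem x hx
    have key : ∀ t : ℝ, 0 < t → t • (-(T x)) ≤ Φ 0 := by
      intro t ht
      have hmem : -(t • x) ∈ q.domain := neg_mem (smul_mem _ t hxd)
      have hle : (-(t • x) : E) ≤ 0 := neg_nonpos.2 (hsmulE t x ht.le hx)
      have h1 : q ⟨-(t • x), hmem⟩ ≤ Φ 0 := hqS.2 ⟨-(t • x), hmem⟩ 0 le_rfl hle
      have h2 : q ⟨-(t • x), hmem⟩ = t • (-(T x)) := by
        have heq : (⟨-(t • x), hmem⟩ : q.domain) = (-t) • ⟨x, hxd⟩ := by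
          apply Subtype.ext
          simp [neg_smul]
        rw [heq, q.map_smul, ← hTmem x hxd, neg_smul, smul_neg]
      rwa [h2] at h1
    have := aux_arch hcompF (-(T x)) (Φ 0) key
    simpa using neg_nonpos.1 this
  · -- domination
    intro x hx
    have hxd := hposmem x hx
    rw [hTmem x hxd]
    exact hqS.2 ⟨x, hxd⟩ x hx le_rfl
end

section
/- Let E be an ordered Banach space, F an order complete Banach space, and Φ : E → F a continuous convex function. Then the following statements are equivalent: (a) x ≤ y in E implies Φ(x) ≤ Φ(y); (b) for every x₀ ∈ E, every operator in the subdifferential ∂_{x₀}Φ is a positive linear operator; (c) for every x₀ ∈ E, there exists a positive linear operator T ∈ ∂_{x₀}Φ. -/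
open Set LinearMap Filter

section Aux

variable {E : Type*} [AddCommGroup E] [Module ℝ E]
variable {F : Type*} [AddCommGroup F] [Module ℝ F] [PartialOrder F]
  [CovariantClass F F (· + ·) (· ≤ ·)]

private lemma smul_le_smul_aux
    (hsmulF : ∀ (c : ℝ) (x : F), 0 ≤ c → 0 ≤ x → 0 ≤ c • x)
    {c : ℝ} (hc : 0 ≤ c) {a b : F} (h : a ≤ b) : c • a ≤ c • b := by
  have := hsmulF c (b - a) hc (sub_nonneg.2 h)
  rwa [smul_sub, sub_nonneg] at this

/-- Key convexity comparison between difference quotients. -/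
private lemma key_ineq
    (hsmulF : ∀ (c : ℝ) (x : F), 0 ≤ c → 0 ≤ x → 0 ≤ c • x)
    {Ψ : E → F}
    (hconv : ∀ x y : E, ∀ t : ℝ, 0 ≤ t → t ≤ 1 →
      Ψ ((1 - t) • x + t • y) ≤ (1 - t) • Ψ x + t • Ψ y)
    (f : E →ₗ.[ℝ] F) (hf : ∀ x : f.domain, f x ≤ Ψ x)
    (v : E) (x₁ x₂ : f.domain) {s t : ℝ} (hs : 0 < s) (ht : 0 < t) :
    s⁻¹ • (f x₁ - Ψ ((x₁ : E) - s • v)) ≤ t⁻¹ • (Ψ ((x₂ : E) + t • v) - f x₂) := by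
  have hst : 0 < s + t := by linarith
  set lam : ℝ := s / (s + t) with hlam
  have hlam0 : 0 ≤ lam := by positivity
  have hlam1 : lam ≤ 1 := by
    rw [hlam, div_le_one hst]; linarith
  have h1lam : 1 - lam = t / (s + t) := by rw [hlam]; field_simp; try ring
  set m : f.domain := (t / (s + t)) • x₁ + (s / (s + t)) • x₂ with hm
  have harg : (1 - lam) • ((x₁ : E) - s • v) + lam • ((x₂ : E) + t • v) = (m : E) := by
    rw [h1lam, hlam]
    push_cast [hm]
    match_scalars <;> (field_simp [hlam]; try ring)
  have hfm : f m = (t / (s + t)) • f x₁ + (s / (s + t)) • f x₂ := by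
    rw [hm, f.map_add, f.map_smul, f.map_smul]
  have hcv := hconv ((x₁ : E) - s • v) ((x₂ : E) + t • v) lam hlam0 hlam1
  rw [harg, h1lam] at hcv
  have hmain : (t / (s + t)) • f x₁ + (s / (s + t)) • f x₂ ≤
      (t / (s + t)) • Ψ ((x₁ : E) - s • v) + (s / (s + t)) • Ψ ((x₂ : E) + t • v) := by
    rw [← hfm]; exact le_trans (hf m) hcv
  -- multiply by (s + t)
  have hmul := smul_le_smul_aux hsmulF (le_of_lt hst) hmain
  rw [smul_add, smul_add, smul_smul, smul_smul, smul_smul, smul_smul] at hmul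
  have e1 : (s + t) * (t / (s + t)) = t := by field_simp
  have e2 : (s + t) * (s / (s + t)) = s := by field_simp
  rw [e1, e2] at hmul
  -- now t • f x₁ + s • f x₂ ≤ t • Ψ(x₁ - s v) + s • Ψ(x₂ + t v)
  have hsub : t • (f x₁ - Ψ ((x₁ : E) - s • v)) ≤ s • (Ψ ((x₂ : E) + t • v) - f x₂) := by
    rw [smul_sub, smul_sub, sub_le_sub_iff]
    calc t • f x₁ + s • f x₂ ≤ t • Ψ ((x₁ : E) - s • v) + s • Ψ ((x₂ : E) + t • v) := hmul
      _ = s • Ψ ((x₂ : E) + t • v) + t • Ψ ((x₁ : E) - s • v) := by abel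
  have := smul_le_smul_aux hsmulF (c := (s * t)⁻¹) (by positivity) hsub
  rw [smul_smul, smul_smul] at this
  have e3 : (s * t)⁻¹ * t = s⁻¹ := by field_simp; try ring
  have e4 : (s * t)⁻¹ * s = t⁻¹ := by field_simp; try ring
  rwa [e3, e4] at this

/-- Extension step: a partially defined linear map dominated by the convex `Ψ` can be
extended to a strictly larger domain. -/
private lemma ext_step
    (hsmulF : ∀ (c : ℝ) (x : F), 0 ≤ c → 0 ≤ x → 0 ≤ c • x)
    (hcompF : ∀ S : Set F, S.Nonempty → BddAbove S → ∃ b, IsLUB S b)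
    {Ψ : E → F}
    (hconv : ∀ x y : E, ∀ t : ℝ, 0 ≤ t → t ≤ 1 →
      Ψ ((1 - t) • x + t • y) ≤ (1 - t) • Ψ x + t • Ψ y)
    (f : E →ₗ.[ℝ] F) (hf : ∀ x : f.domain, f x ≤ Ψ x) (hdom : f.domain ≠ ⊤) :
    ∃ g, f < g ∧ ∀ x : g.domain, g x ≤ Ψ x := by
  obtain ⟨y, -, hy⟩ : ∃ y ∈ (⊤ : Submodule ℝ E), y ∉ f.domain :=
    SetLike.exists_of_lt (lt_top_iff_ne_top.2 hdom)
  set Sn : Set F :=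
    {z : F | ∃ (x : f.domain) (s : ℝ), 0 < s ∧ z = s⁻¹ • (f x - Ψ ((x : E) - s • y))} with hSn
  have hSn_ne : Sn.Nonempty := ⟨_, ⟨0, 1, one_pos, rfl⟩⟩
  have hub : ∀ (x : f.domain) (t : ℝ), 0 < t →
      t⁻¹ • (Ψ ((x : E) + t • y) - f x) ∈ upperBounds Sn := by
    rintro x t ht z ⟨x₁, s, hs, rfl⟩
    exact key_ineq hsmulF hconv f hf y x₁ x hs ht
  have hSn_bdd : BddAbove Sn := ⟨_, hub 0 1 one_pos⟩
  obtain ⟨c, hc⟩ := hcompF Sn hSn_ne hSn_bdd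
  have hc_lb : ∀ (x : f.domain) (s : ℝ), 0 < s →
      s⁻¹ • (f x - Ψ ((x : E) - s • y)) ≤ c :=
    fun x s hs => hc.1 ⟨x, s, hs, rfl⟩
  have hc_ub : ∀ (x : f.domain) (t : ℝ), 0 < t →
      c ≤ t⁻¹ • (Ψ ((x : E) + t • y) - f x) :=
    fun x t ht => hc.2 (hub x t ht)
  refine ⟨f.supSpanSingleton y c hy, ?_, ?_⟩
  · refine lt_iff_le_not_ge.2 ⟨f.left_le_sup _ _, fun H => ?_⟩
    replace H := LinearPMap.domain_mono.monotone H
    rw [LinearPMap.domain_supSpanSingleton, sup_le_iff, Submodule.span_le,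
      singleton_subset_iff] at H
    exact hy H.2
  · rintro ⟨z, hz⟩
    rcases Submodule.mem_sup.1 hz with ⟨x, hx, y', hy', rfl⟩
    rcases Submodule.mem_span_singleton.1 hy' with ⟨r, rfl⟩
    rw [LinearPMap.supSpanSingleton_apply_mk _ _ _ _ _ hx]
    rcases lt_trichotomy r 0 with hr | hr | hr
    · -- r < 0 : use lower bound with s = -r
      have hs : (0 : ℝ) < -r := neg_pos.2 hr
      have h1 := hc_lb ⟨x, hx⟩ (-r) hs
      have h2 := smul_le_smul_aux hsmulF (le_of_lt hs) h1
      rw [smul_smul, mul_inv_cancel₀ (ne_of_gt hs), one_smul] at h2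
      have harg : (x : E) - (-r) • y = x + r • y := by
        rw [neg_smul, sub_neg_eq_add]
      rw [harg, neg_smul] at h2
      have h4 := add_le_add_left (sub_le_iff_le_add.1 h2) (r • c)
      calc f ⟨x, hx⟩ + r • c ≤ -(r • c) + Ψ (x + r • y) + r • c := h4
        _ = Ψ (x + r • y) := by abel
    · subst hr
      simpa using hf ⟨x, hx⟩
    · -- r > 0 : use upper bound with t = r
      have h1 := hc_ub ⟨x, hx⟩ r hr
      have h2 := smul_le_smul_aux hsmulF (le_of_lt hr) h1
      rw [smul_smul, mul_inv_cancel₀ (ne_of_gt hr), one_smul] at h2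
      calc f ⟨x, hx⟩ + r • c ≤ f ⟨x, hx⟩ + (Ψ ((x : E) + r • y) - f ⟨x, hx⟩) :=
            add_le_add_right h2 _
        _ = Ψ (x + r • y) := by abel

/-- Zorn's lemma step: extend to the whole space. -/
private lemma ext_top
    (hsmulF : ∀ (c : ℝ) (x : F), 0 ≤ c → 0 ≤ x → 0 ≤ c • x)
    (hcompF : ∀ S : Set F, S.Nonempty → BddAbove S → ∃ b, IsLUB S b)
    {Ψ : E → F}
    (hconv : ∀ x y : E, ∀ t : ℝ, 0 ≤ t → t ≤ 1 →
      Ψ ((1 - t) • x + t • y) ≤ (1 - t) • Ψ x + t • Ψ y)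
    (p : E →ₗ.[ℝ] F) (hp : ∀ x : p.domain, p x ≤ Ψ x) :
    ∃ q ≥ p, q.domain = ⊤ ∧ ∀ x : q.domain, q x ≤ Ψ x := by
  set S := { p : E →ₗ.[ℝ] F | ∀ x : p.domain, p x ≤ Ψ x }
  have hSc : ∀ c, c ⊆ S → IsChain (· ≤ ·) c → ∀ y ∈ c, ∃ ub ∈ S, ∀ z ∈ c, z ≤ ub := by
    intro c hcs c_chain y hy
    have cne : c.Nonempty := ⟨y, hy⟩
    have hcd : DirectedOn (· ≤ ·) c := c_chain.directedOn
    refine ⟨LinearPMap.sSup c hcd, ?_, fun _ ↦ LinearPMap.le_sSup hcd⟩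
    rintro ⟨x, hx⟩
    have hdir : DirectedOn (· ≤ ·) (LinearPMap.domain '' c) :=
      directedOn_image.2 (hcd.mono LinearPMap.domain_mono.monotone)
    rcases (Submodule.mem_sSup_of_directed (cne.image _) hdir).1 hx with ⟨_, ⟨f, hfc, rfl⟩, hfx⟩
    have hle : f ≤ LinearPMap.sSup c hcd := LinearPMap.le_sSup _ hfc
    have heq : f ⟨x, hfx⟩ = LinearPMap.sSup c hcd ⟨x, hx⟩ := hle.2 rfl
    rw [← heq]
    exact hcs hfc ⟨x, hfx⟩
  obtain ⟨q, hpq, hqs, hq⟩ := zorn_le_nonempty₀ S hSc p hp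
  refine ⟨q, hpq, ?_, hqs⟩
  by_contra hqt
  rcases ext_step hsmulF hcompF hconv q hqs hqt with ⟨r, hqr, hr⟩
  exact hqr.ne' <| ((hq hr hqr.le).antisymm hqr.le)

/-- Vector-valued Hahn–Banach: a linear map dominated by a convex function `Ψ` with
`Ψ 0 = 0` exists globally. -/
private lemma exists_dominated
    (hsmulF : ∀ (c : ℝ) (x : F), 0 ≤ c → 0 ≤ x → 0 ≤ c • x)
    (hcompF : ∀ S : Set F, S.Nonempty → BddAbove S → ∃ b, IsLUB S b)
    {Ψ : E → F}
    (hconv : ∀ x y : E, ∀ t : ℝ, 0 ≤ t → t ≤ 1 →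
      Ψ ((1 - t) • x + t • y) ≤ (1 - t) • Ψ x + t • Ψ y)
    (hΨ0 : Ψ 0 = 0) :
    ∃ T : E →ₗ[ℝ] F, ∀ x, T x ≤ Ψ x := by
  set f : E →ₗ.[ℝ] F := (0 : E →ₗ[ℝ] F).toPMap ⊥ with hfdef
  have hf : ∀ x : f.domain, f x ≤ Ψ x := by
    rintro ⟨x, hx⟩
    have hx0 : x = 0 := by have hx' : x ∈ (⊥ : Submodule ℝ E) := hx; simpa using hx'
    subst hx0
    have hzero : (⟨0, hx⟩ : f.domain) = 0 := rfl
    rw [hzero]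
    simp [hΨ0]
  obtain ⟨q, -, hqtop, hq⟩ := ext_top hsmulF hcompF hconv f hf
  refine ⟨q.toFun.comp (LinearMap.id.codRestrict q.domain fun x => hqtop ▸ trivial), fun x => ?_⟩
  exact hq ⟨x, hqtop ▸ trivial⟩

end Aux

section Subgrad

variable {E : Type*} [NormedAddCommGroup E] [NormedSpace ℝ E]
variable {F : Type*} [NormedAddCommGroup F] [NormedSpace ℝ F] [PartialOrder F]
  [CovariantClass F F (· + ·) (· ≤ ·)]

/-- Existence of a continuous subgradient at every point. -/
private lemma exists_subgradient
    (hsmulF : ∀ (c : ℝ) (x : F), 0 ≤ c → 0 ≤ x → 0 ≤ c • x)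
    (hmonoF : ∀ x y : F, 0 ≤ x → x ≤ y → ‖x‖ ≤ ‖y‖)
    (hcompF : ∀ S : Set F, S.Nonempty → BddAbove S → ∃ b, IsLUB S b)
    (Φ : E → F)
    (hconv : ∀ x y : E, ∀ t : ℝ, 0 ≤ t → t ≤ 1 →
      Φ ((1 - t) • x + t • y) ≤ (1 - t) • Φ x + t • Φ y)
    (hcont : Continuous Φ) (x₀ : E) :
    ∃ T : E →L[ℝ] F, ∀ x : E, Φ x₀ + T (x - x₀) ≤ Φ x := by
  set Ψ : E → F := fun h => Φ (x₀ + h) - Φ x₀ with hΨdef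
  have hΨ0 : Ψ 0 = 0 := by simp [hΨdef]
  have hΨconv : ∀ x y : E, ∀ t : ℝ, 0 ≤ t → t ≤ 1 →
      Ψ ((1 - t) • x + t • y) ≤ (1 - t) • Ψ x + t • Ψ y := by
    intro x y t ht0 ht1
    have harg : x₀ + ((1 - t) • x + t • y) = (1 - t) • (x₀ + x) + t • (x₀ + y) := by
      match_scalars <;> ring
    have h := hconv (x₀ + x) (x₀ + y) t ht0 ht1
    rw [← harg] at h
    have : Ψ ((1 - t) • x + t • y) ≤ (1 - t) • Φ (x₀ + x) + t • Φ (x₀ + y) - Φ x₀ :=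
      sub_le_sub_right h _
    calc Ψ ((1 - t) • x + t • y) ≤ (1 - t) • Φ (x₀ + x) + t • Φ (x₀ + y) - Φ x₀ := this
      _ = (1 - t) • Ψ x + t • Ψ y := by
          simp only [hΨdef]
          module
  obtain ⟨T, hT⟩ := exists_dominated hsmulF hcompF hΨconv hΨ0
  have hΨcont : Continuous Ψ := by
    apply Continuous.sub _ continuous_const
    exact hcont.comp (continuous_const.add continuous_id)
  -- norm bound for T
  have hbound : ∀ x : E, ‖T x‖ ≤ ‖Ψ x + Ψ (-x)‖ + ‖Ψ (-x)‖ := by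
    intro x
    have h1 : 0 ≤ T x + Ψ (-x) := by
      have := hT (-x)
      rw [map_neg] at this
      have := neg_le_iff_add_nonneg.1 this
      rwa [add_comm] at this
    have h2 : T x + Ψ (-x) ≤ Ψ x + Ψ (-x) := add_le_add_left (hT x) _
    have h3 := hmonoF _ _ h1 h2
    calc ‖T x‖ = ‖(T x + Ψ (-x)) - Ψ (-x)‖ := by rw [add_sub_cancel_right]
      _ ≤ ‖T x + Ψ (-x)‖ + ‖Ψ (-x)‖ := norm_sub_le _ _
      _ ≤ ‖Ψ x + Ψ (-x)‖ + ‖Ψ (-x)‖ := add_le_add_left h3 _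
  have hcont0 : ContinuousAt T 0 := by
    have hg : Tendsto (fun x : E => ‖Ψ x + Ψ (-x)‖ + ‖Ψ (-x)‖) (nhds 0) (nhds 0) := by
      have : Continuous fun x : E => ‖Ψ x + Ψ (-x)‖ + ‖Ψ (-x)‖ := by
        apply Continuous.add
        · exact (hΨcont.add (hΨcont.comp continuous_neg)).norm
        · exact (hΨcont.comp continuous_neg).norm
      simpa [hΨ0] using this.tendsto 0
    have := squeeze_zero_norm hbound hg
    rw [ContinuousAt, map_zero]
    exact this
  have hTc : Continuous T := continuous_of_continuousAt_zero T.toAddMonoidHom hcont0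
  refine ⟨⟨T, hTc⟩, fun x => ?_⟩
  have := hT (x - x₀)
  simp only [hΨdef] at this
  have harg : x₀ + (x - x₀) = x := by abel
  rw [harg] at this
  calc Φ x₀ + T (x - x₀) ≤ Φ x₀ + (Φ x - Φ x₀) := add_le_add_right this _
    _ = Φ x := by abel

end Subgrad

/-- (Theorem 4) For a continuous convex function `Φ : E → F` from an
ordered Banach space into an order complete Banach space, the following are equivalent:
(a) `Φ` is isotone; (b) every subgradient of `Φ` at every point is positive; (c) at every
point there exists a positive subgradient. -/
theorem isotone_convex_characterization
    {E F : Type*}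
    [NormedAddCommGroup E] [NormedSpace ℝ E] [CompleteSpace E]
    [PartialOrder E] [CovariantClass E E (· + ·) (· ≤ ·)]
    (hsmulE : ∀ (c : ℝ) (x : E), 0 ≤ c → 0 ≤ x → 0 ≤ c • x)
    (hclosedE : IsClosed {x : E | 0 ≤ x})
    (hgenE : ∀ x : E, ∃ u v : E, 0 ≤ u ∧ 0 ≤ v ∧ x = u - v)
    (hmonoE : ∀ x y : E, 0 ≤ x → x ≤ y → ‖x‖ ≤ ‖y‖)
    [NormedAddCommGroup F] [NormedSpace ℝ F] [CompleteSpace F]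
    [PartialOrder F] [CovariantClass F F (· + ·) (· ≤ ·)]
    (hsmulF : ∀ (c : ℝ) (x : F), 0 ≤ c → 0 ≤ x → 0 ≤ c • x)
    (hclosedF : IsClosed {x : F | 0 ≤ x})
    (hgenF : ∀ x : F, ∃ u v : F, 0 ≤ u ∧ 0 ≤ v ∧ x = u - v)
    (hmonoF : ∀ x y : F, 0 ≤ x → x ≤ y → ‖x‖ ≤ ‖y‖)
    (hcompF : ∀ S : Set F, S.Nonempty → BddAbove S → ∃ b, IsLUB S b)
    (Φ : E → F)
    (hconv : ∀ x y : E, ∀ t : ℝ, 0 ≤ t → t ≤ 1 →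
      Φ ((1 - t) • x + t • y) ≤ (1 - t) • Φ x + t • Φ y)
    (hcont : Continuous Φ) :
    List.TFAE
      [∀ x y : E, x ≤ y → Φ x ≤ Φ y,
       ∀ x₀ : E, ∀ T : E →L[ℝ] F, (∀ x : E, Φ x₀ + T (x - x₀) ≤ Φ x) →
         ∀ x : E, 0 ≤ x → 0 ≤ T x,
       ∀ x₀ : E, ∃ T : E →L[ℝ] F, (∀ x : E, Φ x₀ + T (x - x₀) ≤ Φ x) ∧
         ∀ x : E, 0 ≤ x → 0 ≤ T x] := by
  tfae_have 1 → 2 := by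
    intro h1 x₀ T hT x hx
    have hle : x₀ - x ≤ x₀ := by
      have := sub_le_sub_left hx x₀
      simpa using this
    have h := hT (x₀ - x)
    have harg : (x₀ - x) - x₀ = -x := by abel
    rw [harg, map_neg] at h
    have h2 : Φ x₀ + -T x ≤ Φ x₀ := le_trans h (h1 _ _ hle)
    have h3 : -T x ≤ 0 := (add_le_iff_nonpos_right (Φ x₀)).1 h2
    exact neg_nonpos.1 h3
  tfae_have 2 → 3 := by
    intro h2 x₀
    obtain ⟨T, hT⟩ := exists_subgradient hsmulF hmonoF hcompF Φ hconv hcont x₀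
    exact ⟨T, hT, h2 x₀ T hT⟩
  tfae_have 3 → 1 := by
    intro h3 x y hxy
    obtain ⟨T, hT, hpos⟩ := h3 x
    have h := hT y
    have hy : 0 ≤ T (y - x) := hpos _ (sub_nonneg.2 hxy)
    calc Φ x = Φ x + 0 := by rw [add_zero]
      _ ≤ Φ x + T (y - x) := add_le_add_right hy _
      _ ≤ Φ y := h
  tfae_finish
end

section
/- Let E be an ordered real vector space with positive cone E₊, let F be an order complete vector lattice, and let Ψ : E₊ → F be a convex function. Then for every linear operator S : E → F the following two assertions are equivalent: (a) there exist two positive linear operators T, U : E → F such that S = T - U and T(x) ≤ Ψ(x) for all x ∈ E₊; (b) S(x₁) ≤ Ψ(x₂) for all x₁, x₂ ∈ E such that 0 ≤ x₁ ≤ x₂. -/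
/-! Auxiliary material for `controlled_regularity`. -/

namespace ControlledRegularityAux

open Submodule

variable {E F : Type*}
    [AddCommGroup E] [Module ℝ E] [PartialOrder E]
    [CovariantClass E E (· + ·) (· ≤ ·)]
    [AddCommGroup F] [Module ℝ F] [Lattice F]
    [CovariantClass F F (· + ·) (· ≤ ·)]

/-- scalar multiplication by a nonnegative scalar is monotone, derived from positivity. -/
theorem smul_mono {G : Type*} [AddCommGroup G] [Module ℝ G] [PartialOrder G]
    [CovariantClass G G (· + ·) (· ≤ ·)]
    (hsmul : ∀ (c : ℝ) (x : G), 0 ≤ c → 0 ≤ x → 0 ≤ c • x)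
    {c : ℝ} (hc : 0 ≤ c) {u v : G} (h : u ≤ v) : c • u ≤ c • v := by
  have := hsmul c (v - u) hc (sub_nonneg.2 h)
  rwa [smul_sub, sub_nonneg] at this

/-- The set of "admissible upper values" at `x` for the Hahn–Banach construction. -/
def Aset (Ψ : E → F) (S : E →ₗ[ℝ] F) (x : E) : Set F :=
  {f | ∃ l : ℝ, ∃ a b : E, 0 ≤ l ∧ 0 ≤ a ∧ 0 ≤ b ∧ x ≤ l • a - b ∧ f = l • Ψ a - S b}

section Aset

variable {Ψ : E → F} {S : E →ₗ[ℝ] F}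

theorem psi_mem_Aset {x : E} (hx : 0 ≤ x) : Ψ x ∈ Aset Ψ S x :=
  ⟨1, x, 0, zero_le_one, hx, le_refl 0, by simp, by simp⟩

theorem negS_mem_Aset {x : E} (hx : 0 ≤ x) : -S x ∈ Aset Ψ S (-x) :=
  ⟨0, 0, x, le_refl 0, le_refl 0, hx, by simp, by simp⟩

theorem zero_mem_Aset_neg {x : E} (hx : 0 ≤ x) : (0 : F) ∈ Aset Ψ S (-x) :=
  ⟨0, 0, 0, le_refl 0, le_refl 0, le_refl 0, by simpa using neg_nonpos.2 hx, by simp⟩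

/-- "Subadditivity": the sum of admissible values dominates an admissible value of the sum. -/
theorem Aset_add (hsmulE : ∀ (c : ℝ) (x : E), 0 ≤ c → 0 ≤ x → 0 ≤ c • x)
    (hsmulF : ∀ (c : ℝ) (x : F), 0 ≤ c → 0 ≤ x → 0 ≤ c • x)
    (hconv : ∀ x y : E, 0 ≤ x → 0 ≤ y → ∀ t : ℝ, 0 ≤ t → t ≤ 1 →
      Ψ ((1 - t) • x + t • y) ≤ (1 - t) • Ψ x + t • Ψ y)
    {x x' : E} {g g' : F} (hg : g ∈ Aset Ψ S x) (hg' : g' ∈ Aset Ψ S x') :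
    ∃ h ∈ Aset Ψ S (x + x'), h ≤ g + g' := by
  obtain ⟨l, a, b, hl, ha, hb, hx, rfl⟩ := hg
  obtain ⟨m, c, d, hm, hc, hd, hx', rfl⟩ := hg'
  by_cases hlm : l + m = 0
  · have hl0 : l = 0 := by linarith
    have hm0 : m = 0 := by linarith
    subst hl0; subst hm0
    refine ⟨(0 : ℝ) • Ψ 0 - S (b + d), ⟨0, 0, b + d, le_refl 0, le_refl 0,
      add_nonneg hb hd, ?_, rfl⟩, ?_⟩
    · simp only [zero_smul, zero_sub] at hx hx' ⊢
      calc x + x' ≤ -b + -d := add_le_add hx hx'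
        _ = -(b + d) := by abel
    · simp only [zero_smul, zero_sub, map_add]
      exact le_of_eq (by abel)
  · have hlm' : 0 < l + m := lt_of_le_of_ne (add_nonneg hl hm) (Ne.symm hlm)
    set t : ℝ := m / (l + m) with htdef
    have ht0 : 0 ≤ t := div_nonneg hm hlm'.le
    have ht1 : t ≤ 1 := by rw [htdef, div_le_one hlm']; linarith
    have e1 : (l + m) * (1 - t) = l := by
      have := hlm'.ne'
      rw [htdef]; field_simp; ring
    have e2 : (l + m) * t = m := by
      have := hlm'.ne'
      rw [htdef]; field_simp
    set w : E := (1 - t) • a + t • c with hwdef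
    have hw : 0 ≤ w := add_nonneg (hsmulE _ _ (by linarith) ha) (hsmulE _ _ ht0 hc)
    have hsum : (l + m) • w = l • a + m • c := by
      rw [hwdef, smul_add, smul_smul, smul_smul, e1, e2]
    refine ⟨(l + m) • Ψ w - S (b + d), ⟨l + m, w, b + d, hlm'.le, hw,
      add_nonneg hb hd, ?_, rfl⟩, ?_⟩
    · calc x + x' ≤ (l • a - b) + (m • c - d) := add_le_add hx hx'
        _ = (l • a + m • c) - (b + d) := by abel
        _ = (l + m) • w - (b + d) := by rw [hsum]
    · have hΨ := hconv a c ha hc t ht0 ht1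
      have h2 : (l + m) • Ψ w ≤ (l + m) • ((1 - t) • Ψ a + t • Ψ c) :=
        smul_mono hsmulF hlm'.le hΨ
      have h3 : (l + m) • ((1 - t) • Ψ a + t • Ψ c) = l • Ψ a + m • Ψ c := by
        rw [smul_add, smul_smul, smul_smul, e1, e2]
      calc (l + m) • Ψ w - S (b + d) ≤ (l • Ψ a + m • Ψ c) - S (b + d) :=
            sub_le_sub_right (h2.trans_eq h3) _
        _ = (l • Ψ a - S b) + (m • Ψ c - S d) := by rw [map_add]; abel

/-- positive homogeneity of the admissible sets. -/
theorem Aset_smul (hsmulE : ∀ (c : ℝ) (x : E), 0 ≤ c → 0 ≤ x → 0 ≤ c • x)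
    {s : ℝ} (hs : 0 < s) {x : E} {g : F} (hg : g ∈ Aset Ψ S x) :
    s • g ∈ Aset Ψ S (s • x) := by
  obtain ⟨l, a, b, hl, ha, hb, hx, rfl⟩ := hg
  refine ⟨s * l, a, s • b, mul_nonneg hs.le hl, ha, hsmulE s b hs.le hb, ?_, ?_⟩
  · have := smul_mono hsmulE hs.le hx
    rwa [smul_sub, smul_smul] at this
  · rw [smul_sub, smul_smul, map_smul]

/-- If the admissible set of `x` is nonempty, so is that of `-x`. -/
theorem Aset_neg_nonempty (hsmulE : ∀ (c : ℝ) (x : E), 0 ≤ c → 0 ≤ x → 0 ≤ c • x)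
    {x : E} (hne : (Aset Ψ S x).Nonempty) :
    (Aset Ψ S (-x)).Nonempty := by
  obtain ⟨g, l, a, b, hl, ha, hb, hx, -⟩ := hne
  refine ⟨(1 : ℝ) • Ψ ((l • a - b - x) + b) - S (l • a),
    1, (l • a - b - x) + b, l • a, zero_le_one,
    add_nonneg (sub_nonneg.2 hx) hb, hsmulE l a hl ha, le_of_eq ?_, rfl⟩
  rw [one_smul]; abel

/-- Every admissible value at `0` is nonnegative. -/
theorem Aset_zero_nonneg (hsmulE : ∀ (c : ℝ) (x : E), 0 ≤ c → 0 ≤ x → 0 ≤ c • x)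
    (hsmulF : ∀ (c : ℝ) (x : F), 0 ≤ c → 0 ≤ x → 0 ≤ c • x)
    (hb : ∀ x₁ x₂ : E, 0 ≤ x₁ → x₁ ≤ x₂ → S x₁ ≤ Ψ x₂) {h : F} (hh : h ∈ Aset Ψ S 0) : 0 ≤ h := by
  obtain ⟨l, a, b, hl, ha, hb', hx, rfl⟩ := hh
  rcases hl.eq_or_lt with hl0 | hl0
  · subst hl0
    have hb0 : b = 0 := le_antisymm (by simpa using hx) hb'
    subst hb0
    simp
  · have hble : b ≤ l • a := sub_nonneg.1 hx
    have h1 : l⁻¹ • b ≤ a := by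
      have := smul_mono hsmulE (inv_nonneg.2 hl0.le) hble
      rwa [smul_smul, inv_mul_cancel₀ hl0.ne', one_smul] at this
    have h0 : 0 ≤ l⁻¹ • b := hsmulE _ _ (inv_nonneg.2 hl0.le) hb'
    have h2 : S (l⁻¹ • b) ≤ Ψ a := hb _ a h0 h1
    have h3 := smul_mono hsmulF hl0.le h2
    rw [map_smul, smul_smul, mul_inv_cancel₀ hl0.ne', one_smul] at h3
    exact sub_nonneg.2 h3

end Aset

end ControlledRegularityAux

open ControlledRegularityAux Submodule in
/-- (Lemma 4) Let `E` be an ordered real vector space, `F` an order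
complete vector lattice and `Ψ : E₊ → F` convex. A linear operator `S : E → F` decomposes
as `S = T - U` with `T, U` positive and `T ≤ Ψ` on `E₊` if and only if `S x₁ ≤ Ψ x₂`
whenever `0 ≤ x₁ ≤ x₂`. -/
theorem controlled_regularity
    {E F : Type*}
    [AddCommGroup E] [Module ℝ E] [PartialOrder E]
    [CovariantClass E E (· + ·) (· ≤ ·)]
    (hsmulE : ∀ (c : ℝ) (x : E), 0 ≤ c → 0 ≤ x → 0 ≤ c • x)
    [AddCommGroup F] [Module ℝ F] [Lattice F]
    [CovariantClass F F (· + ·) (· ≤ ·)]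
    (hsmulF : ∀ (c : ℝ) (x : F), 0 ≤ c → 0 ≤ x → 0 ≤ c • x)
    (hcompF : ∀ S : Set F, S.Nonempty → BddAbove S → ∃ b, IsLUB S b)
    (Ψ : E → F)
    (hconv : ∀ x y : E, 0 ≤ x → 0 ≤ y → ∀ t : ℝ, 0 ≤ t → t ≤ 1 →
      Ψ ((1 - t) • x + t • y) ≤ (1 - t) • Ψ x + t • Ψ y)
    (S : E →ₗ[ℝ] F) :
    (∃ T U : E →ₗ[ℝ] F, (∀ x : E, 0 ≤ x → 0 ≤ T x) ∧ (∀ x : E, 0 ≤ x → 0 ≤ U x) ∧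
        S = T - U ∧ ∀ x : E, 0 ≤ x → T x ≤ Ψ x) ↔
      (∀ x₁ x₂ : E, 0 ≤ x₁ → x₁ ≤ x₂ → S x₁ ≤ Ψ x₂) := by
  constructor
  · rintro ⟨T, U, hT, hU, hS, hTΨ⟩ x₁ x₂ h1 h12
    have hSx : S x₁ = T x₁ - U x₁ := by rw [hS]; simp
    have h2 : S x₁ ≤ T x₁ := by
      rw [hSx]; exact sub_le_self _ (hU x₁ h1)
    have h3 : T x₁ ≤ T x₂ := by
      have := hT (x₂ - x₁) (sub_nonneg.2 h12)
      rw [map_sub] at this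
      exact sub_nonneg.1 this
    exact h2.trans (h3.trans (hTΨ x₂ (h1.trans h12)))
  · intro hb
    -- Step: any partially defined dominated map which is not total can be extended.
    set P : (E →ₗ.[ℝ] F) → Prop :=
      fun f => ∀ (y : f.domain) (g : F), g ∈ Aset Ψ S (y : E) → f y ≤ g with hP
    have step : ∀ f : E →ₗ.[ℝ] F, P f → f.domain ≠ ⊤ → ∃ g, f < g ∧ P g := by
      intro f hf hdom
      obtain ⟨v, -, hv⟩ : ∃ v ∈ (⊤ : Submodule ℝ E), v ∉ f.domain :=
        SetLike.exists_of_lt (lt_top_iff_ne_top.2 hdom)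
      -- find the extension value `c`
      obtain ⟨c, hcl, hcr⟩ :
          ∃ c : F, (∀ (y : f.domain) (g : F), g ∈ Aset Ψ S ((y : E) - v) → f y - g ≤ c) ∧
            (∀ (y : f.domain) (g : F), g ∈ Aset Ψ S ((y : E) + v) → c ≤ g - f y) := by
        set L : Set F :=
          {z | ∃ (y : f.domain) (g : F), g ∈ Aset Ψ S ((y : E) - v) ∧ z = f y - g} with hL
        have hLR : ∀ (y y' : f.domain) (g g' : F), g ∈ Aset Ψ S ((y : E) - v) →
            g' ∈ Aset Ψ S ((y' : E) + v) → f y - g ≤ g' - f y' := by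
          intro y y' g g' hg hg'
          obtain ⟨h, hmem, hle⟩ := Aset_add hsmulE hsmulF hconv hg hg'
          have heq : ((y : E) - v) + ((y' : E) + v) = ((y + y' : f.domain) : E) := by
            push_cast; abel
          rw [heq] at hmem
          have h1 : f (y + y') ≤ h := hf _ _ hmem
          rw [f.map_add] at h1
          have h2 : f y + f y' ≤ g + g' := h1.trans hle
          rw [sub_le_sub_iff]
          calc f y + f y' ≤ g + g' := h2
            _ = g' + g := by abel
        by_cases hLne : L.Nonempty
        · have hRne : ∃ (y' : f.domain) (g' : F), g' ∈ Aset Ψ S ((y' : E) + v) := by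
            obtain ⟨z, y, g, hg, -⟩ := hLne
            obtain ⟨g', hg'⟩ := Aset_neg_nonempty hsmulE (x := (y : E) - v) ⟨g, hg⟩
            refine ⟨-y, g', ?_⟩
            have : -((y : E) - v) = ((-y : f.domain) : E) + v := by push_cast; abel
            rwa [this] at hg'
          obtain ⟨y₀, g₀, hg₀⟩ := hRne
          have hbdd : BddAbove L := by
            refine ⟨g₀ - f y₀, ?_⟩
            rintro z ⟨y, g, hg, rfl⟩
            exact hLR y y₀ g g₀ hg hg₀
          obtain ⟨c, hc⟩ := hcompF L hLne hbdd
          refine ⟨c, ?_, ?_⟩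
          · intro y g hg
            exact hc.1 ⟨y, g, hg, rfl⟩
          · intro y g hg
            refine hc.2 ?_
            rintro z ⟨y', g', hg', rfl⟩
            exact hLR y' y g' g hg' hg
        · refine ⟨0, ?_, ?_⟩
          · intro y g hg
            exact absurd ⟨f y - g, y, g, hg, rfl⟩ hLne
          · intro y g hg
            exfalso
            obtain ⟨g', hg'⟩ := Aset_neg_nonempty hsmulE (x := (y : E) + v) ⟨g, hg⟩
            have : -((y : E) + v) = ((-y : f.domain) : E) - v := by push_cast; abel
            rw [this] at hg'
            exact hLne ⟨f (-y) - g', -y, g', hg', rfl⟩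
      refine ⟨f.supSpanSingleton v c hv, ?_, ?_⟩
      · refine lt_iff_le_not_ge.2 ⟨f.left_le_sup _ _, fun H => ?_⟩
        replace H := LinearPMap.domain_mono.monotone H
        rw [LinearPMap.domain_supSpanSingleton, sup_le_iff, span_le,
          Set.singleton_subset_iff] at H
        exact hv H.2
      · rintro ⟨z, hz⟩ g hg
        rw [LinearPMap.domain_supSpanSingleton] at hz
        rcases mem_sup.1 hz with ⟨x, hx, y', hy', rfl⟩
        rcases mem_span_singleton.1 hy' with ⟨r, rfl⟩
        simp only at hg
        rw [LinearPMap.supSpanSingleton_apply_mk _ _ _ _ _ hx]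
        rcases lt_trichotomy r 0 with hr | hr | hr
        · -- r < 0
          have hrpos : 0 < -r := neg_pos.2 hr
          have hmem := Aset_smul hsmulE (s := (-r)⁻¹) (inv_pos.2 hrpos) hg
          have harg : (-r)⁻¹ • (x + r • v) = ((((-r)⁻¹ • ⟨x, hx⟩ : f.domain)) : E) - v := by
            have : ((-r)⁻¹ * r) = -1 := by rw [inv_neg, neg_mul, inv_mul_cancel₀ hr.ne]
            rw [smul_add, smul_smul, this]
            push_cast
            rw [neg_one_smul]
            abel
          rw [harg] at hmem
          have h1 := hcl ((-r)⁻¹ • ⟨x, hx⟩) _ hmem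
          rw [f.map_smul] at h1
          have h2 := smul_mono hsmulF hrpos.le h1
          rw [smul_sub, smul_smul, smul_smul, mul_inv_cancel₀ hrpos.ne', one_smul,
            one_smul] at h2
          -- h2 : f ⟨x, hx⟩ - g ≤ (-r) • c
          rw [neg_smul] at h2
          have h3 : f ⟨x, hx⟩ - g ≤ 0 - r • c := by rwa [zero_sub]
          have h4 := (sub_le_sub_iff).1 h3
          -- h4 : f ⟨x, hx⟩ + r • c ≤ 0 + g
          rwa [zero_add] at h4
        · subst hr
          simp only [RingHom.id_apply, zero_smul, add_zero] at hg ⊢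
          exact (hf ⟨x, hx⟩ g hg)
        · -- r > 0
          have hmem := Aset_smul hsmulE (s := r⁻¹) (inv_pos.2 hr) hg
          have harg : r⁻¹ • (x + r • v) = (((r⁻¹ • ⟨x, hx⟩ : f.domain)) : E) + v := by
            rw [smul_add, smul_smul, inv_mul_cancel₀ hr.ne', one_smul]
            push_cast
            rfl
          rw [harg] at hmem
          have h1 := hcr (r⁻¹ • ⟨x, hx⟩) _ hmem
          rw [f.map_smul] at h1
          have h2 := smul_mono hsmulF hr.le h1
          rw [smul_sub, smul_smul, smul_smul, mul_inv_cancel₀ hr.ne', one_smul,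
            one_smul] at h2
          -- h2 : r • c ≤ g - f ⟨x, hx⟩
          have h3 := le_sub_iff_add_le.1 h2
          -- h3 : r • c + f ⟨x, hx⟩ ≤ g
          rwa [add_comm] at h3
    -- Zorn's lemma
    have hzorn : ∃ q : E →ₗ.[ℝ] F, P q ∧ q.domain = ⊤ := by
      set Sset := {f : E →ₗ.[ℝ] F | P f} with hSset
      have hSc : ∀ c, c ⊆ Sset → IsChain (· ≤ ·) c → ∀ y ∈ c, ∃ ub ∈ Sset, ∀ z ∈ c, z ≤ ub := by
        intro c hcs c_chain y hy
        have cne : c.Nonempty := ⟨y, hy⟩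
        have hcd : DirectedOn (· ≤ ·) c := c_chain.directedOn
        refine ⟨LinearPMap.sSup c hcd, ?_, fun _ => LinearPMap.le_sSup hcd⟩
        rintro ⟨x, hx⟩ g hg
        have hdir : DirectedOn (· ≤ ·) (LinearPMap.domain '' c) :=
          directedOn_image.2 (hcd.mono LinearPMap.domain_mono.monotone)
        rcases (mem_sSup_of_directed (cne.image _) hdir).1 hx with ⟨-, ⟨l, hlc, rfl⟩, hlx⟩
        have hle : l ≤ LinearPMap.sSup c hcd := LinearPMap.le_sSup _ hlc
        have h1 := hcs hlc ⟨x, hlx⟩ g hg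
        have heq : l ⟨x, hlx⟩ = (LinearPMap.sSup c hcd) ⟨x, hx⟩ := hle.2 rfl
        rw [← heq]
        exact h1
      have hbase : P ((0 : E →ₗ[ℝ] F).toPMap ⊥) := by
        rintro ⟨x, hx⟩ g hg
        rw [LinearMap.toPMap_domain] at hx
        have hx0 : x = 0 := by simpa using hx
        subst hx0
        have : (0 : E →ₗ[ℝ] F).toPMap ⊥ ⟨0, hx⟩ = 0 := by
          simp [LinearMap.toPMap_apply]
        rw [this]
        exact Aset_zero_nonneg hsmulE hsmulF hb hg
      obtain ⟨q, -, hq, hmax⟩ := zorn_le_nonempty₀ _ hSc _ hbase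
      refine ⟨q, hq, ?_⟩
      by_contra hne
      obtain ⟨r, hqr, hr⟩ := step q hq hne
      exact hqr.ne (le_antisymm hqr.le (hmax hr hqr.le)) |>.elim
    obtain ⟨⟨qdom, q⟩, hq, (rfl : qdom = ⊤)⟩ := hzorn
    set T : E →ₗ[ℝ] F := q.comp (LinearMap.id.codRestrict ⊤ fun _ => trivial) with hTdef
    have hTprop : ∀ (x : E) (g : F), g ∈ Aset Ψ S x → T x ≤ g := by
      intro x g hg
      exact hq ⟨x, trivial⟩ g hg
    have hTpos : ∀ x : E, 0 ≤ x → 0 ≤ T x := by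
      intro x hx
      have := hTprop (-x) 0 (zero_mem_Aset_neg hx)
      rw [map_neg] at this
      simpa using this
    have hTS : ∀ x : E, 0 ≤ x → S x ≤ T x := by
      intro x hx
      have := hTprop (-x) (-S x) (negS_mem_Aset hx)
      rw [map_neg] at this
      simpa using this
    have hTΨ : ∀ x : E, 0 ≤ x → T x ≤ Ψ x := by
      intro x hx
      exact hTprop x (Ψ x) (psi_mem_Aset hx)
    refine ⟨T, T - S, hTpos, ?_, by abel, hTΨ⟩
    intro x hx
    have := hTS x hx
    simp only [LinearMap.sub_apply]
    exact sub_nonneg.2 this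
end

section
/- Let E be an ordered Banach space whose positive cone E₊ has nonempty interior, let F be an order complete Banach lattice, and let Φ : E₊ → F be a continuous convex function. Then Φ is isotone on int E₊ (x ≤ y in int E₊ implies Φ(x) ≤ Φ(y)) if and only if for every x₀ ∈ int E₊ the subdifferential ∂_{x₀}Φ contains a positive linear operator, i.e., there exists a positive continuous linear operator T : E → F with Φ(x) ≥ Φ(x₀) + T(x - x₀) for all x ∈ E₊. -/
open Set Submodule

section HBK

variable {E F : Type*} [AddCommGroup E] [Module ℝ E]
  [NormedAddCommGroup F] [Lattice F] [HasSolidNorm F] [IsOrderedAddMonoid F] [NormedSpace ℝ F]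

theorem hbk_aux
    (hsmulF : ∀ (c : ℝ) (x : F), 0 ≤ c → 0 ≤ x → 0 ≤ c • x)
    (hcompF : ∀ S : Set F, S.Nonempty → BddAbove S → ∃ b, IsLUB S b)
    (p : E → F)
    (p_add : ∀ x y, p (x + y) ≤ p x + p y)
    (p_smul : ∀ (c : ℝ), 0 < c → ∀ x, p (c • x) = c • p x) :
    ∃ T : E →ₗ[ℝ] F, ∀ x, T x ≤ p x := by
  have smul_le : ∀ (c : ℝ), 0 ≤ c → ∀ a b : F, a ≤ b → c • a ≤ c • b := by
    intro c hc a b hab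
    have h := hsmulF c (b - a) hc (sub_nonneg.2 hab)
    rw [smul_sub] at h
    exact sub_nonneg.1 h
  have step : ∀ f : E →ₗ.[ℝ] F, (∀ x : f.domain, f x ≤ p (x : E)) → f.domain ≠ ⊤ →
      ∃ g : E →ₗ.[ℝ] F, f < g ∧ ∀ x : g.domain, g x ≤ p (x : E) := by
    intro f hf hdom
    obtain ⟨y, -, hy⟩ : ∃ y ∈ (⊤ : Submodule ℝ E), y ∉ f.domain :=
      SetLike.exists_of_lt (lt_top_iff_ne_top.2 hdom)
    set A : Set F := range (fun x : f.domain => f x - p ((x : E) - y)) with hA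
    have hAne : A.Nonempty := ⟨_, mem_range_self 0⟩
    have hub : ∀ x' : f.domain, (p ((x' : E) + y) - f x') ∈ upperBounds A := by
      rintro x' _ ⟨x, rfl⟩
      rw [sub_le_sub_iff]
      calc f x + f x' = f (x + x') := (f.map_add x x').symm
        _ ≤ p ((x + x' : f.domain) : E) := hf _
        _ = p (((x : E) - y) + ((x' : E) + y)) := by
              congr 1; push_cast; abel
        _ ≤ p ((x : E) - y) + p ((x' : E) + y) := p_add _ _
        _ = p ((x' : E) + y) + p ((x : E) - y) := add_comm _ _
    obtain ⟨α, hα⟩ := hcompF A hAne ⟨_, hub 0⟩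
    have k1 : ∀ x : f.domain, f x - p ((x : E) - y) ≤ α := fun x => hα.1 ⟨x, rfl⟩
    have k2 : ∀ x : f.domain, α ≤ p ((x : E) + y) - f x := fun x => hα.2 (hub x)
    refine ⟨f.supSpanSingleton y α hy, ?_, ?_⟩
    · refine lt_iff_le_not_ge.2 ⟨f.left_le_sup _ _, fun H => ?_⟩
      replace H := LinearPMap.domain_mono.monotone H
      rw [LinearPMap.domain_supSpanSingleton, sup_le_iff, span_le, singleton_subset_iff] at H
      exact hy H.2
    · rintro ⟨z, hz⟩
      rw [LinearPMap.domain_supSpanSingleton] at hz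
      rcases mem_sup.1 hz with ⟨x, hx, y', hy', rfl⟩
      rcases mem_span_singleton.1 hy' with ⟨r, rfl⟩
      rw [LinearPMap.supSpanSingleton_apply_mk _ _ _ _ _ hx]
      rcases lt_trichotomy r 0 with (hr | hr | hr)
      · have hs : (0:ℝ) < -r := neg_pos.2 hr
        have h1 := k1 ((-r)⁻¹ • ⟨x, hx⟩)
        have h2 := smul_le (-r) hs.le _ _ h1
        rw [smul_sub] at h2
        have e1 : (-r) • f ((-r)⁻¹ • (⟨x, hx⟩ : f.domain)) = f ⟨x, hx⟩ := by
          rw [f.map_smul, smul_smul, mul_inv_cancel₀ hs.ne', one_smul]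
        have e2 : (-r) • p (((-r)⁻¹ • ((⟨x, hx⟩ : f.domain) : E)) - y) = p (x + r • y) := by
          rw [← p_smul (-r) hs]
          congr 1
          rw [smul_sub]
          push_cast
          rw [smul_smul, mul_inv_cancel₀ hs.ne', one_smul]
          module
        simp only [SetLike.val_smul] at h2
        rw [e1, e2] at h2
        rw [neg_smul, sub_le_iff_le_add] at h2
        calc f ⟨x, hx⟩ + r • α ≤ (-(r • α) + p (x + r • y)) + r • α := add_le_add_left h2 _
          _ = p (x + r • y) := by abel
      · subst hr
        simp only [RingHom.id_apply, zero_smul, add_zero]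
        exact hf ⟨x, hx⟩
      · have h1 := k2 (r⁻¹ • ⟨x, hx⟩)
        have h2 := smul_le r hr.le _ _ h1
        rw [smul_sub] at h2
        have e1 : r • f (r⁻¹ • (⟨x, hx⟩ : f.domain)) = f ⟨x, hx⟩ := by
          rw [f.map_smul, smul_smul, mul_inv_cancel₀ hr.ne', one_smul]
        have e2 : r • p ((r⁻¹ • ((⟨x, hx⟩ : f.domain) : E)) + y) = p (x + r • y) := by
          rw [← p_smul r hr]
          congr 1
          rw [smul_add]
          push_cast
          rw [smul_smul, mul_inv_cancel₀ hr.ne', one_smul]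
        simp only [SetLike.val_smul] at h2
        rw [e1, e2] at h2
        calc f ⟨x, hx⟩ + r • α ≤ f ⟨x, hx⟩ + (p (x + r • y) - f ⟨x, hx⟩) := add_le_add_right h2 _
          _ = p (x + r • y) := by abel
  set S := { f : E →ₗ.[ℝ] F | ∀ x : f.domain, f x ≤ p (x : E) } with hS
  have hSc : ∀ c, c ⊆ S → IsChain (· ≤ ·) c → ∀ y ∈ c, ∃ ub ∈ S, ∀ z ∈ c, z ≤ ub := by
    intro c hcs c_chain y hy
    have cne : c.Nonempty := ⟨y, hy⟩
    have hcd : DirectedOn (· ≤ ·) c := c_chain.directedOn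
    refine ⟨LinearPMap.sSup c hcd, ?_, fun _ ↦ LinearPMap.le_sSup hcd⟩
    rintro ⟨x, hx⟩
    have hdir : DirectedOn (· ≤ ·) (LinearPMap.domain '' c) :=
      directedOn_image.2 (hcd.mono LinearPMap.domain_mono.monotone)
    rcases (mem_sSup_of_directed (cne.image _) hdir).1 hx with ⟨_, ⟨f, hfc, rfl⟩, hfx⟩
    have hle : f ≤ LinearPMap.sSup c hcd := LinearPMap.le_sSup _ hfc
    have heq : f ⟨x, hfx⟩ = (LinearPMap.sSup c hcd) ⟨x, hx⟩ := hle.2 rfl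
    have := hcs hfc ⟨x, hfx⟩
    rwa [heq] at this
  have hp0 : (0:F) ≤ p 0 := by
    have := p_add 0 0
    rw [add_zero] at this
    exact (le_add_iff_nonneg_left _).1 this
  have hbot : ((0 : E →ₗ[ℝ] F).toPMap ⊥) ∈ S := by
    rintro ⟨x, hx⟩
    have hx0 : x = 0 := by simpa using hx
    subst hx0
    simpa using hp0
  obtain ⟨q, -, hqS, hqmax⟩ := zorn_le_nonempty₀ S hSc _ hbot
  have hqtop : q.domain = ⊤ := by
    by_contra hq
    rcases step q hqS hq with ⟨r, hqr, hr⟩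
    exact hqr.ne' ((hqmax hr hqr.le).antisymm hqr.le)
  clear hbot hSc
  replace hpq := hqS
  obtain ⟨q_dom, qf⟩ := q
  simp only at hqtop
  subst hqtop
  refine ⟨qf.comp (LinearMap.id.codRestrict ⊤ fun _ ↦ trivial), fun x => hpq ⟨x, trivial⟩⟩

end HBK
theorem norm_le_add_of_le_of_neg_le {F : Type*} [NormedAddCommGroup F] [Lattice F] [HasSolidNorm F] [IsOrderedAddMonoid F] {a c₁ c₂ : F}
    (h1 : a ≤ c₁) (h2 : -a ≤ c₂) : ‖a‖ ≤ ‖c₁‖ + ‖c₂‖ := by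
  have posle : ∀ c : F, c⁺ ≤ |c| := fun c => by
    rw [posPart_def]; exact sup_le (le_abs_self c) (abs_nonneg c)
  have key : ∀ b c : F, b ≤ c → ‖b⁺‖ ≤ ‖c‖ := by
    intro b c hbc
    refine norm_le_norm_of_abs_le_abs ?_
    rw [abs_of_nonneg (posPart_nonneg b)]
    exact (sup_le_sup_right hbc 0).trans (posle c)
  have e : a⁺ - a⁻ = a := posPart_sub_negPart a
  have l2 : a⁻ = (-a)⁺ := by rw [negPart_def, posPart_def]
  calc ‖a‖ = ‖a⁺ - a⁻‖ := by rw [e]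
    _ ≤ ‖a⁺‖ + ‖a⁻‖ := norm_sub_le _ _
    _ ≤ ‖c₁‖ + ‖c₂‖ := add_le_add (key a c₁ h1) (l2 ▸ key (-a) c₂ h2)

/-- (Theorem 5) Let `E` be an ordered Banach space whose positive cone
has nonempty interior, `F` an order complete Banach lattice and `Φ : E₊ → F` continuous
and convex. Then `Φ` is isotone on `int E₊` iff at every point of `int E₊` the
subdifferential of `Φ` contains a positive linear operator. -/
theorem isotone_on_interior_iff_positive_subgradient
    {E F : Type*}
    [NormedAddCommGroup E] [NormedSpace ℝ E] [CompleteSpace E]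
    [PartialOrder E] [CovariantClass E E (· + ·) (· ≤ ·)]
    (hsmulE : ∀ (c : ℝ) (x : E), 0 ≤ c → 0 ≤ x → 0 ≤ c • x)
    (hclosedE : IsClosed {x : E | 0 ≤ x})
    (hgenE : ∀ x : E, ∃ u v : E, 0 ≤ u ∧ 0 ≤ v ∧ x = u - v)
    (hmonoE : ∀ x y : E, 0 ≤ x → x ≤ y → ‖x‖ ≤ ‖y‖)
    (hint : (interior {x : E | 0 ≤ x}).Nonempty)
    [NormedAddCommGroup F] [Lattice F] [HasSolidNorm F] [IsOrderedAddMonoid F]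
    [NormedSpace ℝ F] [CompleteSpace F]
    (hsmulF : ∀ (c : ℝ) (x : F), 0 ≤ c → 0 ≤ x → 0 ≤ c • x)
    (hcompF : ∀ S : Set F, S.Nonempty → BddAbove S → ∃ b, IsLUB S b)
    (Φ : E → F)
    (hconv : ∀ x y : E, 0 ≤ x → 0 ≤ y → ∀ t : ℝ, 0 ≤ t → t ≤ 1 →
      Φ ((1 - t) • x + t • y) ≤ (1 - t) • Φ x + t • Φ y)
    (hcont : ContinuousOn Φ {x : E | 0 ≤ x}) :
    (∀ x y : E, x ∈ interior {x : E | 0 ≤ x} → y ∈ interior {x : E | 0 ≤ x} →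
        x ≤ y → Φ x ≤ Φ y) ↔
      ∀ x₀ ∈ interior {x : E | 0 ≤ x}, ∃ T : E →L[ℝ] F,
        (∀ x : E, 0 ≤ x → 0 ≤ T x) ∧ ∀ x : E, 0 ≤ x → Φ x₀ + T (x - x₀) ≤ Φ x := by
  have smul_leF : ∀ (c : ℝ), 0 ≤ c → ∀ a b : F, a ≤ b → c • a ≤ c • b := by
    intro c hc a b hab
    have h := hsmulF c (b - a) hc (sub_nonneg.2 hab)
    rw [smul_sub] at h
    exact sub_nonneg.1 h
  have hglb : ∀ S : Set F, S.Nonempty → BddBelow S → ∃ b, IsGLB S b := by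
    intro S hSne hSbd
    obtain ⟨l, hl⟩ := hSbd
    obtain ⟨b, hb⟩ := hcompF (Neg.neg '' S) (hSne.image _)
      ⟨-l, by rintro _ ⟨s, hs, rfl⟩; exact neg_le_neg (hl hs)⟩
    refine ⟨-b, ?_, ?_⟩
    · intro s hs
      have : -s ≤ b := hb.1 (Set.mem_image_of_mem _ hs)
      simpa using neg_le_neg this
    · intro l' hl'
      have : b ≤ -l' := hb.2 (by rintro _ ⟨s, hs, rfl⟩; exact neg_le_neg (hl' hs))
      simpa using neg_le_neg this
  constructor
  · -- hard direction
    intro hiso x₀ hx₀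
    obtain ⟨ε, hε, hball⟩ : ∃ ε > 0, Metric.ball x₀ ε ⊆ {x : E | 0 ≤ x} := by
      rcases Metric.mem_nhds_iff.1 (mem_interior_iff_mem_nhds.1 hx₀) with ⟨ε, hε, h⟩
      exact ⟨ε, hε, h⟩
    have hx₀pos : (0:E) ≤ x₀ := interior_subset hx₀
    have hballint : Metric.ball x₀ ε ⊆ interior {x : E | 0 ≤ x} :=
      interior_maximal hball Metric.isOpen_ball
    set T : E → Set ℝ := fun x => {t : ℝ | 0 < t ∧ 0 ≤ x₀ + t • x} with hT
    set qf : E → ℝ → F := fun x t => t⁻¹ • (Φ (x₀ + t • x) - Φ x₀) with hqf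
    have hmem : ∀ x : E, ∀ t : ℝ, 0 < t → t * ‖x‖ < ε → t ∈ T x := by
      intro x t ht h
      refine ⟨ht, hball ?_⟩
      rw [Metric.mem_ball, dist_eq_norm]
      have : x₀ + t • x - x₀ = t • x := by abel
      rw [this, norm_smul, Real.norm_eq_abs, abs_of_pos ht]
      exact h
    have hne : ∀ x : E, ∃ t, t ∈ T x := by
      intro x
      have h1 : (0:ℝ) < 2 * (‖x‖ + 1) := by positivity
      refine ⟨ε / (2 * (‖x‖ + 1)), hmem x _ (div_pos hε h1) ?_⟩
      rw [div_mul_eq_mul_div, div_lt_iff₀ h1]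
      nlinarith [norm_nonneg x, hε]
    have hdown : ∀ x : E, ∀ s t : ℝ, t ∈ T x → 0 < s → s ≤ t → s ∈ T x := by
      intro x s t ht hs hst
      refine ⟨hs, ?_⟩
      have e : x₀ + s • x = (1 - s/t) • x₀ + (s/t) • (x₀ + t • x) := by
        rw [smul_add, smul_smul, div_mul_cancel₀ _ ht.1.ne']
        module
      rw [e]
      have h1 : (0:ℝ) ≤ 1 - s/t := by
        rw [sub_nonneg]
        exact div_le_one_of_le₀ hst ht.1.le
      exact add_nonneg (hsmulE _ _ h1 hx₀pos) (hsmulE _ _ (div_nonneg hs.le ht.1.le) ht.2)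
    have hqmono : ∀ x : E, ∀ s t : ℝ, s ∈ T x → t ∈ T x → s ≤ t → qf x s ≤ qf x t := by
      intro x s t hs ht hst
      have hl0 : (0:ℝ) ≤ s/t := div_nonneg hs.1.le ht.1.le
      have hl1 : s/t ≤ 1 := div_le_one_of_le₀ hst ht.1.le
      have hc := hconv x₀ (x₀ + t • x) hx₀pos ht.2 (s/t) hl0 hl1
      have e : (1 - s/t) • x₀ + (s/t) • (x₀ + t • x) = x₀ + s • x := by
        rw [smul_add, smul_smul, div_mul_cancel₀ _ ht.1.ne']
        module
      rw [e] at hc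
      have hc2 : Φ (x₀ + s • x) - Φ x₀ ≤ (s/t) • (Φ (x₀ + t • x) - Φ x₀) := by
        have h2 := sub_le_sub_right hc (Φ x₀)
        refine h2.trans_eq ?_
        module
      have h3 := smul_leF s⁻¹ (inv_nonneg.2 hs.1.le) _ _ hc2
      refine h3.trans_eq ?_
      rw [smul_smul]
      congr 1
      have hs' := hs.1.ne'
      have ht' := ht.1.ne'
      field_simp
    have hlbd : ∀ x : E, ∀ s₀ ∈ T (-x), ∀ t ∈ T x,
        s₀⁻¹ • (Φ x₀ - Φ (x₀ + s₀ • (-x))) ≤ qf x t := by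
      intro x s₀ hs₀ t ht
      set a := x₀ + s₀ • (-x) with ha
      set b := x₀ + t • x with hb
      have hd : (0:ℝ) < s₀ + t := add_pos hs₀.1 ht.1
      have hs0' := hs₀.1.ne'
      have ht' := ht.1.ne'
      have hd' := hd.ne'
      have hl0 : (0:ℝ) ≤ s₀/(s₀+t) := div_nonneg hs₀.1.le hd.le
      have hl1 : s₀/(s₀+t) ≤ 1 := div_le_one_of_le₀ (by linarith [ht.1]) hd.le
      have hc := hconv a b hs₀.2 ht.2 (s₀/(s₀+t)) hl0 hl1
      have e : (1 - s₀/(s₀+t)) • a + (s₀/(s₀+t)) • b = x₀ := by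
        rw [ha, hb]
        have h1 : (1 : ℝ) - s₀/(s₀+t) = t/(s₀+t) := by field_simp; ring
        rw [h1]
        match_scalars <;> field_simp <;> ring
      rw [e] at hc
      -- Φ x₀ - Φ a ≤ (s₀/(s₀+t)) • (Φ b - Φ a), Φ b - Φ x₀ ≥ (1-λ) • (Φ b - Φ a)
      have hc1 : Φ x₀ - Φ a ≤ (s₀/(s₀+t)) • (Φ b - Φ a) := by
        have := sub_le_sub_right hc (Φ a)
        refine this.trans_eq ?_
        module
      have hc2 : (t/(s₀+t)) • (Φ b - Φ a) ≤ Φ b - Φ x₀ := by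
        have := sub_le_sub_left hc (Φ b)
        refine le_of_eq_of_le ?_ this
        have h1 : (t : ℝ)/(s₀+t) = 1 - s₀/(s₀+t) := by field_simp; ring
        rw [h1]
        module
      have h3 := smul_leF s₀⁻¹ (inv_nonneg.2 hs₀.1.le) _ _ hc1
      have h4 := smul_leF t⁻¹ (inv_nonneg.2 ht.1.le) _ _ hc2
      rw [smul_smul] at h3
      rw [smul_smul] at h4
      have e3 : s₀⁻¹ * (s₀/(s₀+t)) = (s₀+t)⁻¹ := by
        field_simp
      have e4 : t⁻¹ * (t/(s₀+t)) = (s₀+t)⁻¹ := by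
        field_simp
      rw [e3] at h3
      rw [e4] at h4
      exact h3.trans h4
    have hPex : ∀ x : E, ∃ b, IsGLB (qf x '' T x) b := by
      intro x
      obtain ⟨t, ht⟩ := hne x
      obtain ⟨s₀, hs₀⟩ := hne (-x)
      refine hglb _ ⟨_, Set.mem_image_of_mem _ ht⟩
        ⟨s₀⁻¹ • (Φ x₀ - Φ (x₀ + s₀ • (-x))), ?_⟩
      rintro _ ⟨u, hu, rfl⟩
      exact hlbd x s₀ hs₀ u hu
    choose P hP using hPex
    have hPle : ∀ x t, t ∈ T x → P x ≤ qf x t := fun x t ht =>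
      (hP x).1 (Set.mem_image_of_mem _ ht)
    have hPge : ∀ x b, (∀ t ∈ T x, b ≤ qf x t) → b ≤ P x := fun x b h =>
      (hP x).2 (by rintro _ ⟨t, ht, rfl⟩; exact h t ht)
    have p_add : ∀ x y, P (x + y) ≤ P x + P y := by
      intro x y
      have key : ∀ s ∈ T x, ∀ t ∈ T y, P (x+y) ≤ qf x s + qf y t := by
        intro s hs t ht
        set r := min s t with hrdef
        have hr : 0 < r := lt_min hs.1 ht.1
        have hrx : r ∈ T x := hdown x r s hs hr (min_le_left _ _)
        have hry : r ∈ T y := hdown y r t ht hr (min_le_right _ _)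
        have hrxy : r/2 ∈ T (x+y) := by
          refine ⟨half_pos hr, ?_⟩
          have e : x₀ + (r/2) • (x+y) = (2⁻¹:ℝ) • (x₀ + r • x) + (2⁻¹:ℝ) • (x₀ + r • y) := by
            match_scalars <;> ring
          rw [e]
          exact add_nonneg (hsmulE _ _ (by norm_num) hrx.2) (hsmulE _ _ (by norm_num) hry.2)
        refine (hPle _ _ hrxy).trans ?_
        have hc := hconv (x₀ + r • x) (x₀ + r • y) hrx.2 hry.2 (1/2) (by norm_num) (by norm_num)
        have e : ((1:ℝ) - 1/2) • (x₀ + r • x) + ((1:ℝ)/2) • (x₀ + r • y) = x₀ + (r/2) • (x+y) := by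
          match_scalars <;> ring
        rw [e] at hc
        have hc2 : Φ (x₀ + (r/2) • (x+y)) - Φ x₀ ≤
            (2⁻¹:ℝ) • ((Φ (x₀ + r • x) - Φ x₀) + (Φ (x₀ + r • y) - Φ x₀)) := by
          have := sub_le_sub_right hc (Φ x₀)
          refine this.trans_eq ?_
          module
        have h3 := smul_leF (r/2)⁻¹ (inv_nonneg.2 (half_pos hr).le) _ _ hc2
        have hc3 : qf (x+y) (r/2) ≤ qf x r + qf y r := by
          refine h3.trans_eq ?_
          simp only [hqf]
          rw [smul_smul]
          have er : (r/2)⁻¹ * 2⁻¹ = r⁻¹ := by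
            have hr' := hr.ne'
            field_simp
          rw [er]
          module
        exact hc3.trans (add_le_add (hqmono x r s hrx hs (min_le_left _ _))
          (hqmono y r t hry ht (min_le_right _ _)))
      have step1 : ∀ t ∈ T y, P (x+y) - P x ≤ qf y t := by
        intro t ht
        have h1 : ∀ s ∈ T x, P (x+y) - qf y t ≤ qf x s := by
          intro s hs
          exact sub_le_iff_le_add.2 (key s hs t ht)
        have h2 : P (x+y) - qf y t ≤ P x := hPge x _ h1
        exact sub_le_comm.1 h2
      have h3 : P (x+y) - P x ≤ P y := hPge y _ step1
      exact sub_le_iff_le_add'.1 h3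
    have p_smul : ∀ (c : ℝ), 0 < c → ∀ x, P (c • x) = c • P x := by
      intro c hc x
      have qe : ∀ t : ℝ, 0 < t → qf (c • x) t = c • qf x (t*c) := by
        intro t ht
        simp only [hqf]
        have e1 : t • (c • x) = (t*c) • x := by rw [smul_smul]
        rw [e1, smul_smul]
        congr 1
        have ht' := ht.ne'
        have hc' := hc.ne'
        field_simp
      have Tmem : ∀ t : ℝ, t ∈ T (c • x) ↔ (0 < t ∧ t*c ∈ T x) := by
        intro t
        constructor
        · rintro ⟨ht, hpos⟩
          refine ⟨ht, mul_pos ht hc, ?_⟩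
          rwa [show (t*c) • x = t • (c • x) by rw [smul_smul]]
        · rintro ⟨ht, -, hpos⟩
          refine ⟨ht, ?_⟩
          rwa [show t • (c • x) = (t*c) • x by rw [smul_smul]]
      refine IsGLB.unique (hP (c • x)) ?_
      constructor
      · rintro _ ⟨t, htm, rfl⟩
        have ht := ((Tmem t).1 htm).1
        rw [qe t ht]
        exact smul_leF c hc.le _ _ (hPle x (t*c) ((Tmem t).1 htm).2)
      · intro b hb
        have hb' : c⁻¹ • b ≤ P x := by
          refine hPge x _ ?_
          intro u hu
          have htm : u/c ∈ T (c • x) := by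
            rw [Tmem]
            refine ⟨div_pos hu.1 hc, ?_⟩
            rwa [div_mul_cancel₀ _ hc.ne']
          have := hb (Set.mem_image_of_mem _ htm)
          rw [qe _ (div_pos hu.1 hc), div_mul_cancel₀ _ hc.ne'] at this
          have h2 := smul_leF c⁻¹ (inv_nonneg.2 hc.le) _ _ this
          rwa [smul_smul, inv_mul_cancel₀ hc.ne', one_smul] at h2
        have h3 := smul_leF c hc.le _ _ hb'
        rwa [smul_smul, mul_inv_cancel₀ hc.ne', one_smul] at h3
    obtain ⟨T₀, hT₀⟩ := hbk_aux hsmulF hcompF P p_add p_smul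
    have key : ∀ h : E, 0 ≤ x₀ + h → T₀ h ≤ Φ (x₀ + h) - Φ x₀ := by
      intro h hh
      refine (hT₀ h).trans ?_
      have h1 : (1:ℝ) ∈ T h := ⟨one_pos, by simpa using hh⟩
      have := hPle h 1 h1
      rw [hqf] at this
      simpa using this
    -- continuity bound
    have hcx₀ : ContinuousAt Φ x₀ :=
      (hcont x₀ hx₀pos).continuousAt (mem_interior_iff_mem_nhds.1 hx₀)
    obtain ⟨δ₀, hδ₀pos, hδ₀⟩ := Metric.continuousAt_iff.1 hcx₀ 1 one_pos
    set δ : ℝ := min δ₀ ε with hδdef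
    have hδpos : 0 < δ := lt_min hδ₀pos hε
    have hbnd : ∀ h : E, ‖h‖ < δ → T₀ h ≤ Φ (x₀ + h) - Φ x₀ ∧ ‖Φ (x₀ + h) - Φ x₀‖ ≤ 1 := by
      intro h hh
      have hmemb : x₀ + h ∈ Metric.ball x₀ ε := by
        rw [Metric.mem_ball, dist_eq_norm]
        have : x₀ + h - x₀ = h := by abel
        rw [this]
        exact hh.trans_le (min_le_right _ _)
      refine ⟨key h (hball hmemb), ?_⟩
      have := hδ₀ (x := x₀ + h) (by
        rw [dist_eq_norm]
        have : x₀ + h - x₀ = h := by abel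
        rw [this]
        exact hh.trans_le (min_le_left _ _))
      rw [dist_eq_norm] at this
      exact this.le
    have hnorm2 : ∀ h : E, ‖h‖ < δ → ‖T₀ h‖ ≤ 2 := by
      intro h hh
      have h1 := hbnd h hh
      have h2 := hbnd (-h) (by rwa [norm_neg])
      rw [map_neg] at h2
      have := norm_le_add_of_le_of_neg_le h1.1 h2.1
      calc ‖T₀ h‖ ≤ ‖Φ (x₀ + h) - Φ x₀‖ + ‖Φ (x₀ + -h) - Φ x₀‖ := this
        _ ≤ 1 + 1 := add_le_add h1.2 h2.2
        _ = 2 := by norm_num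
    have hbound : ∀ x : E, ‖T₀ x‖ ≤ (4/δ) * ‖x‖ := by
      intro x
      rcases eq_or_ne x 0 with rfl | hx
      · simp
      · have hx' : 0 < ‖x‖ := norm_pos_iff.2 hx
        have hc : (0:ℝ) < δ/(2*‖x‖) := div_pos hδpos (by positivity)
        have hhh : ‖(δ/(2*‖x‖)) • x‖ < δ := by
          rw [norm_smul, Real.norm_eq_abs, abs_of_pos hc]
          rw [div_mul_eq_mul_div, div_lt_iff₀ (by positivity)]
          nlinarith [hδpos, hx']
        have h2 := hnorm2 _ hhh
        rw [map_smul, norm_smul, Real.norm_eq_abs, abs_of_pos hc] at h2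
        rw [div_mul_eq_mul_div, div_le_iff₀ (by positivity)] at h2
        rw [div_mul_eq_mul_div, le_div_iff₀ hδpos]
        nlinarith
    refine ⟨LinearMap.mkContinuous T₀ (4/δ) hbound, ?_, ?_⟩
    · -- positivity
      intro x hx
      have hT0 : (LinearMap.mkContinuous T₀ (4/δ) hbound) x = T₀ x := rfl
      rw [hT0]
      set t : ℝ := ε / (2 * (‖x‖ + 1)) with htdef
      have ht : 0 < t := div_pos hε (by positivity)
      have htx : t * ‖x‖ < ε := by
        rw [htdef, div_mul_eq_mul_div, div_lt_iff₀ (by positivity)]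
        nlinarith [norm_nonneg x, hε]
      have hmemb : x₀ - t • x ∈ Metric.ball x₀ ε := by
        rw [Metric.mem_ball, dist_eq_norm]
        have : x₀ - t • x - x₀ = -(t • x) := by abel
        rw [this, norm_neg, norm_smul, Real.norm_eq_abs, abs_of_pos ht]
        exact htx
      have hle : x₀ - t • x ≤ x₀ := by
        have h1 : (0:E) ≤ t • x := hsmulE t x ht.le hx
        calc x₀ - t • x ≤ x₀ - 0 := by
              exact sub_le_sub_left h1 x₀
          _ = x₀ := by rw [sub_zero]
      have hΦ := hiso (x₀ - t • x) x₀ (hballint hmemb) hx₀ hle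
      have h1 : T₀ (-(t • x)) ≤ Φ (x₀ + -(t • x)) - Φ x₀ := by
        refine key _ ?_
        have : x₀ + -(t • x) = x₀ - t • x := by abel
        rw [this]
        exact hball hmemb
      have h2 : T₀ (-(t • x)) ≤ 0 := by
        refine h1.trans ?_
        rw [sub_nonpos]
        have : x₀ + -(t • x) = x₀ - t • x := by abel
        rw [this]
        exact hΦ
      rw [map_neg, neg_nonpos] at h2
      rw [map_smul] at h2
      have h3 := hsmulF t⁻¹ _ (inv_nonneg.2 ht.le) h2
      rwa [smul_smul, inv_mul_cancel₀ ht.ne', one_smul] at h3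
    · -- subgradient inequality
      intro x hx
      have hT0 : (LinearMap.mkContinuous T₀ (4/δ) hbound) (x - x₀) = T₀ (x - x₀) := rfl
      rw [hT0]
      have h1 : T₀ (x - x₀) ≤ Φ (x₀ + (x - x₀)) - Φ x₀ := key _ (by
        have : x₀ + (x - x₀) = x := by abel
        rw [this]; exact hx)
      have e : x₀ + (x - x₀) = x := by abel
      rw [e] at h1
      calc Φ x₀ + T₀ (x - x₀) ≤ Φ x₀ + (Φ x - Φ x₀) := add_le_add_right h1 _
        _ = Φ x := by abel
  · -- easy direction
    intro h x y hx hy hxy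
    obtain ⟨T, hTpos, hTsub⟩ := h x hx
    have hy' : (0:E) ≤ y := interior_subset hy
    have hsub := hTsub y hy'
    have h0 : 0 ≤ T (y - x) := hTpos _ (sub_nonneg.2 hxy)
    calc Φ x = Φ x + 0 := (add_zero _).symm
      _ ≤ Φ x + T (y - x) := add_le_add_right h0 _
      _ ≤ Φ y := hsub
end

section
/- Let E be a Banach lattice, let x₀ ∈ E, and let T : E → E be a continuous linear operator such that T(x₀) = |x₀| and T(x) ≤ |x| for all x ∈ E. Then T(x₀⁺) = x₀⁺, T(x₀⁻) = -x₀⁻, and consequently T(|x₀|) = x₀. In particular, if x₀ ≠ |x₀| and x₀ ≠ -|x₀|, then 1 and -1 are eigenvalues of T with positive eigenvectors x₀⁺ and x₀⁻ respectively. -/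
/-- Let `E` be a Banach lattice, `x₀ ∈ E` and `T : E → E` a continuous
linear operator with `T x₀ = |x₀|` and `T x ≤ |x|` for all `x` (i.e. `T ∈ ∂_{x₀}P` for
`P x = |x|`). Then `T x₀⁺ = x₀⁺`, `T x₀⁻ = -x₀⁻` and `T |x₀| = x₀`; in particular if
`x₀ ≠ |x₀|` and `x₀ ≠ -|x₀|` then `1` and `-1` are eigenvalues of `T` with positive
eigenvectors `x₀⁺` and `x₀⁻`. -/
theorem subgradient_of_abs_fixes_parts
    {E : Type*} [NormedAddCommGroup E] [Lattice E] [HasSolidNorm E] [IsOrderedAddMonoid E] [NormedSpace ℝ E] [CompleteSpace E]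
    (x₀ : E) (T : E →L[ℝ] E)
    (hTx₀ : T x₀ = |x₀|) (hT : ∀ x : E, T x ≤ |x|) :
    T (x₀ ⊔ 0) = x₀ ⊔ 0 ∧ T ((-x₀) ⊔ 0) = -((-x₀) ⊔ 0) ∧ T |x₀| = x₀ ∧
      (x₀ ≠ |x₀| → x₀ ≠ -|x₀| →
        (x₀ ⊔ 0 ≠ 0 ∧ 0 ≤ x₀ ⊔ 0 ∧ T (x₀ ⊔ 0) = (1 : ℝ) • (x₀ ⊔ 0)) ∧
        ((-x₀) ⊔ 0 ≠ 0 ∧ 0 ≤ (-x₀) ⊔ 0 ∧ T ((-x₀) ⊔ 0) = (-1 : ℝ) • ((-x₀) ⊔ 0))) := by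
  set a := x₀ ⊔ 0 with ha
  set b := (-x₀) ⊔ 0 with hb
  have hadef : a = x₀⁺ := (posPart_def x₀).symm
  have hbdef : b = x₀⁻ := (negPart_def x₀).symm
  have hsub : a - b = x₀ := by rw [hadef, hbdef]; exact posPart_sub_negPart x₀
  have hadd : a + b = |x₀| := by rw [hadef, hbdef]; exact posPart_add_negPart x₀
  have ha0 : (0 : E) ≤ a := le_sup_right
  have hb0 : (0 : E) ≤ b := le_sup_right
  -- T a ≤ a, -T b ≤ b
  have h1 : T a ≤ a := (hT a).trans_eq (abs_of_nonneg ha0)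
  have h2 : -T b ≤ b := by
    have := hT (-b)
    rwa [map_neg, abs_neg, abs_of_nonneg hb0] at this
  -- (a - T a) + (b + T b) = 0
  have key : T a - T b = a + b := by
    rw [← map_sub, hsub, hTx₀, hadd]
  have hsum : (a - T a) + (b + T b) = 0 := by
    rw [show (a - T a) + (b + T b) = (a + b) - (T a - T b) by abel, key, sub_self]
  have h1' : (0 : E) ≤ a - T a := sub_nonneg.mpr h1
  have h2' : (0 : E) ≤ b + T b := neg_le_iff_add_nonneg.mp h2
  have e1 : a - T a = 0 := by
    have hle : a - T a ≤ 0 := hsum ▸ le_add_of_nonneg_right h2'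
    exact le_antisymm hle h1'
  have e2 : b + T b = 0 := by
    have hle : b + T b ≤ 0 := by
      calc b + T b ≤ (a - T a) + (b + T b) := le_add_of_nonneg_left h1'
        _ = 0 := hsum
    exact le_antisymm hle h2'
  have hTa : T a = a := (sub_eq_zero.mp e1).symm
  have hTb : T b = -b := neg_eq_of_add_eq_zero_right e2 ▸ rfl
  refine ⟨hTa, hTb, ?_, ?_⟩
  · rw [← hadd, map_add, hTa, hTb, ← hsub]; abel
  · intro h1n h2n
    have hbne : b ≠ 0 := by
      intro hb0'
      apply h1n
      rw [← hadd, ← hsub, hb0', sub_zero, add_zero]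
    have hane : a ≠ 0 := by
      intro ha0'
      apply h2n
      rw [← hadd, ← hsub, ha0', zero_sub, zero_add]
    exact ⟨⟨hane, ha0, by rw [one_smul, hTa]⟩,
      ⟨hbne, hb0, by rw [hTb, neg_one_smul]⟩⟩
end
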